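/- arXiv:1012.5316 — 7 statements merged into one kernel-verified Lean document; each statement's English description precedes it below -/
import Mathlib

section
/- Let n ≥ 1 and k ≥ 1 with k + 2 ≤ n. For every k-cochain β on the complete simplicial complex Δ_n there exists a (k−1)-cochain α such that n · ‖β + dα‖ ≤ (k+2) · ‖dβ‖. -/
/-- The faces of the complete simplicial complex on vertex set `Fin n`,
indexed by cardinality: an element of `SFace n m` is an `m`-element subset
of `{1, …, n}` (so a `(m-1)`-dimensional face). -/
abbrev SFace (n m : ℕ) : Type := {σ : Finset (Fin n) // σ.card = m}

/-- The norm of a `ZMod 2`-cochain: the size of its support. -/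
def cnorm {X : Type} [Fintype X] (β : X → ZMod 2) : ℕ :=
  (Finset.univ.filter fun x => β x ≠ 0).card

/-- The simplicial coboundary map on the complete complex: for a cochain `β`
on `m`-element subsets, `sd β` evaluated on an `(m+1)`-element subset `τ` is
the sum of `β σ` over all `m`-element subsets `σ ⊆ τ`. -/
def sd {n m : ℕ} (β : SFace n m → ZMod 2) : SFace n (m + 1) → ZMod 2 :=
  fun τ => ∑ σ : SFace n m, if σ.1 ⊆ τ.1 then β σ else 0

section Aux

variable {n k : ℕ}

/-- The cone of `β` at the vertex `v`. -/
def scone (v : Fin n) (β : SFace n (k + 1) → ZMod 2) : SFace n k → ZMod 2 :=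
  fun σ => if h : v ∈ σ.1 then 0
    else β ⟨insert v σ.1, by rw [Finset.card_insert_of_notMem h, σ.2]⟩

lemma sconeA (v : Fin n) (β : SFace n (k + 1) → ZMod 2) (τ : SFace n (k + 1))
    (hv : v ∈ τ.1) : sd (scone v β) τ = β τ := by
  have hc : (τ.1.erase v).card = k := by
    rw [Finset.card_erase_of_mem hv, τ.2]; rfl
  rw [sd]
  rw [Finset.sum_eq_single (⟨τ.1.erase v, hc⟩ : SFace n k)]
  · rw [if_pos (Finset.erase_subset _ _)]
    rw [scone]
    rw [dif_neg (Finset.notMem_erase v τ.1)]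
    congr 1
    exact Subtype.ext (Finset.insert_erase hv)
  · intro σ _ hne
    by_cases hsub : σ.1 ⊆ τ.1
    · rw [if_pos hsub, scone]
      by_cases hvσ : v ∈ σ.1
      · rw [dif_pos hvσ]
      · exfalso
        apply hne
        apply Subtype.ext
        apply Finset.eq_of_subset_of_card_le
        · intro x hx
          exact Finset.mem_erase.2 ⟨fun h => hvσ (h ▸ hx), hsub hx⟩
        · rw [hc, σ.2]
    · rw [if_neg hsub]
  · intro h; exact absurd (Finset.mem_univ _) h

lemma sconeB (v : Fin n) (β : SFace n (k + 1) → ZMod 2) (τ : SFace n (k + 1))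
    (hv : v ∉ τ.1) (ρ : SFace n (k + 2)) (hρ : ρ.1 = insert v τ.1) :
    β τ + sd (scone v β) τ = sd β ρ := by
  rw [sd, sd]
  rw [← Finset.sum_filter_add_sum_filter_not Finset.univ (fun σ' : SFace n (k+1) => v ∈ σ'.1)]
  have h2 : ∑ σ' ∈ Finset.univ.filter (fun σ' : SFace n (k+1) => ¬ v ∈ σ'.1),
      (if σ'.1 ⊆ ρ.1 then β σ' else 0) = β τ := by
    rw [Finset.sum_eq_single τ]
    · rw [if_pos (by rw [hρ]; exact Finset.subset_insert _ _)]
    · intro σ' hσ' hne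
      have hvσ' : v ∉ σ'.1 := (Finset.mem_filter.1 hσ').2
      by_cases hsub : σ'.1 ⊆ ρ.1
      · exfalso
        apply hne
        apply Subtype.ext
        apply Finset.eq_of_subset_of_card_le
        · intro x hx
          rcases Finset.mem_insert.1 (by rw [hρ] at hsub; exact hsub hx) with h | h
          · exact absurd (h ▸ hx) hvσ'
          · exact h
        · rw [τ.2, σ'.2]
      · rw [if_neg hsub]
    · intro h
      exact absurd (Finset.mem_filter.2 ⟨Finset.mem_univ τ, hv⟩) h
  have h1 : ∑ σ' ∈ Finset.univ.filter (fun σ' : SFace n (k+1) => v ∈ σ'.1),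
      (if σ'.1 ⊆ ρ.1 then β σ' else 0)
      = ∑ σ : SFace n k, (if σ.1 ⊆ τ.1 then scone v β σ else 0) := by
    rw [← Finset.sum_filter_add_sum_filter_not Finset.univ (fun σ : SFace n k => v ∈ σ.1)]
    have hz : ∑ σ ∈ Finset.univ.filter (fun σ : SFace n k => v ∈ σ.1),
        (if σ.1 ⊆ τ.1 then scone v β σ else 0) = 0 := by
      apply Finset.sum_eq_zero
      intro σ hσ
      have hvσ : v ∈ σ.1 := (Finset.mem_filter.1 hσ).2
      rw [scone, dif_pos hvσ, ite_self]
    rw [hz, zero_add]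
    refine Finset.sum_bij'
      (i := fun (σ' : SFace n (k+1)) (h : σ' ∈ Finset.univ.filter
        (fun σ' : SFace n (k+1) => v ∈ σ'.1)) =>
        (⟨σ'.1.erase v, by
          rw [Finset.card_erase_of_mem (Finset.mem_filter.1 h).2, σ'.2]; rfl⟩ : SFace n k))
      (j := fun (σ : SFace n k) (h : σ ∈ Finset.univ.filter
        (fun σ : SFace n k => ¬ v ∈ σ.1)) =>
        (⟨insert v σ.1, by
          rw [Finset.card_insert_of_notMem (Finset.mem_filter.1 h).2, σ.2]⟩ : SFace n (k+1)))
      ?_ ?_ ?_ ?_ ?_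
    · intro σ' h
      exact Finset.mem_filter.2 ⟨Finset.mem_univ _, Finset.notMem_erase _ _⟩
    · intro σ h
      exact Finset.mem_filter.2 ⟨Finset.mem_univ _, Finset.mem_insert_self _ _⟩
    · intro σ' h
      exact Subtype.ext (Finset.insert_erase (Finset.mem_filter.1 h).2)
    · intro σ h
      exact Subtype.ext (Finset.erase_insert (Finset.mem_filter.1 h).2)
    · intro σ' h
      have hvσ' : v ∈ σ'.1 := (Finset.mem_filter.1 h).2
      have hcond : (σ'.1 ⊆ ρ.1) ↔ (σ'.1.erase v ⊆ τ.1) := by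
        rw [hρ, Finset.subset_insert_iff]
      by_cases hsub : σ'.1 ⊆ ρ.1
      · rw [if_pos hsub, if_pos (hcond.1 hsub)]
        rw [scone, dif_neg (Finset.notMem_erase _ _)]
        congr 1
        exact Subtype.ext (Finset.insert_erase hvσ').symm
      · rw [if_neg hsub, if_neg (fun h' => hsub (hcond.2 h'))]
  rw [h1, h2]
  ring

lemma scone_count (v : Fin n) (β : SFace n (k + 1) → ZMod 2) :
    cnorm (β + sd (scone v β)) =
      (Finset.univ.filter fun ρ : SFace n (k + 2) => v ∈ ρ.1 ∧ sd β ρ ≠ 0).card := by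
  have key : ∀ τ : SFace n (k+1), (β + sd (scone v β)) τ ≠ 0 → v ∉ τ.1 := by
    intro τ hτ hv
    apply hτ
    show β τ + sd (scone v β) τ = 0
    rw [sconeA v β τ hv, CharTwo.add_self_eq_zero]
  rw [cnorm]
  apply Finset.card_bij (i := fun (τ : SFace n (k+1))
      (hτ : τ ∈ Finset.univ.filter fun τ => (β + sd (scone v β)) τ ≠ 0) =>
      (⟨insert v τ.1, by
        rw [Finset.card_insert_of_notMem (key τ (Finset.mem_filter.1 hτ).2), τ.2]⟩ : SFace n (k+2)))
  · intro τ hτ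
    have h := (Finset.mem_filter.1 hτ).2
    refine Finset.mem_filter.2 ⟨Finset.mem_univ _, Finset.mem_insert_self _ _, ?_⟩
    rw [← sconeB v β τ (key τ h) _ rfl]
    exact h
  · intro τ₁ h₁ τ₂ h₂ heq
    have := congrArg (fun ρ : SFace n (k+2) => ρ.1.erase v) heq
    simp only at this
    rw [Finset.erase_insert (key τ₁ (Finset.mem_filter.1 h₁).2),
        Finset.erase_insert (key τ₂ (Finset.mem_filter.1 h₂).2)] at this
    exact Subtype.ext this
  · intro ρ hρ
    obtain ⟨-, hvρ, hne⟩ := Finset.mem_filter.1 hρ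
    have hc : (ρ.1.erase v).card = k + 1 := by
      rw [Finset.card_erase_of_mem hvρ, ρ.2]; rfl
    refine ⟨⟨ρ.1.erase v, hc⟩, ?_, ?_⟩
    · refine Finset.mem_filter.2 ⟨Finset.mem_univ _, ?_⟩
      show β _ + sd (scone v β) _ ≠ 0
      rw [sconeB v β _ (Finset.notMem_erase _ _) ρ (Finset.insert_erase hvρ).symm]
      exact hne
    · exact Subtype.ext (Finset.insert_erase hvρ)

end Aux

/-- for every `k`-cochain `β` on the complete complex `Δ_n`
(`n ≥ 1`, `k ≥ 1`, `k + 2 ≤ n`) there is a `(k-1)`-cochain `α` with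
`n·‖β + dα‖ ≤ (k+2)·‖dβ‖`. -/
theorem simplex_coisoperimetry (n k : ℕ) (hn : 1 ≤ n) (hk : 1 ≤ k) (hkn : k + 2 ≤ n)
    (β : SFace n (k + 1) → ZMod 2) :
    ∃ α : SFace n k → ZMod 2,
      n * cnorm (β + sd α) ≤ (k + 2) * cnorm (sd β) := by
  have hsum : ∑ v : Fin n, cnorm (β + sd (scone v β)) = (k + 2) * cnorm (sd β) := by
    have : ∀ v : Fin n, cnorm (β + sd (scone v β)) =
        ∑ ρ : SFace n (k+2), if v ∈ ρ.1 ∧ sd β ρ ≠ 0 then 1 else 0 := by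
      intro v
      rw [scone_count]
      rw [Finset.card_filter]
    simp_rw [this]
    rw [Finset.sum_comm]
    rw [cnorm, Finset.card_filter, Finset.mul_sum]
    apply Finset.sum_congr rfl
    intro ρ _
    by_cases hne : sd β ρ ≠ 0
    · have h1 : ∀ v : Fin n, (if v ∈ ρ.1 ∧ sd β ρ ≠ 0 then (1:ℕ) else 0) = if v ∈ ρ.1 then 1 else 0 := by
        intro v
        by_cases h : v ∈ ρ.1 <;> simp [h, hne]
      show (∑ v : Fin n, if v ∈ ρ.1 ∧ sd β ρ ≠ 0 then (1:ℕ) else 0) = _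
      rw [if_pos hne, mul_one]
      simp_rw [h1]
      rw [Finset.sum_ite_mem, Finset.univ_inter, Finset.sum_const, ρ.2, smul_eq_mul, mul_one]
    · rw [not_not] at hne
      simp [hne]
  obtain ⟨v, -, hv⟩ := Finset.exists_min_image Finset.univ
    (fun v : Fin n => cnorm (β + sd (scone v β))) ⟨⟨0, hn⟩, Finset.mem_univ _⟩
  refine ⟨scone v β, ?_⟩
  calc n * cnorm (β + sd (scone v β))
      ≤ ∑ w : Fin n, cnorm (β + sd (scone w β)) := by
        have := Finset.card_nsmul_le_sum Finset.univ
          (fun w : Fin n => cnorm (β + sd (scone w β)))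
          (cnorm (β + sd (scone v β))) (fun w hw => hv w hw)
        simpa using this
    _ = (k + 2) * cnorm (sd β) := hsum
end

section
/- Let n ≥ 1, k ≥ 1 with k + 2 ≤ n, and m ≥ 1. Let Y be a set of (k+2)-element subsets of {1,…,n} (a set of (k+1)-faces of Δ_n), and suppose there exists a k-cochain β on Δ_n such that dβ(τ) = 0 for every τ ∈ Y, β is not a coboundary, and ‖[β]‖ ≥ m. Then the number of (k+2)-element subsets of {1,…,n} not belonging to Y is at least (n/(k+2)) · m. -/
/-- A `k`-cochain is a coboundary if it is `dα` for some `(k-1)`-cochain `α`. -/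
def IsCob {n k : ℕ} (β : SFace n (k + 1) → ZMod 2) : Prop :=
  ∃ α : SFace n k → ZMod 2, sd α = β

/-- The quotient norm `‖[β]‖ = min_α ‖β + dα‖` of a `k`-cochain. -/
noncomputable def qnorm {n k : ℕ} (β : SFace n (k + 1) → ZMod 2) : ℕ :=
  sInf {m | ∃ α : SFace n k → ZMod 2, m = cnorm (β + sd α)}

/-- Extension of a cochain to all finsets, zero off the right cardinality. -/
def cext {n m : ℕ} (β : SFace n m → ZMod 2) : Finset (Fin n) → ZMod 2 :=
  fun s => if h : s.card = m then β ⟨s, h⟩ else 0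

lemma cext_val {n m : ℕ} (β : SFace n m → ZMod 2) (σ : SFace n m) :
    cext β σ.1 = β σ := by
  simp [cext, σ.2]

lemma sd_eq_sum {n m : ℕ} (β : SFace n m → ZMod 2) (τ : SFace n (m + 1)) :
    sd β τ = ∑ s ∈ τ.1.powersetCard m, cext β s := by
  rw [sd, ← Finset.sum_filter]
  refine Finset.sum_bij' (fun σ _ => σ.1) (fun s hs => ⟨s, (Finset.mem_powersetCard.1 hs).2⟩)
    ?_ ?_ ?_ ?_ ?_
  · intro σ hσ
    exact Finset.mem_powersetCard.2 ⟨(Finset.mem_filter.1 hσ).2, σ.2⟩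
  · intro s hs
    exact Finset.mem_filter.2 ⟨Finset.mem_univ _, (Finset.mem_powersetCard.1 hs).1⟩
  · intro σ _; rfl
  · intro s _; rfl
  · intro σ _; exact (cext_val β σ).symm

/-- The cone operator with apex `v`. -/
def coneOp {n k : ℕ} (β : SFace n (k + 1) → ZMod 2) (v : Fin n) : SFace n k → ZMod 2 :=
  fun ρ => if v ∈ ρ.1 then 0 else cext β (insert v ρ.1)

lemma cone_key {n k : ℕ} (β : SFace n (k + 1) → ZMod 2) (v : Fin n) (σ : SFace n (k + 1)) :
    (β + sd (coneOp β v)) σ = if v ∈ σ.1 then 0 else cext (sd β) (insert v σ.1) := by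
  have hsum : sd (coneOp β v) σ
      = ∑ r ∈ σ.1.powersetCard k, (if v ∈ r then 0 else cext β (insert v r)) := by
    rw [sd_eq_sum]
    refine Finset.sum_congr rfl fun r hr => ?_
    have hc : r.card = k := (Finset.mem_powersetCard.1 hr).2
    simp [cext, hc, coneOp]
  by_cases hv : v ∈ σ.1
  · -- the sum reduces to the single term `r = σ.1.erase v`, equal to `β σ`
    have hfilter : (σ.1.powersetCard k).filter (fun r => v ∉ r) = {σ.1.erase v} := by
      ext r
      simp only [Finset.mem_filter, Finset.mem_powersetCard, Finset.mem_singleton]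
      constructor
      · rintro ⟨⟨hsub, hcard⟩, hvr⟩
        apply Finset.eq_of_subset_of_card_le (Finset.subset_erase.2 ⟨hsub, hvr⟩)
        rw [Finset.card_erase_of_mem hv, σ.2, hcard]
        omega
      · rintro rfl
        exact ⟨⟨Finset.erase_subset _ _, by simp [Finset.card_erase_of_mem hv, σ.2]⟩,
          Finset.notMem_erase _ _⟩
    have hS : sd (coneOp β v) σ = β σ := by
      rw [hsum]
      have : ∀ r ∈ σ.1.powersetCard k, (if v ∈ r then 0 else cext β (insert v r))
          = if v ∉ r then cext β (insert v r) else 0 := by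
        intro r _; by_cases h : v ∈ r <;> simp [h]
      rw [Finset.sum_congr rfl this, ← Finset.sum_filter, hfilter, Finset.sum_singleton,
        Finset.insert_erase hv, cext_val]
    simp [hv, Pi.add_apply, hS, CharTwo.add_self_eq_zero]
  · -- the sum equals `sd β (insert v σ.1) - β σ`
    have hcard : (insert v σ.1).card = k + 1 + 1 := by
      rw [Finset.card_insert_of_notMem hv, σ.2]
    have hτ : cext (sd β) (insert v σ.1) = sd β ⟨insert v σ.1, hcard⟩ := by
      simp [cext, hcard]
    rw [Pi.add_apply, hsum, if_neg hv, hτ, sd_eq_sum]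
    show β σ + _ = ∑ s ∈ (insert v σ.1).powersetCard (k + 1), cext β s
    rw [Finset.powersetCard_succ_insert hv]
    have hdisj : Disjoint (σ.1.powersetCard (k + 1)) ((σ.1.powersetCard k).image (insert v)) := by
      rw [Finset.disjoint_left]
      intro s hs1 hs2
      obtain ⟨r, hr, rfl⟩ := Finset.mem_image.1 hs2
      have : v ∈ σ.1 := (Finset.mem_powersetCard.1 hs1).1 (Finset.mem_insert_self v _)
      exact hv this
    rw [Finset.sum_union hdisj]
    have h1 : σ.1.powersetCard (k + 1) = {σ.1} := by
      have := Finset.powersetCard_self σ.1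
      rwa [σ.2] at this
    rw [h1, Finset.sum_singleton, cext_val]
    congr 1
    rw [Finset.sum_image]
    · refine Finset.sum_congr rfl fun r hr => ?_
      have : v ∉ r := fun h => hv ((Finset.mem_powersetCard.1 hr).1 h)
      simp [this]
    · intro r1 h1' r2 h2' heq
      have hv1 : v ∉ r1 := fun h => hv ((Finset.mem_powersetCard.1 h1').1 h)
      have hv2 : v ∉ r2 := fun h => hv ((Finset.mem_powersetCard.1 h2').1 h)
      rw [← Finset.erase_insert hv1, ← Finset.erase_insert hv2, heq]

lemma cnorm_cone {n k : ℕ} (β : SFace n (k + 1) → ZMod 2) (v : Fin n) :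
    cnorm (β + sd (coneOp β v)) =
      (Finset.univ.filter fun σ : SFace n (k + 1) =>
        v ∉ σ.1 ∧ cext (sd β) (insert v σ.1) ≠ 0).card := by
  unfold cnorm
  congr 1
  refine Finset.filter_congr fun σ _ => ?_
  rw [cone_key]
  by_cases hv : v ∈ σ.1 <;> simp [hv]

lemma double_count {n k : ℕ} (β : SFace n (k + 1) → ZMod 2) :
    ∑ v : Fin n, cnorm (β + sd (coneOp β v)) = (k + 2) * cnorm (sd β) := by
  classical
  -- rewrite the LHS as the cardinality of a filtered product
  have lhs_eq : ∑ v : Fin n, cnorm (β + sd (coneOp β v)) =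
      ((Finset.univ ×ˢ Finset.univ).filter
        (fun p : Fin n × SFace n (k + 1) =>
          p.1 ∉ p.2.1 ∧ cext (sd β) (insert p.1 p.2.1) ≠ 0)).card := by
    rw [Finset.card_filter, Finset.sum_product]
    refine Finset.sum_congr rfl fun v _ => ?_
    rw [cnorm_cone, Finset.card_filter]
  have rhs_eq : ((Finset.univ ×ˢ Finset.univ).filter
      (fun p : Fin n × SFace n (k + 2) => p.1 ∈ p.2.1 ∧ sd β p.2 ≠ 0)).card
      = (k + 2) * cnorm (sd β) := by
    rw [Finset.card_filter, Finset.sum_product_right]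
    have key : ∀ τ : SFace n (k + 2),
        (∑ v : Fin n, if v ∈ τ.1 ∧ sd β τ ≠ 0 then 1 else 0) =
          if sd β τ ≠ 0 then k + 2 else 0 := by
      intro τ
      by_cases h : sd β τ ≠ 0
      · rw [if_pos h]
        have step : ∀ v : Fin n, (if v ∈ τ.1 ∧ sd β τ ≠ 0 then 1 else 0)
            = if v ∈ τ.1 then 1 else 0 := fun v => by
          by_cases hv : v ∈ τ.1 <;> simp [hv, h]
        rw [Finset.sum_congr rfl fun v _ => step v, Finset.sum_ite_mem, Finset.univ_inter,
          Finset.sum_const, τ.2, smul_eq_mul, mul_one]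
      · simp [h]
    rw [Finset.sum_congr rfl fun τ _ => key τ]
    unfold cnorm
    rw [← Finset.sum_filter, Finset.sum_const, smul_eq_mul, mul_comm]
  rw [lhs_eq, ← rhs_eq]
  refine Finset.card_bij'
    (fun p hp => (p.1, ⟨insert p.1 p.2.1, ?_⟩))
    (fun p hp => (p.1, ⟨p.2.1.erase p.1, ?_⟩)) ?_ ?_ ?_ ?_
  · have h := (Finset.mem_filter.1 hp).2.1
    rw [Finset.card_insert_of_notMem h, p.2.2]
  · have h := (Finset.mem_filter.1 hp).2.1
    rw [Finset.card_erase_of_mem h, p.2.2]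
    omega
  · intro p hp
    obtain ⟨-, hv, hne⟩ := Finset.mem_filter.1 hp
    refine Finset.mem_filter.2
      ⟨Finset.mem_product.2 ⟨Finset.mem_univ _, Finset.mem_univ _⟩, Finset.mem_insert_self _ _, ?_⟩
    have hc : (insert p.1 p.2.1).card = k + 2 := by
      rw [Finset.card_insert_of_notMem hv, p.2.2]
    simpa [cext, hc] using hne
  · intro p hp
    obtain ⟨-, hv, hne⟩ := Finset.mem_filter.1 hp
    refine Finset.mem_filter.2
      ⟨Finset.mem_product.2 ⟨Finset.mem_univ _, Finset.mem_univ _⟩, Finset.notMem_erase _ _, ?_⟩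
    rw [Finset.insert_erase hv]
    have : cext (sd β) p.2.1 = sd β p.2 := cext_val _ _
    simpa [this] using hne
  · intro p hp
    obtain ⟨-, hv, -⟩ := Finset.mem_filter.1 hp
    ext
    · rfl
    · simp [Finset.erase_insert hv]
  · intro p hp
    obtain ⟨-, hv, -⟩ := Finset.mem_filter.1 hp
    ext
    · rfl
    · simp [Finset.insert_erase hv]

lemma expansion {n k : ℕ} (β : SFace n (k + 1) → ZMod 2) :
    n * qnorm β ≤ (k + 2) * cnorm (sd β) := by
  have h1 : ∀ v : Fin n, qnorm β ≤ cnorm (β + sd (coneOp β v)) := fun v =>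
    Nat.sInf_le ⟨coneOp β v, rfl⟩
  calc n * qnorm β = ∑ _v : Fin n, qnorm β := by
        rw [Finset.sum_const, Finset.card_univ, Fintype.card_fin, smul_eq_mul]
    _ ≤ ∑ v : Fin n, cnorm (β + sd (coneOp β v)) := Finset.sum_le_sum fun v _ => h1 v
    _ = (k + 2) * cnorm (sd β) := double_count β

/-- if deleting the `(k+1)`-faces of `Δ_n` outside `Y` creates a
`k`-cocycle `β` of `Y` which is not a coboundary and has quotient norm at least
`m`, then at least `(n/(k+2))·m` many `(k+1)`-faces of `Δ_n` are missing
from `Y`. -/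
theorem deletion_bound (n k m : ℕ) (hn : 1 ≤ n) (hk : 1 ≤ k) (hkn : k + 2 ≤ n) (hm : 1 ≤ m)
    (Y : Finset (SFace n (k + 2)))
    (hβ : ∃ β : SFace n (k + 1) → ZMod 2,
      (∀ τ ∈ Y, sd β τ = 0) ∧ ¬ IsCob β ∧ m ≤ qnorm β) :
    ((n : ℝ) / (k + 2)) * m ≤
      ((Finset.univ.filter fun τ : SFace n (k + 2) => τ ∉ Y).card : ℝ) := by
  obtain ⟨β, hY, -, hq⟩ := hβ
  set C := (Finset.univ.filter fun τ : SFace n (k + 2) => τ ∉ Y).card with hC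
  have hsupp : cnorm (sd β) ≤ C := by
    apply Finset.card_le_card
    intro τ hτ
    simp only [Finset.mem_filter, Finset.mem_univ, true_and] at hτ ⊢
    intro hτY
    exact hτ (hY τ hτY)
  have hnat : n * m ≤ (k + 2) * C := by
    calc n * m ≤ n * qnorm β := Nat.mul_le_mul_left n hq
      _ ≤ (k + 2) * cnorm (sd β) := expansion β
      _ ≤ (k + 2) * C := Nat.mul_le_mul_left _ hsupp
  rw [div_mul_eq_mul_div, div_le_iff₀ (by positivity)]
  calc ((n : ℝ) * m) = ((n * m : ℕ) : ℝ) := by push_cast; ring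
    _ ≤ (((k + 2) * C : ℕ) : ℝ) := by exact_mod_cast hnat
    _ = (C : ℝ) * ((k : ℝ) + 2) := by push_cast; ring
end

section
/- Let n ≥ 1 and 0 ≤ j ≤ n − 1. For every j-cycle z in the n-dimensional cube Q_n with Z/2 coefficients, there exists a (j+1)-chain y with ∂y = z and vol_{j+1}(y) ≤ ((n−j)/(2(j+1))) · vol_j(z). -/
/-- A `j`-dimensional face of the solid `n`-cube `Q_n`: a function from the
coordinates `{1, …, n}` to `{0, 1, *}` (encoded as `Option Bool`, with `none`
playing the role of `*`) having exactly `j` free (`*`) coordinates. -/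
abbrev QFace (n j : ℕ) : Type :=
  {f : Fin n → Option Bool // (Finset.univ.filter fun i => f i = none).card = j}

/-- The volume of a `ZMod 2`-chain: the number of faces in its support. -/
def vol {X : Type} [Fintype X] (z : X → ZMod 2) : ℕ :=
  (Finset.univ.filter fun x => z x ≠ 0).card

/-- The boundary of a `(j+1)`-chain in the cube, with `ZMod 2` coefficients:
its value on a `j`-face `g` is the sum of `z f` over all `(j+1)`-faces `f`
such that `g` is obtained from `f` by setting one free coordinate of `f`
to `0` or to `1` (equivalently, `f` is obtained from `g` by freeing one
non-free coordinate). -/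
def qbdry {n j : ℕ} (z : QFace n (j + 1) → ZMod 2) : QFace n j → ZMod 2 :=
  fun g => ∑ f : QFace n (j + 1),
    if ∃ i, g.1 i ≠ none ∧ f.1 = Function.update g.1 i none then z f else 0

/-- A `j`-cycle in the cube: for `j ≥ 1`, a `j`-chain whose boundary vanishes;
for `j = 0`, a `0`-chain in the image of the boundary map. -/
def IsQCycle (n : ℕ) : (j : ℕ) → (QFace n j → ZMod 2) → Prop
  | 0, z => ∃ y : QFace n 1 → ZMod 2, qbdry y = z
  | _ + 1, z => qbdry z = 0

namespace CubeFill
variable {n j : ℕ}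

lemma filter_update_none (f : Fin n → Option Bool) (i : Fin n) :
    (Finset.univ.filter fun x => Function.update f i none x = none)
      = insert i (Finset.univ.filter fun x => f x = none) := by
  ext x
  by_cases h : x = i <;> simp [Function.update_apply, h]

lemma filter_update_some (f : Fin n → Option Bool) (i : Fin n) (b : Bool) :
    (Finset.univ.filter fun x => Function.update f i (some b) x = none)
      = (Finset.univ.filter fun x => f x = none).erase i := by
  ext x
  by_cases h : x = i <;> simp [Function.update_apply, h]

/-- Free a pinned coordinate of a `j`-face. -/
def unset (g : QFace n j) (i : Fin n) (hi : g.1 i ≠ none) : QFace n (j + 1) :=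
  ⟨Function.update g.1 i none, by
    rw [filter_update_none, Finset.card_insert_of_notMem (by simp [hi]), g.2]⟩

/-- Pin a free coordinate of a `(j+1)`-face. -/
def pin (g : QFace n (j + 1)) (i : Fin n) (hi : g.1 i = none) (b : Bool) : QFace n j :=
  ⟨Function.update g.1 i (some b), by
    rw [filter_update_some, Finset.card_erase_of_mem (by simp [hi]), g.2]
    rfl⟩

/-- Change the value of a pinned coordinate of a `j`-face. -/
def reset (g : QFace n j) (i : Fin n) (hi : g.1 i ≠ none) (b : Bool) : QFace n j :=
  ⟨Function.update g.1 i (some b), by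
    rw [filter_update_some, Finset.erase_eq_of_notMem (by simp [hi]), g.2]⟩

lemma if_exists_eq_sum {α : Type*} [Fintype α] (P : α → Prop) [DecidablePred P]
    (c : ZMod 2) (h : ∀ a b, P a → P b → a = b) :
    (if ∃ a, P a then c else 0) = ∑ a, if P a then c else 0 := by
  by_cases hex : ∃ a, P a
  · obtain ⟨a₀, ha₀⟩ := hex
    rw [if_pos ⟨a₀, ha₀⟩, Finset.sum_eq_single a₀]
    · rw [if_pos ha₀]
    · intro b _ hb
      rw [if_neg (fun hPb => hb (h b a₀ hPb ha₀))]
    · simp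
  · rw [if_neg hex]
    rw [Finset.sum_eq_zero]
    intro a _
    rw [if_neg (fun hPa => hex ⟨a, hPa⟩)]

lemma qbdry_eq (y : QFace n (j + 1) → ZMod 2) (g : QFace n j) :
    qbdry y g = ∑ i : Fin n, if hi : g.1 i ≠ none then y (unset g i hi) else 0 := by
  unfold qbdry
  have huniq : ∀ (f : QFace n (j+1)) (a b : Fin n),
      (g.1 a ≠ none ∧ f.1 = Function.update g.1 a none) →
      (g.1 b ≠ none ∧ f.1 = Function.update g.1 b none) → a = b := by
    rintro f a b ⟨ha, hfa⟩ ⟨hb, hfb⟩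
    by_contra hab
    have h1 : f.1 a = none := by rw [hfa]; simp [Function.update_apply]
    have h2 : f.1 a = g.1 a := by rw [hfb]; simp [Function.update_apply, hab]
    exact ha (h2 ▸ h1)
  calc (∑ f : QFace n (j+1), if ∃ i, g.1 i ≠ none ∧ f.1 = Function.update g.1 i none then y f else 0)
      = ∑ f : QFace n (j+1), ∑ i : Fin n,
          if g.1 i ≠ none ∧ f.1 = Function.update g.1 i none then y f else 0 := by
        refine Finset.sum_congr rfl fun f _ => ?_
        convert if_exists_eq_sum _ _ (huniq f)
    _ = ∑ i : Fin n, ∑ f : QFace n (j+1),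
          if g.1 i ≠ none ∧ f.1 = Function.update g.1 i none then y f else 0 :=
        Finset.sum_comm
    _ = _ := by
        refine Finset.sum_congr rfl fun i _ => ?_
        by_cases hi : g.1 i ≠ none
        · rw [dif_pos hi]
          rw [Finset.sum_eq_single (unset g i hi)]
          · rw [if_pos ⟨hi, rfl⟩]
          · intro f _ hf
            rw [if_neg]
            rintro ⟨-, hf1⟩
            exact hf (Subtype.ext hf1)
          · simp
        · rw [dif_neg hi]
          refine Finset.sum_eq_zero fun f _ => ?_
          rw [if_neg (fun h => hi h.1)]



lemma zmod2_add_self (a : ZMod 2) : a + a = 0 := by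
  have : (2 : ZMod 2) = 0 := by decide
  calc a + a = 2 * a := by ring
    _ = 0 := by rw [this, zero_mul]

/-- The cylinder over `z` in direction `d` towards side `b`. -/
def cyl (d : Fin n) (b : Bool) (z : QFace n j → ZMod 2) : QFace n (j + 1) → ZMod 2 :=
  fun F => if h : F.1 d = none then z (pin F d h (!b)) else 0

/-- The projection of `z` onto the facet `x_d = b` (degenerate faces die). -/
def proj (d : Fin n) (b : Bool) (z : QFace n j → ZMod 2) : QFace n j → ZMod 2 :=
  fun g => if h : g.1 d = some b then
    z g + z (reset g d (by rw [h]; exact fun hc => nomatch hc) (!b)) else 0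

lemma cyl_bdry_pinned (z : QFace n j → ZMod 2) (d : Fin n) (b : Bool)
    (g : QFace n j) (hg : g.1 d ≠ none) :
    qbdry (cyl d b z) g = z g + proj d b z g := by
  rw [qbdry_eq]
  have hL : (∑ i : Fin n, if hi : g.1 i ≠ none then cyl d b z (unset g i hi) else 0)
      = z (reset g d hg (!b)) := by
    rw [Finset.sum_eq_single d]
    · rw [dif_pos hg]
      have h1 : (unset g d hg).1 d = none := by simp [unset]
      rw [cyl, dif_pos h1]
      congr 1
      apply Subtype.ext
      show Function.update (Function.update g.1 d none) d (some (!b))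
          = Function.update g.1 d (some (!b))
      simp
    · intro i _ hid
      by_cases hi : g.1 i ≠ none
      · rw [dif_pos hi]
        have heq : (unset g i hi).1 d = g.1 d := by
          show Function.update g.1 i none d = g.1 d
          exact Function.update_of_ne (Ne.symm hid) none g.1
        rw [cyl, dif_neg (heq ▸ hg)]
      · rw [dif_neg hi]
    · simp
  rw [hL]
  obtain ⟨v, hv⟩ : ∃ v, g.1 d = some v := by
    cases h : g.1 d with
    | none => exact absurd h hg
    | some v => exact ⟨v, rfl⟩
  by_cases hvb : v = b
  · subst hvb
    rw [proj, dif_pos hv, ← add_assoc, zmod2_add_self, zero_add]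
  · have hvnb : v = !b := by cases v <;> cases b <;> simp_all
    subst hvnb
    have : reset g d hg (!b) = g := by
      apply Subtype.ext
      show Function.update g.1 d (some (!b)) = g.1
      rw [← hv, Function.update_eq_self]
    rw [this, proj, dif_neg (by rw [hv]; cases b <;> simp), add_zero]

lemma cyl_bdry_free (z : QFace n (j + 1) → ZMod 2) (d : Fin n) (b : Bool)
    (g : QFace n (j + 1)) (hg : g.1 d = none) :
    qbdry (cyl d b z) g = z g + qbdry z (pin g d hg (!b)) := by
  rw [qbdry_eq, qbdry_eq]
  have hpin_d : (pin g d hg (!b)).1 d ≠ none := by simp [pin]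
  have hud : unset (pin g d hg (!b)) d hpin_d = g := by
    apply Subtype.ext
    show Function.update (Function.update g.1 d (some (!b))) d none = g.1
    funext x
    by_cases h : x = d <;> simp [Function.update_apply, h, hg.symm]
  rw [← Finset.add_sum_erase _ (fun i => if hi : g.1 i ≠ none then cyl d b z (unset g i hi) else 0)
    (Finset.mem_univ d), dif_neg (by simp [hg]), zero_add]
  rw [← Finset.add_sum_erase _
    (fun i => if hi : (pin g d hg (!b)).1 i ≠ none then z (unset (pin g d hg (!b)) i hi) else 0)
    (Finset.mem_univ d), dif_pos hpin_d, hud, ← add_assoc, zmod2_add_self, zero_add]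
  refine Finset.sum_congr rfl fun i hi => ?_
  have hid : i ≠ d := Finset.ne_of_mem_erase hi
  have hcond : (pin g d hg (!b)).1 i = g.1 i := by simp [pin, Function.update_apply, hid]
  by_cases hgi : g.1 i ≠ none
  · rw [dif_pos hgi, dif_pos (by rw [hcond]; exact hgi)]
    have h1 : (unset g i hgi).1 d = none := by
      show Function.update g.1 i none d = none
      rw [Function.update_of_ne (Ne.symm hid) none g.1, hg]
    rw [cyl, dif_pos h1]
    congr 1
    apply Subtype.ext
    show Function.update (Function.update g.1 i none) d (some (!b))
        = Function.update (Function.update g.1 d (some (!b))) i none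
    rw [Function.update_comm hid]
  · rw [dif_neg hgi, dif_neg (by rw [hcond]; exact hgi)]

lemma unset_unset_comm (g : QFace n j) (a b : Fin n) (hab : a ≠ b)
    (ha : g.1 a ≠ none) (hb : g.1 b ≠ none)
    (ha' : (unset g b hb).1 a ≠ none) (hb' : (unset g a ha).1 b ≠ none) :
    unset (unset g a ha) b hb' = unset (unset g b hb) a ha' := by
  apply Subtype.ext
  show Function.update (Function.update g.1 a none) b none
      = Function.update (Function.update g.1 b none) a none
  rw [Function.update_comm hab]

lemma qbdry_qbdry (y : QFace n (j + 2) → ZMod 2) : qbdry (qbdry y) = 0 := by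
  funext g
  rw [qbdry_eq]
  classical
  have hcond : ∀ (i i' : Fin n) (hi : g.1 i ≠ none),
      ((unset g i hi).1 i' ≠ none) ↔ (i' ≠ i ∧ g.1 i' ≠ none) := by
    intro i i' hi
    show (Function.update g.1 i none i' ≠ none) ↔ _
    by_cases h : i' = i <;> simp [Function.update_apply, h]
  have hF : ∃ F : Fin n × Fin n → ZMod 2, (∀ p,
      F p = if h : g.1 p.1 ≠ none ∧ g.1 p.2 ≠ none ∧ p.2 ≠ p.1 then
        y (unset (unset g p.1 h.1) p.2 ((hcond p.1 p.2 h.1).2 ⟨h.2.2, h.2.1⟩)) else 0) :=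
    ⟨_, fun p => rfl⟩
  obtain ⟨F, hF⟩ := hF
  have hstep : (∑ i : Fin n, if hi : g.1 i ≠ none then qbdry y (unset g i hi) else 0)
      = ∑ p : Fin n × Fin n, F p := by
    rw [Fintype.sum_prod_type]
    refine Finset.sum_congr rfl fun i _ => ?_
    by_cases hi : g.1 i ≠ none
    · rw [dif_pos hi, qbdry_eq]
      refine Finset.sum_congr rfl fun i' _ => ?_
      rw [hF (i, i')]
      by_cases h' : (unset g i hi).1 i' ≠ none
      · have h2 := (hcond i i' hi).1 h'
        rw [dif_pos h', dif_pos (show g.1 i ≠ none ∧ g.1 i' ≠ none ∧ i' ≠ i from ⟨hi, h2.2, h2.1⟩)]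
      · rw [dif_neg h', dif_neg]
        intro hcc
        exact h' ((hcond i i' hi).2 ⟨hcc.2.2, hcc.2.1⟩)
    · rw [dif_neg hi]
      symm
      refine Finset.sum_eq_zero fun i' _ => ?_
      rw [hF (i, i'), dif_neg (fun hcc => hi hcc.1)]
  rw [hstep]
  show _ = (0 : ZMod 2)
  refine Finset.sum_involution (fun p _ => (p.2, p.1)) ?_ ?_ (fun p hp => Finset.mem_univ _) ?_
  · intro p _
    rw [hF p, hF (p.2, p.1)]
    by_cases h : g.1 p.1 ≠ none ∧ g.1 p.2 ≠ none ∧ p.2 ≠ p.1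
    · have h' : g.1 p.2 ≠ none ∧ g.1 p.1 ≠ none ∧ p.1 ≠ p.2 := ⟨h.2.1, h.1, Ne.symm h.2.2⟩
      rw [dif_pos h, dif_pos h']
      rw [unset_unset_comm g p.1 p.2 (Ne.symm h.2.2) h.1 h.2.1]
      exact zmod2_add_self _
    · have h' : ¬(g.1 p.2 ≠ none ∧ g.1 p.1 ≠ none ∧ p.1 ≠ p.2) := by
        intro hc; exact h ⟨hc.2.1, hc.1, Ne.symm hc.2.2⟩
      rw [dif_neg h, dif_neg h', add_zero]
  · intro p _ hFp
    have h : g.1 p.1 ≠ none ∧ g.1 p.2 ≠ none ∧ p.2 ≠ p.1 := by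
      by_contra hc
      rw [hF p, dif_neg hc] at hFp
      exact hFp rfl
    intro he
    exact h.2.2 (congrArg Prod.fst he)
  · intro p _
    rfl

/-- Membership in the subcube determined by the pinning pattern `c`. -/
def Sub (c : Fin n → Option Bool) (f : Fin n → Option Bool) : Prop :=
  ∀ i v, c i = some v → f i = some v

lemma qbdry_add (y₁ y₂ : QFace n (j + 1) → ZMod 2) :
    qbdry (y₁ + y₂) = qbdry y₁ + qbdry y₂ := by
  funext g
  show _ = qbdry y₁ g + qbdry y₂ g
  unfold qbdry
  rw [← Finset.sum_add_distrib]
  refine Finset.sum_congr rfl fun f _ => ?_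
  by_cases h : ∃ i, g.1 i ≠ none ∧ f.1 = Function.update g.1 i none
  · rw [if_pos h, if_pos h, if_pos h]; rfl
  · rw [if_neg h, if_neg h, if_neg h, add_zero]

lemma vol_add_le {X : Type} [Fintype X] [DecidableEq X] (a b : X → ZMod 2) :
    vol (a + b) ≤ vol a + vol b := by
  unfold vol
  calc (Finset.univ.filter fun x => (a + b) x ≠ 0).card
      ≤ ((Finset.univ.filter fun x => a x ≠ 0) ∪ (Finset.univ.filter fun x => b x ≠ 0)).card := by
        apply Finset.card_le_card
        intro x hx
        simp only [Finset.mem_filter, Finset.mem_univ, true_and, Finset.mem_union] at hx ⊢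
        by_contra hc
        push_neg at hc
        exact hx (by show a x + b x = 0; rw [hc.1, hc.2, add_zero])
    _ ≤ _ := Finset.card_union_le _ _

/-- Pin an arbitrary free coordinate (used only as a junk value). -/
noncomputable def anyPin (F : QFace n (j + 1)) : QFace n j := by
  have h : (Finset.univ.filter fun i => F.1 i = none).Nonempty :=
    Finset.card_pos.mp (by rw [F.2]; exact Nat.succ_pos j)
  refine pin F h.choose ?_ true
  have := h.choose_spec
  simp only [Finset.mem_filter] at this
  exact this.2

lemma vol_cyl_le (d : Fin n) (b : Bool) (z : QFace n j → ZMod 2) :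
    vol (cyl d b z) ≤
      (Finset.univ.filter fun f : QFace n j => z f ≠ 0 ∧ f.1 d = some (!b)).card := by
  unfold vol
  apply Finset.card_le_card_of_injOn
    (fun F => if h : F.1 d = none then pin F d h (!b) else anyPin F)
  · intro F hF
    simp only [Finset.coe_filter, Finset.mem_coe, Set.mem_setOf_eq, Finset.mem_filter, Finset.mem_univ, true_and] at hF ⊢
    have hFd : F.1 d = none := by
      by_contra h
      exact hF (by rw [cyl, dif_neg h])
    rw [dif_pos hFd]
    constructor
    · intro h0
      exact hF (by rw [cyl, dif_pos hFd, h0])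
    · show Function.update F.1 d (some (!b)) d = some (!b)
      rw [Function.update_self]
  · intro F₁ h₁ F₂ h₂ he
    simp only [Finset.mem_coe, Finset.mem_filter, Finset.mem_univ, true_and] at h₁ h₂
    have hd₁ : F₁.1 d = none := by by_contra h; exact h₁ (by rw [cyl, dif_neg h])
    have hd₂ : F₂.1 d = none := by by_contra h; exact h₂ (by rw [cyl, dif_neg h])
    simp only [] at he
    rw [dif_pos hd₁, dif_pos hd₂] at he
    have h1 : Function.update F₁.1 d (some (!b)) = Function.update F₂.1 d (some (!b)) :=
      congrArg Subtype.val he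
    apply Subtype.ext
    funext x
    by_cases hx : x = d
    · subst hx; rw [hd₁, hd₂]
    · have := congrFun h1 x
      rwa [Function.update_of_ne hx, Function.update_of_ne hx] at this

lemma vol_proj_le (d : Fin n) (b : Bool) (z : QFace n j → ZMod 2) :
    vol (proj d b z) ≤
      (Finset.univ.filter fun f : QFace n j => z f ≠ 0 ∧ f.1 d ≠ none).card := by
  unfold vol
  classical
  apply Finset.card_le_card_of_injOn
    (fun g => if z g ≠ 0 then g else (if h : g.1 d = some b then
      reset g d (by rw [h]; exact fun hc => nomatch hc) (!b) else g))
  · intro g hg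
    simp only [Finset.coe_filter, Finset.mem_coe, Set.mem_setOf_eq, Finset.mem_filter, Finset.mem_univ, true_and] at hg ⊢
    have hgb : g.1 d = some b := by
      by_contra h
      exact hg (by rw [proj, dif_neg h])
    by_cases hzg : z g ≠ 0
    · rw [if_pos hzg]
      exact ⟨hzg, by rw [hgb]; exact fun hc => nomatch hc⟩
    · rw [if_neg hzg, dif_pos hgb]
      push_neg at hzg
      constructor
      · intro h0
        apply hg
        rw [proj, dif_pos hgb]
        have : z (reset g d (by rw [hgb]; exact fun hc => nomatch hc) (!b)) = 0 := h0
        rw [hzg, this, add_zero]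
      · show Function.update g.1 d (some (!b)) d ≠ none
        rw [Function.update_self]
        exact fun hc => nomatch hc
  · have hkey : ∀ g, proj d b z g ≠ 0 →
        Function.update ((if z g ≠ 0 then g else (if h : g.1 d = some b then
          reset g d (by rw [h]; exact fun hc => nomatch hc) (!b) else g)) : QFace n j).1
          d (some b) = g.1 := by
      intro g hg
      have hgb : g.1 d = some b := by
        by_contra h
        exact hg (by rw [proj, dif_neg h])
      by_cases hzg : z g ≠ 0
      · rw [if_pos hzg, ← hgb, Function.update_eq_self]
      · rw [if_neg hzg, dif_pos hgb]
        show Function.update (Function.update g.1 d (some (!b))) d (some b) = g.1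
        rw [Function.update_idem, ← hgb, Function.update_eq_self]
    intro g₁ h₁ g₂ h₂ he
    simp only [Finset.mem_coe, Finset.mem_filter, Finset.mem_univ, true_and] at h₁ h₂
    apply Subtype.ext
    rw [← hkey g₁ h₁, ← hkey g₂ h₂]
    simp only [] at he
    rw [he]

lemma split_bool_card (d : Fin n) (z : QFace n j → ZMod 2) :
    (∑ b : Bool,
      (Finset.univ.filter fun f : QFace n j => z f ≠ 0 ∧ f.1 d = some (!b)).card)
      = (Finset.univ.filter fun f : QFace n j => z f ≠ 0 ∧ f.1 d ≠ none).card := by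
  classical
  rw [Fintype.sum_bool]
  rw [← Finset.card_union_of_disjoint]
  · congr 1
    ext f
    simp only [Finset.mem_union, Finset.mem_filter, Finset.mem_univ, true_and]
    constructor
    · rintro (⟨h1, h2⟩ | ⟨h1, h2⟩) <;> exact ⟨h1, by rw [h2]; exact fun hc => nomatch hc⟩
    · rintro ⟨h1, h2⟩
      cases hfd : f.1 d with
      | none => exact absurd hfd h2
      | some v =>
        cases v with
        | false => left; exact ⟨h1, by simp [hfd]⟩
        | true => right; exact ⟨h1, by simp [hfd]⟩
  · rw [Finset.disjoint_left]
    rintro f hf1 hf2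
    simp only [Finset.mem_filter, Finset.mem_univ, true_and] at hf1 hf2
    rw [hf1.2] at hf2
    simp at hf2

lemma sum_active_card (c : Fin n → Option Bool) (m : ℕ)
    (hm : (Finset.univ.filter fun i => c i = none).card = m)
    (z : QFace n j → ZMod 2) (hsupp : ∀ f, z f ≠ 0 → Sub c f.1) :
    (∑ d ∈ Finset.univ.filter (fun i => c i = none),
      (Finset.univ.filter fun f : QFace n j => z f ≠ 0 ∧ f.1 d ≠ none).card)
      = (m - j) * vol z := by
  classical
  have hstep : ∀ d, (Finset.univ.filter fun f : QFace n j => z f ≠ 0 ∧ f.1 d ≠ none).card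
      = ∑ f ∈ Finset.univ.filter (fun f : QFace n j => z f ≠ 0),
          if f.1 d ≠ none then 1 else 0 := by
    intro d
    rw [← Finset.card_filter, Finset.filter_filter]
  simp only [hstep]
  rw [Finset.sum_comm]
  have hinner : ∀ f : QFace n j, z f ≠ 0 →
      (∑ d ∈ Finset.univ.filter (fun i => c i = none), if f.1 d ≠ none then 1 else 0) = m - j := by
    intro f hf
    rw [← Finset.card_filter, Finset.filter_filter]
    have hsub := hsupp f hf
    have hpart : ((Finset.univ.filter fun i => c i = none).filter fun i => f.1 i = none).card
        + ((Finset.univ.filter fun i => c i = none).filter fun i => ¬ f.1 i = none).card = m := by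
      rw [Finset.card_filter_add_card_filter_not (p := fun i => f.1 i = none), hm]
    have hfree : ((Finset.univ.filter fun i => c i = none).filter fun i => f.1 i = none)
        = Finset.univ.filter fun i => f.1 i = none := by
      ext i
      simp only [Finset.mem_filter, Finset.mem_univ, true_and]
      constructor
      · rintro ⟨-, h⟩; exact h
      · intro h
        refine ⟨?_, h⟩
        cases hci : c i with
        | none => rfl
        | some v => rw [hsub i v hci] at h; exact nomatch h
    rw [Finset.filter_filter] at hfree
    rw [Finset.filter_filter, Finset.filter_filter] at hpart
    have : (Finset.univ.filter fun i => c i = none ∧ f.1 i = none).card = j := by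
      rw [hfree, f.2]
    have hne : (Finset.univ.filter fun i => c i = none ∧ ¬f.1 i = none).card = m - j := by
      omega
    convert hne using 2
  rw [Finset.sum_congr rfl (fun f hf => hinner f (Finset.mem_filter.mp hf).2)]
  rw [Finset.sum_const, smul_eq_mul]
  rw [mul_comm]
  rfl

lemma pinned0 (g : QFace n 0) (i : Fin n) : g.1 i ≠ none := by
  intro h
  have : i ∈ Finset.univ.filter fun x => g.1 x = none := by
    simp [h]
  rw [Finset.card_eq_zero.mp g.2] at this
  exact absurd this (Finset.notMem_empty i)

lemma qbdry_cyl_zero (d : Fin n) (b : Bool) (z : QFace n 0 → ZMod 2) :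
    qbdry (cyl d b z) = z + proj d b z := by
  funext g
  exact cyl_bdry_pinned z d b g (pinned0 g d)

lemma qbdry_cyl_succ {k : ℕ} (d : Fin n) (b : Bool) (z : QFace n (k + 1) → ZMod 2)
    (hz : qbdry z = 0) : qbdry (cyl d b z) = z + proj d b z := by
  funext g
  by_cases hg : g.1 d = none
  · rw [cyl_bdry_free z d b g hg]
    show z g + qbdry z _ = z g + proj d b z g
    rw [hz]
    show z g + 0 = z g + proj d b z g
    rw [proj, dif_neg (by rw [hg]; exact fun hc => nomatch hc)]
  · exact cyl_bdry_pinned z d b g hg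

lemma supp_cyl {c : Fin n → Option Bool} (d : Fin n) (hcd : c d = none) (b : Bool)
    (z : QFace n j → ZMod 2)
    (hsupp : ∀ f, z f ≠ 0 → Sub c f.1) (F : QFace n (j + 1)) (hF : cyl d b z F ≠ 0) :
    Sub c F.1 := by
  have hFd : F.1 d = none := by
    by_contra h
    exact hF (by rw [cyl, dif_neg h])
  have hz : z (pin F d hFd (!b)) ≠ 0 := fun h0 => hF (by rw [cyl, dif_pos hFd, h0])
  have hs := hsupp _ hz
  intro i v hiv
  have hid : i ≠ d := fun h => by rw [h, hcd] at hiv; exact nomatch hiv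
  have := hs i v hiv
  rwa [show (pin F d hFd (!b)).1 i = F.1 i from Function.update_of_ne hid _ _] at this

lemma supp_proj {c : Fin n → Option Bool} (d : Fin n) (hcd : c d = none) (b : Bool)
    (z : QFace n j → ZMod 2)
    (hsupp : ∀ f, z f ≠ 0 → Sub c f.1) (g : QFace n j) (hg : proj d b z g ≠ 0) :
    Sub (Function.update c d (some b)) g.1 := by
  have hgb : g.1 d = some b := by
    by_contra h
    exact hg (by rw [proj, dif_neg h])
  have hdn : g.1 d ≠ none := by rw [hgb]; exact fun hc => nomatch hc
  have hsome : Sub c g.1 := by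
    by_cases hzg : z g ≠ 0
    · exact hsupp g hzg
    · push_neg at hzg
      have hzr : z (reset g d hdn (!b)) ≠ 0 := by
        intro h0
        apply hg
        rw [proj, dif_pos hgb]
        have : z (reset g d (by rw [hgb]; exact fun hc => nomatch hc) (!b)) = 0 := h0
        rw [hzg, this, add_zero]
      have hs := hsupp _ hzr
      intro i v hiv
      by_cases hid : i = d
      · subst hid; rw [hcd] at hiv; exact absurd hiv (fun hc => nomatch hc)
      · have := hs i v hiv
        rwa [show (reset g d hdn (!b)).1 i = g.1 i from Function.update_of_ne hid _ _] at this
  intro i v hiv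
  by_cases hid : i = d
  · subst hid
    rw [Function.update_self] at hiv
    rw [hgb, ← hiv]
  · rw [Function.update_of_ne hid] at hiv
    exact hsome i v hiv

lemma classify {c : Fin n → Option Bool}
    (hc : (Finset.univ.filter fun i => c i = none).card = j + 1)
    (g : QFace n j) (hsub : Sub c g.1) :
    ∃ (d : Fin n) (hd : c d = none) (b : Bool),
      g = pin (⟨c, hc⟩ : QFace n (j + 1)) d hd b := by
  classical
  set A := Finset.univ.filter fun i => c i = none with hA
  set free := Finset.univ.filter fun i => g.1 i = none with hfree
  have hfA : free ⊆ A := by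
    intro i hi
    simp only [hfree, Finset.mem_filter, Finset.mem_univ, true_and] at hi
    simp only [hA, Finset.mem_filter, Finset.mem_univ, true_and]
    cases hci : c i with
    | none => rfl
    | some v => rw [hsub i v hci] at hi; exact nomatch hi
  have hnotsub : ¬ A ⊆ free := by
    intro h
    have := Finset.card_le_card h
    rw [hc, g.2] at this
    omega
  obtain ⟨d, hdA, hdf⟩ := Finset.not_subset.mp hnotsub
  have hd : c d = none := by
    simp only [hA, Finset.mem_filter, Finset.mem_univ, true_and] at hdA; exact hdA
  have hgd : g.1 d ≠ none := by
    intro h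
    exact hdf (by simp only [hfree, Finset.mem_filter, Finset.mem_univ, true_and]; exact h)
  obtain ⟨b, hb⟩ : ∃ b, g.1 d = some b := by
    cases h : g.1 d with
    | none => exact absurd h hgd
    | some v => exact ⟨v, rfl⟩
  have hcard_erase : (A.erase d).card = j := by
    rw [Finset.card_erase_of_mem hdA, hc]
    omega
  have hfree_eq : free = A.erase d := by
    apply Finset.eq_of_subset_of_card_le
    · intro i hi
      exact Finset.mem_erase.mpr ⟨fun he => hdf (he ▸ hi), hfA hi⟩
    · rw [hcard_erase, g.2]
  refine ⟨d, hd, b, ?_⟩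
  apply Subtype.ext
  funext x
  show g.1 x = Function.update c d (some b) x
  by_cases hx : x = d
  · subst hx; rw [Function.update_self, hb]
  · rw [Function.update_of_ne hx]
    cases hcx : c x with
    | some v => exact hsub x v hcx
    | none =>
      have hxA : x ∈ A.erase d := Finset.mem_erase.mpr ⟨hx, by
        simp only [hA, Finset.mem_filter, Finset.mem_univ, true_and]; exact hcx⟩
      rw [← hfree_eq] at hxA
      simp only [hfree, Finset.mem_filter, Finset.mem_univ, true_and] at hxA
      exact hxA

lemma pin_inj {c : Fin n → Option Bool}
    (hc : (Finset.univ.filter fun i => c i = none).card = j + 1)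
    {d d' : Fin n} {b b' : Bool} (hd : c d = none) (hd' : c d' = none)
    (h : pin (⟨c, hc⟩ : QFace n (j + 1)) d hd b = pin (⟨c, hc⟩ : QFace n (j + 1)) d' hd' b') :
    d = d' ∧ b = b' := by
  have hval : Function.update c d (some b) = Function.update c d' (some b') :=
    congrArg Subtype.val h
  have hdd : d = d' := by
    by_contra hne
    have := congrFun hval d
    rw [Function.update_self, Function.update_of_ne hne, hd] at this
    exact nomatch this
  subst hdd
  refine ⟨rfl, ?_⟩
  have := congrFun hval d
  rw [Function.update_self, Function.update_self] at this
  exact Option.some_injective _ this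

/-- Flip the value of a pinned coordinate. -/
def flipAt (g : QFace n j) (i : Fin n) (hi : g.1 i ≠ none) : QFace n j :=
  reset g i hi (!(g.1 i).iget)

lemma sum_qbdry_zero_dim (w : QFace n 1 → ZMod 2) :
    (∑ g : QFace n 0, qbdry w g) = 0 := by
  classical
  have h1 : (∑ g : QFace n 0, qbdry w g)
      = ∑ p : QFace n 0 × Fin n, w (unset p.1 p.2 (pinned0 p.1 p.2)) := by
    rw [Fintype.sum_prod_type]
    refine Finset.sum_congr rfl fun g _ => ?_
    rw [qbdry_eq]
    exact Finset.sum_congr rfl fun i _ => dif_pos (pinned0 g i)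
  rw [h1]
  refine Finset.sum_involution
    (fun p _ => (flipAt p.1 p.2 (pinned0 p.1 p.2), p.2)) ?_ ?_
    (fun p hp => Finset.mem_univ _) ?_
  · intro p _
    have : unset (flipAt p.1 p.2 (pinned0 p.1 p.2)) p.2
        (pinned0 (flipAt p.1 p.2 (pinned0 p.1 p.2)) p.2) = unset p.1 p.2 (pinned0 p.1 p.2) := by
      apply Subtype.ext
      show Function.update (Function.update p.1.1 p.2 _) p.2 none
          = Function.update p.1.1 p.2 none
      rw [Function.update_idem]
    rw [show w (unset ((fun p _ => (flipAt p.1 p.2 (pinned0 p.1 p.2), p.2)) p (Finset.mem_univ p)).1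
      ((fun p _ => (flipAt p.1 p.2 (pinned0 p.1 p.2), p.2)) p (Finset.mem_univ p)).2 _)
      = w (unset p.1 p.2 (pinned0 p.1 p.2)) from congrArg w this]
    exact zmod2_add_self _
  · intro p _ _
    intro he
    obtain ⟨v, hv⟩ : ∃ v, p.1.1 p.2 = some v := by
      cases h : p.1.1 p.2 with
      | none => exact absurd h (pinned0 p.1 p.2)
      | some v => exact ⟨v, rfl⟩
    have := congrArg (fun q : QFace n 0 × Fin n => q.1.1 p.2) he
    simp only [flipAt, reset] at this
    rw [Function.update_self, hv] at this
    simp [hv] at this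
  · intro p _
    have h1 : ∀ (h1 h2), flipAt (flipAt p.1 p.2 h1) p.2 h2 = p.1 := by
      intro h1 h2
      apply Subtype.ext
      funext x
      show Function.update (Function.update p.1.1 p.2 _) p.2 _ x = p.1.1 x
      by_cases hx : x = p.2
      · subst hx
        rw [Function.update_self]
        obtain ⟨v, hv⟩ : ∃ v, p.1.1 p.2 = some v := by
          cases h : p.1.1 p.2 with
          | none => exact absurd h (pinned0 p.1 p.2)
          | some v => exact ⟨v, rfl⟩
        rw [hv]
        congr 1
        show (!((Function.update p.1.1 p.2 (some (!(p.1.1 p.2).iget))) p.2).iget) = v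
        rw [Function.update_self, hv]
        cases v <;> rfl
      · rw [Function.update_of_ne hx, Function.update_of_ne hx]
    show (flipAt (flipAt p.1 p.2 (pinned0 p.1 p.2)) p.2
      (pinned0 (flipAt p.1 p.2 (pinned0 p.1 p.2)) p.2), p.2) = p
    rw [Prod.ext_iff]
    exact ⟨h1 (pinned0 p.1 p.2) (pinned0 (flipAt p.1 p.2 (pinned0 p.1 p.2)) p.2), rfl⟩

lemma zmod2_eq_of_add_eq_zero {a b : ZMod 2} (h : a + b = 0) : a = b := by
  have : a + (b + b) = (a + b) + b := by ring
  rw [zmod2_add_self, add_zero, h, zero_add] at this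
  exact this

lemma heq_zero {c : Fin n → Option Bool}
    (hc : (Finset.univ.filter fun i => c i = none).card = 0 + 1)
    (z : QFace n 0 → ZMod 2) (hz : IsQCycle n 0 z) (hsupp : ∀ f, z f ≠ 0 → Sub c f.1)
    (d : Fin n) (hd : c d = none) (b : Bool) (d' : Fin n) (hd' : c d' = none) (b' : Bool) :
    z (pin (⟨c, hc⟩ : QFace n 1) d hd b) = z (pin (⟨c, hc⟩ : QFace n 1) d' hd' b') := by
  classical
  obtain ⟨w, hw⟩ := hz
  have hcard1 : ∀ e e', c e = none → c e' = none → e = e' := by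
    intro e e' he he'
    have h1 : e ∈ Finset.univ.filter fun i => c i = none := by simp [he]
    have h2 : e' ∈ Finset.univ.filter fun i => c i = none := by simp [he']
    exact Finset.card_le_one.mp (le_of_eq hc) e h1 e' h2
  have hdd : d = d' := hcard1 d d' hd hd'
  subst hdd
  by_cases hbb : b = b'
  · subst hbb; rfl
  · have hkey : z (pin (⟨c, hc⟩ : QFace n 1) d hd true)
        + z (pin (⟨c, hc⟩ : QFace n 1) d hd false) = 0 := by
      have hsum : (∑ g : QFace n 0, z g) = 0 := by
        rw [← hw]; exact sum_qbdry_zero_dim w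
      have hpairne : pin (⟨c, hc⟩ : QFace n 1) d hd true ≠ pin (⟨c, hc⟩ : QFace n 1) d hd false :=
        fun h => by simpa using (pin_inj hc hd hd h).2
      have hsupp2 : ∀ g : QFace n 0, g ∉ ({pin (⟨c, hc⟩ : QFace n 1) d hd true,
          pin (⟨c, hc⟩ : QFace n 1) d hd false} : Finset (QFace n 0)) → z g = 0 := by
        intro g hg
        by_contra hzg
        obtain ⟨e, he, bb, hgeq⟩ := classify hc g (hsupp g hzg)
        have hed : e = d := hcard1 e d he hd
        subst hed
        apply hg
        simp only [Finset.mem_insert, Finset.mem_singleton]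
        cases bb
        · right; rw [hgeq]
        · left; rw [hgeq]
      calc z (pin (⟨c, hc⟩ : QFace n 1) d hd true) + z (pin (⟨c, hc⟩ : QFace n 1) d hd false)
          = ∑ g ∈ ({pin (⟨c, hc⟩ : QFace n 1) d hd true,
              pin (⟨c, hc⟩ : QFace n 1) d hd false} : Finset (QFace n 0)), z g := by
            rw [Finset.sum_pair hpairne]
        _ = ∑ g : QFace n 0, z g := by
            apply Finset.sum_subset (Finset.subset_univ _)
            intro g _ hg
            exact hsupp2 g hg
        _ = 0 := hsum
    have hT := zmod2_eq_of_add_eq_zero hkey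
    cases b <;> cases b'
    · exact absurd rfl hbb
    · exact hT.symm
    · exact hT
    · exact absurd rfl hbb

lemma heq_succ {k : ℕ} {c : Fin n → Option Bool}
    (hc : (Finset.univ.filter fun i => c i = none).card = (k + 1) + 1)
    (z : QFace n (k + 1) → ZMod 2) (hz : qbdry z = 0)
    (hsupp : ∀ f, z f ≠ 0 → Sub c f.1)
    (d : Fin n) (hd : c d = none) (b : Bool) (d' : Fin n) (hd' : c d' = none) (b' : Bool) :
    z (pin (⟨c, hc⟩ : QFace n (k + 2)) d hd b) = z (pin (⟨c, hc⟩ : QFace n (k + 2)) d' hd' b') := by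
  classical
  -- core: the case of two distinct directions
  have core : ∀ (e : Fin n) (he : c e = none) (be : Bool) (e' : Fin n) (he' : c e' = none)
      (be' : Bool), e ≠ e' →
      z (pin (⟨c, hc⟩ : QFace n (k + 2)) e he be) = z (pin (⟨c, hc⟩ : QFace n (k + 2)) e' he' be') := by
    intro e he be e' he' be' hee
    have hGe' : (pin (⟨c, hc⟩ : QFace n (k + 2)) e he be).1 e' = none := by
      show Function.update c e (some be) e' = none
      rw [Function.update_of_ne (Ne.symm hee), he']
    set G := pin (pin (⟨c, hc⟩ : QFace n (k + 2)) e he be) e' hGe' be' with hG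
    have hGe : G.1 e ≠ none := by
      show Function.update (Function.update c e (some be)) e' (some be') e ≠ none
      rw [Function.update_of_ne hee, Function.update_self]
      exact fun hx => nomatch hx
    have hGe'2 : G.1 e' ≠ none := by
      show Function.update (Function.update c e (some be)) e' (some be') e' ≠ none
      rw [Function.update_self]
      exact fun hx => nomatch hx
    have h0 : qbdry z G = 0 := by rw [hz]; rfl
    rw [qbdry_eq] at h0
    rw [← Finset.add_sum_erase _ _ (Finset.mem_univ e), dif_pos hGe] at h0
    have he'mem : e' ∈ Finset.univ.erase e := Finset.mem_erase.mpr ⟨Ne.symm hee, Finset.mem_univ _⟩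
    rw [← Finset.add_sum_erase _ _ he'mem, dif_pos hGe'2] at h0
    have hrest : ∀ i ∈ (Finset.univ.erase e).erase e',
        (if hi : G.1 i ≠ none then z (unset G i hi) else 0) = 0 := by
      intro i hi
      have hie' : i ≠ e' := Finset.ne_of_mem_erase hi
      have hie : i ≠ e := Finset.ne_of_mem_erase (Finset.mem_of_mem_erase hi)
      by_cases hGi : G.1 i ≠ none
      · rw [dif_pos hGi]
        by_contra hnz
        have hci : c i ≠ none := by
          intro hci
          apply hGi
          show Function.update (Function.update c e (some be)) e' (some be') i = none
          rw [Function.update_of_ne hie', Function.update_of_ne hie, hci]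
        have hsub := hsupp _ hnz
        obtain ⟨v, hv⟩ : ∃ v, c i = some v := by
          cases hx : c i with
          | none => exact absurd hx hci
          | some v => exact ⟨v, rfl⟩
        have := hsub i v hv
        have hnone : (unset G i hGi).1 i = none := by
          show Function.update G.1 i none i = none
          rw [Function.update_self]
        rw [hnone] at this
        exact nomatch this
      · rw [dif_neg hGi]
    rw [Finset.sum_eq_zero hrest, add_zero] at h0
    have hu1 : unset G e hGe = pin (⟨c, hc⟩ : QFace n (k + 2)) e' he' be' := by
      apply Subtype.ext
      funext x
      show Function.update (Function.update (Function.update c e (some be)) e' (some be')) e none x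
          = Function.update c e' (some be') x
      by_cases hx : x = e
      · subst hx
        rw [Function.update_self, Function.update_of_ne hee, he]
      · rw [Function.update_of_ne hx]
        by_cases hx' : x = e'
        · subst hx'; rw [Function.update_self, Function.update_self]
        · rw [Function.update_of_ne hx', Function.update_of_ne hx',
            Function.update_of_ne hx]
    have hu2 : unset G e' hGe'2 = pin (⟨c, hc⟩ : QFace n (k + 2)) e he be := by
      apply Subtype.ext
      funext x
      show Function.update (Function.update (Function.update c e (some be)) e' (some be')) e' none x
          = Function.update c e (some be) x
      rw [Function.update_idem]
      by_cases hx' : x = e'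
      · subst hx'
        rw [Function.update_self, Function.update_of_ne (Ne.symm hee), he']
      · rw [Function.update_of_ne hx']
    rw [hu1, hu2] at h0
    exact zmod2_eq_of_add_eq_zero (by rw [← h0]; ring)
  by_cases hdd : d = d'
  · subst hdd
    by_cases hbb : b = b'
    · subst hbb; rfl
    · -- find another active coordinate
      obtain ⟨e, he, hed⟩ : ∃ e, c e = none ∧ e ≠ d := by
        have h2 : 1 < (Finset.univ.filter fun i => c i = none).card := by omega
        obtain ⟨a, ha, a', ha', haa⟩ := Finset.one_lt_card.mp h2
        simp only [Finset.mem_filter, Finset.mem_univ, true_and] at ha ha'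
        by_cases had : a = d
        · exact ⟨a', ha', by rw [← had]; exact Ne.symm haa⟩
        · exact ⟨a, ha, had⟩
      calc z (pin (⟨c, hc⟩ : QFace n (k + 2)) d hd b)
          = z (pin (⟨c, hc⟩ : QFace n (k + 2)) e he true) := core d hd b e he true (Ne.symm hed)
        _ = z (pin (⟨c, hc⟩ : QFace n (k + 2)) d hd b') := core e he true d hd b' hed
  · exact core d hd b d' hd' b' hdd

lemma base {c : Fin n → Option Bool}
    (hc : (Finset.univ.filter fun i => c i = none).card = j + 1)
    (z : QFace n j → ZMod 2) (hsupp : ∀ f, z f ≠ 0 → Sub c f.1)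
    (heq : ∀ (d : Fin n) (hd : c d = none) (b : Bool) (d' : Fin n) (hd' : c d' = none) (b' : Bool),
      z (pin (⟨c, hc⟩ : QFace n (j + 1)) d hd b) = z (pin (⟨c, hc⟩ : QFace n (j + 1)) d' hd' b')) :
    ∃ y : QFace n (j + 1) → ZMod 2, qbdry y = z ∧ (∀ F, y F ≠ 0 → Sub c F.1) ∧
      2 * (j + 1) * vol y ≤ vol z := by
  classical
  set F₀ : QFace n (j + 1) := ⟨c, hc⟩ with hF₀
  have hAne : (Finset.univ.filter fun i => c i = none).Nonempty :=
    Finset.card_pos.mp (by rw [hc]; omega)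
  obtain ⟨d₀, hd₀mem⟩ := hAne
  have hd₀ : c d₀ = none := by
    simpa using hd₀mem
  set w : ZMod 2 := z (pin F₀ d₀ hd₀ true) with hw
  refine ⟨fun F => if F = F₀ then w else 0, ?_, ?_, ?_⟩
  · funext g
    rw [qbdry_eq]
    show (∑ i : Fin n, if hi : g.1 i ≠ none then (if unset g i hi = F₀ then w else 0) else 0) = z g
    have step1 : (∑ i : Fin n, if hi : g.1 i ≠ none then
          (if unset g i hi = F₀ then w else 0) else 0)
        = ∑ i : Fin n, if (g.1 i ≠ none ∧ Function.update g.1 i none = c) then w else 0 := by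
      refine Finset.sum_congr rfl fun i _ => ?_
      by_cases hi : g.1 i ≠ none
      · rw [dif_pos hi]
        by_cases hu : Function.update g.1 i none = c
        · rw [if_pos (show unset g i hi = F₀ from Subtype.ext hu),
            if_pos (show g.1 i ≠ none ∧ Function.update g.1 i none = c from ⟨hi, hu⟩)]
        · rw [if_neg (show ¬(unset g i hi = F₀) from fun hx => hu (congrArg Subtype.val hx)),
            if_neg (show ¬(g.1 i ≠ none ∧ Function.update g.1 i none = c) from fun hx => hu hx.2)]
      · rw [dif_neg hi, if_neg (fun hx => hi hx.1)]
    rw [step1, ← if_exists_eq_sum _ w ?huniq]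
    case huniq =>
      rintro a a' ⟨ha1, ha2⟩ ⟨hb1, hb2⟩
      by_contra hab
      have h1 : Function.update g.1 a none a' = g.1 a' := Function.update_of_ne (Ne.symm hab) _ _
      rw [ha2] at h1
      have h2 : Function.update g.1 a' none a' = none := Function.update_self _ _ _
      rw [hb2] at h2
      rw [h2] at h1
      exact hb1 h1.symm
    by_cases hex : ∃ i, g.1 i ≠ none ∧ Function.update g.1 i none = c
    · rw [if_pos hex]
      obtain ⟨i, hi, hu⟩ := hex
      have hci : c i = none := by rw [← hu, Function.update_self]
      obtain ⟨b, hb⟩ : ∃ b, g.1 i = some b := by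
        cases h : g.1 i with
        | none => exact absurd h hi
        | some v => exact ⟨v, rfl⟩
      have hgeq : g = pin F₀ i hci b := by
        apply Subtype.ext
        funext x
        show g.1 x = Function.update c i (some b) x
        by_cases hx : x = i
        · subst hx; rw [Function.update_self, hb]
        · rw [Function.update_of_ne hx, ← hu, Function.update_of_ne hx]
      rw [hgeq, hw]
      exact (heq i hci b d₀ hd₀ true).symm ▸ (heq d₀ hd₀ true i hci b)
    · rw [if_neg hex]
      by_contra hzg
      have hzg' : z g ≠ 0 := fun h => hzg h.symm
      obtain ⟨d, hd, b, hgeq⟩ := classify hc g (hsupp g hzg')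
      apply hex
      refine ⟨d, ?_, ?_⟩
      · rw [hgeq]
        show Function.update c d (some b) d ≠ none
        rw [Function.update_self]
        exact fun h => nomatch h
      · rw [hgeq]
        show Function.update (Function.update c d (some b)) d none = c
        rw [Function.update_idem]
        funext x
        by_cases hx : x = d
        · subst hx; rw [Function.update_self, hd]
        · rw [Function.update_of_ne hx]
  · intro F hF
    have : F = F₀ := by
      by_contra h
      exact hF (show (if F = F₀ then w else 0) = 0 by rw [if_neg h])
    rw [this]
    intro i v hiv
    exact hiv
  · by_cases hwz : w = 0
    · have : vol (fun F => if F = F₀ then w else 0) = 0 := by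
        unfold vol
        rw [Finset.card_eq_zero]
        ext F
        simp only [Finset.mem_filter, Finset.mem_univ, true_and, Finset.notMem_empty,
          iff_false]
        intro h
        apply h
        show (if F = F₀ then w else 0) = 0
        by_cases hF : F = F₀
        · rw [if_pos hF, hwz]
        · rw [if_neg hF]
      rw [this, Nat.mul_zero]
      exact Nat.zero_le _
    · have hvy : vol (fun F => if F = F₀ then w else 0) ≤ 1 := by
        unfold vol
        calc (Finset.univ.filter fun F => (if F = F₀ then w else 0) ≠ 0).card
            ≤ ({F₀} : Finset (QFace n (j+1))).card := by
              apply Finset.card_le_card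
              intro F hF
              simp only [Finset.mem_filter, Finset.mem_univ, true_and] at hF
              simp only [Finset.mem_singleton]
              by_contra h
              exact hF (show (if F = F₀ then w else 0) = 0 by rw [if_neg h])
          _ = 1 := Finset.card_singleton _
      have hvz : 2 * (j + 1) ≤ vol z := by
        have hinj : ∀ p ∈ (Finset.univ.filter fun i => c i = none) ×ˢ (Finset.univ : Finset Bool),
            (if h : c p.1 = none then pin F₀ p.1 h p.2 else anyPin F₀)
              ∈ Finset.univ.filter fun f : QFace n j => z f ≠ 0 := by
          rintro ⟨d, b⟩ hp
          simp only [Finset.mem_product, Finset.mem_filter, Finset.mem_univ, true_and] at hp ⊢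
          rw [dif_pos hp.1]
          rw [heq d hp.1 b d₀ hd₀ true]
          exact fun h => hwz (hw ▸ h)
        have hcard : ((Finset.univ.filter fun i => c i = none) ×ˢ
            (Finset.univ : Finset Bool)).card = 2 * (j + 1) := by
          rw [Finset.card_product, hc]
          simp [Finset.card_univ]
          ring
        calc 2 * (j + 1) = ((Finset.univ.filter fun i => c i = none) ×ˢ
              (Finset.univ : Finset Bool)).card := hcard.symm
          _ ≤ (Finset.univ.filter fun f : QFace n j => z f ≠ 0).card := by
              apply Finset.card_le_card_of_injOn _ (fun p hp => hinj p hp)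
              rintro ⟨d, b⟩ h1 ⟨d', b'⟩ h2 he
              simp only [Finset.mem_coe, Finset.mem_product, Finset.mem_filter,
                Finset.mem_univ, true_and] at h1 h2
              simp only [] at he
              rw [dif_pos h1.1, dif_pos h2.1] at he
              obtain ⟨hdd, hbb⟩ := pin_inj hc h1.1 h2.1 he
              exact Prod.ext hdd hbb
          _ = vol z := rfl
      calc 2 * (j + 1) * vol (fun F => if F = F₀ then w else 0)
          ≤ 2 * (j + 1) * 1 := Nat.mul_le_mul_left _ hvy
        _ = 2 * (j + 1) := Nat.mul_one _
        _ ≤ vol z := hvz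

lemma qbdry_cyl (d : Fin n) (b : Bool) {j : ℕ} (z : QFace n j → ZMod 2)
    (hz : IsQCycle n j z) : qbdry (cyl d b z) = z + proj d b z := by
  match j, z, hz with
  | 0, z, hz => exact qbdry_cyl_zero d b z
  | (jj+1), z, hz => exact qbdry_cyl_succ d b z hz

lemma cycle_proj (d : Fin n) (b : Bool) {j : ℕ} (z : QFace n j → ZMod 2)
    (hz : IsQCycle n j z) : IsQCycle n j (proj d b z) := by
  match j, z, hz with
  | 0, z, hz =>
    obtain ⟨w, hw⟩ := hz
    refine ⟨cyl d b z + w, ?_⟩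
    rw [qbdry_add, qbdry_cyl_zero d b z, hw]
    funext g
    show (z g + proj d b z g) + z g = proj d b z g
    rw [add_comm (z g) (proj d b z g), add_assoc, zmod2_add_self, add_zero]
  | (jj+1), z, hz =>
    show qbdry (proj d b z) = 0
    have hproj : proj d b z = z + qbdry (cyl d b z) := by
      rw [qbdry_cyl_succ d b z hz]
      funext g
      show proj d b z g = z g + (z g + proj d b z g)
      rw [← add_assoc, zmod2_add_self, zero_add]
    rw [hproj, qbdry_add, hz, qbdry_qbdry, zero_add]

lemma sub_of_sub_update {c : Fin n → Option Bool} {d : Fin n} (hd : c d = none) {b : Bool}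
    {f : Fin n → Option Bool} (h : Sub (Function.update c d (some b)) f) : Sub c f := by
  intro i v hiv
  have hid : i ≠ d := fun he => by rw [he, hd] at hiv; exact nomatch hiv
  exact h i v (by rw [Function.update_of_ne hid]; exact hiv)

lemma key (j : ℕ) (k : ℕ) : ∀ (c : Fin n → Option Bool) (z : QFace n j → ZMod 2),
    (Finset.univ.filter fun i => c i = none).card = j + 1 + k →
    IsQCycle n j z → (∀ f, z f ≠ 0 → Sub c f.1) →
    ∃ y : QFace n (j + 1) → ZMod 2, qbdry y = z ∧ (∀ F, y F ≠ 0 → Sub c F.1) ∧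
      2 * (j + 1) * vol y ≤ (k + 1) * vol z := by
  classical
  induction k with
  | zero =>
    intro c z hc hz hsupp
    have hc' : (Finset.univ.filter fun i => c i = none).card = j + 1 := by omega
    have heq : ∀ (d : Fin n) (hd : c d = none) (b : Bool) (d' : Fin n) (hd' : c d' = none)
        (b' : Bool), z (pin (⟨c, hc'⟩ : QFace n (j + 1)) d hd b)
          = z (pin (⟨c, hc'⟩ : QFace n (j + 1)) d' hd' b') := by
      match j, z, hz with
      | 0, z, hz => exact heq_zero hc' z hz hsupp
      | (jj+1), z, hz => exact heq_succ hc' z hz hsupp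
    obtain ⟨y, h1, h2, h3⟩ := base hc' z hsupp heq
    exact ⟨y, h1, h2, by rw [zero_add, one_mul]; exact h3⟩
  | succ k ih =>
    intro c z hc hz hsupp
    set A := Finset.univ.filter fun i => c i = none with hA
    have hAne : A.Nonempty := Finset.card_pos.mp (by rw [hc]; omega)
    -- pigeonhole over directions and sides
    have hcylsum : (∑ p ∈ A ×ˢ (Finset.univ : Finset Bool), vol (cyl p.1 p.2 z))
        ≤ (k + 2) * vol z := by
      calc (∑ p ∈ A ×ˢ (Finset.univ : Finset Bool), vol (cyl p.1 p.2 z))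
          ≤ ∑ p ∈ A ×ˢ (Finset.univ : Finset Bool),
              (Finset.univ.filter fun f : QFace n j =>
                z f ≠ 0 ∧ f.1 p.1 = some (!p.2)).card :=
            Finset.sum_le_sum fun p _ => vol_cyl_le p.1 p.2 z
        _ = ∑ d ∈ A, ∑ b : Bool, (Finset.univ.filter fun f : QFace n j =>
              z f ≠ 0 ∧ f.1 d = some (!b)).card := by rw [Finset.sum_product]
        _ = ∑ d ∈ A, (Finset.univ.filter fun f : QFace n j =>
              z f ≠ 0 ∧ f.1 d ≠ none).card :=
            Finset.sum_congr rfl fun d _ => split_bool_card d z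
        _ = (j + 1 + (k + 1) - j) * vol z := sum_active_card c (j + 1 + (k + 1)) hc z hsupp
        _ = (k + 2) * vol z := by congr 1; omega
    have hprojsum : (∑ p ∈ A ×ˢ (Finset.univ : Finset Bool), vol (proj p.1 p.2 z))
        ≤ 2 * ((k + 2) * vol z) := by
      calc (∑ p ∈ A ×ˢ (Finset.univ : Finset Bool), vol (proj p.1 p.2 z))
          ≤ ∑ p ∈ A ×ˢ (Finset.univ : Finset Bool),
              (Finset.univ.filter fun f : QFace n j =>
                z f ≠ 0 ∧ f.1 p.1 ≠ none).card :=
            Finset.sum_le_sum fun p _ => vol_proj_le p.1 p.2 z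
        _ = ∑ d ∈ A, ∑ _b : Bool, (Finset.univ.filter fun f : QFace n j =>
              z f ≠ 0 ∧ f.1 d ≠ none).card := by rw [Finset.sum_product]
        _ = 2 * ∑ d ∈ A, (Finset.univ.filter fun f : QFace n j =>
              z f ≠ 0 ∧ f.1 d ≠ none).card := by
            rw [Finset.mul_sum]
            refine Finset.sum_congr rfl fun d _ => ?_
            rw [Fintype.sum_bool, two_mul]
        _ = 2 * ((j + 1 + (k + 1) - j) * vol z) := by
            rw [sum_active_card c (j + 1 + (k + 1)) hc z hsupp]
        _ = 2 * ((k + 2) * vol z) := by congr 2; omega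
    have hLsum : (∑ p ∈ A ×ˢ (Finset.univ : Finset Bool),
        (2 * (j + 1) * vol (cyl p.1 p.2 z) + (k + 1) * vol (proj p.1 p.2 z)))
        ≤ ∑ _p ∈ A ×ˢ (Finset.univ : Finset Bool), ((k + 2) * vol z) := by
      rw [Finset.sum_add_distrib, ← Finset.mul_sum, ← Finset.mul_sum]
      rw [Finset.sum_const, smul_eq_mul, Finset.card_product]
      have hcA : A.card = j + k + 2 := by rw [hc]; omega
      have hcb : (Finset.univ : Finset Bool).card = 2 := by simp
      rw [hcA, hcb]
      calc 2 * (j + 1) * (∑ p ∈ A ×ˢ (Finset.univ : Finset Bool), vol (cyl p.1 p.2 z))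
            + (k + 1) * (∑ p ∈ A ×ˢ (Finset.univ : Finset Bool), vol (proj p.1 p.2 z))
          ≤ 2 * (j + 1) * ((k + 2) * vol z) + (k + 1) * (2 * ((k + 2) * vol z)) := by
            exact Nat.add_le_add (Nat.mul_le_mul_left _ hcylsum) (Nat.mul_le_mul_left _ hprojsum)
        _ = (j + k + 2) * 2 * ((k + 2) * vol z) := by ring
    obtain ⟨p, hp, hL⟩ := Finset.exists_le_of_sum_le
      (Finset.Nonempty.product hAne ⟨true, Finset.mem_univ _⟩) hLsum
    obtain ⟨d, b⟩ := p
    have hd : c d = none := by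
      have := (Finset.mem_product.mp hp).1
      simpa [hA] using this
    -- recursive call on the projected cycle
    have hc' : (Finset.univ.filter fun i => Function.update c d (some b) i = none).card
        = j + 1 + k := by
      rw [filter_update_some]
      rw [Finset.card_erase_of_mem (by simp [hd]), hc]
      omega
    obtain ⟨y', hy'1, hy'2, hy'3⟩ := ih (Function.update c d (some b)) (proj d b z) hc'
      (cycle_proj d b z hz) (supp_proj d hd b z hsupp)
    have hcylbd : qbdry (cyl d b z) = z + proj d b z := qbdry_cyl d b z hz
    refine ⟨cyl d b z + y', ?_, ?_, ?_⟩
    · rw [qbdry_add, hcylbd, hy'1]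
      funext g
      show (z g + proj d b z g) + proj d b z g = z g
      rw [add_assoc, zmod2_add_self, add_zero]
    · intro F hF
      by_cases hcF : cyl d b z F ≠ 0
      · exact supp_cyl d hd b z hsupp F hcF
      · push_neg at hcF
        have hyF : y' F ≠ 0 := by
          intro h0
          apply hF
          show cyl d b z F + y' F = 0
          rw [hcF, h0, add_zero]
        exact sub_of_sub_update hd (hy'2 F hyF)
    · calc 2 * (j + 1) * vol (cyl d b z + y')
          ≤ 2 * (j + 1) * (vol (cyl d b z) + vol y') :=
            Nat.mul_le_mul_left _ (vol_add_le _ _)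
        _ = 2 * (j + 1) * vol (cyl d b z) + 2 * (j + 1) * vol y' := by ring
        _ ≤ 2 * (j + 1) * vol (cyl d b z) + (k + 1) * vol (proj d b z) :=
            Nat.add_le_add_left hy'3 _
        _ ≤ (k + 2) * vol z := hL
        _ = (k + 1 + 1) * vol z := by ring

end CubeFill

/-- for `n ≥ 1` and `0 ≤ j ≤ n - 1`, every `j`-cycle `z` in the
`n`-cube (with `ZMod 2` coefficients) is filled by a `(j+1)`-chain `y` with
`∂y = z` and `vol_{j+1}(y) ≤ ((n-j)/(2(j+1)))·vol_j(z)`. -/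
theorem cube_filling (n j : ℕ) (hn : 1 ≤ n) (hj : j ≤ n - 1)
    (z : QFace n j → ZMod 2) (hz : IsQCycle n j z) :
    ∃ y : QFace n (j + 1) → ZMod 2, qbdry y = z ∧
      (vol y : ℝ) ≤ (((n : ℝ) - j) / (2 * ((j : ℝ) + 1))) * (vol z : ℝ) := by
  classical
  have hjn : j + 1 ≤ n := by omega
  set k : ℕ := n - 1 - j with hk
  have hc : (Finset.univ.filter fun i => (fun _ : Fin n => (none : Option Bool)) i = none).card
      = j + 1 + k := by
    rw [Finset.filter_true_of_mem (fun _ _ => rfl), Finset.card_univ, Fintype.card_fin]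
    omega
  obtain ⟨y, h1, _, h3⟩ := CubeFill.key j k (fun _ => none) z hc hz
    (fun f _ => fun i v hiv => nomatch hiv)
  refine ⟨y, h1, ?_⟩
  have hcast : ((2 * (j + 1) * vol y : ℕ) : ℝ) ≤ (((k + 1) * vol z : ℕ) : ℝ) :=
    Nat.cast_le.mpr h3
  push_cast at hcast
  have hk1 : ((k : ℝ) + 1) = (n : ℝ) - j := by
    have : k + 1 + j = n := by omega
    have := congrArg (fun m : ℕ => (m : ℝ)) this
    push_cast at this
    linarith
  rw [div_mul_eq_mul_div, le_div_iff₀ (by positivity)]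
  nlinarith [hcast, hk1]
end

section
/- Let n ≥ 1 and k ≥ 1 with k + 1 ≤ n − 1. For every k-cochain β on the n-dimensional cross-polytope there exists a (k−1)-cochain α such that ‖β + dα‖ ≤ ((k+2)/(2(n−k−1))) · ‖dβ‖. Consequently the k-th coboundary expansion of the cross-polytope satisfies h^k ≥ 2(n−k−1)/(k+2), i.e., for every k-cochain β that is not a coboundary, ‖dβ‖ ≥ (2(n−k−1)/(k+2)) · ‖[β]‖. -/
/-- A face of the `n`-dimensional cross-polytope, indexed by the number of its
vertices: an element of `XFace n m` is a pair `(S, s)` of an `m`-element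
subset `S ⊆ {1, …, n}` together with a sign `s : S → {+1, -1}`, encoded as a
function `f : Fin n → Option Bool` with exactly `m` coordinates not equal to
`none` (`some true` = `+1`, `some false` = `-1`).  Thus `XFace n (k+1)` is the
set of `k`-dimensional faces. -/
abbrev XFace (n m : ℕ) : Type :=
  {f : Fin n → Option Bool // (Finset.univ.filter fun i => f i ≠ none).card = m}

/-- The coboundary map of the cross-polytope: for a cochain `β` on faces with
`m` vertices, `xd β` evaluated on a face `g` with `m+1` vertices is the sum of
`β f` over the `m+1` faces `f` obtained from `g` by deleting one vertex (with
the signs of the remaining vertices retained). -/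
def xd {n m : ℕ} (β : XFace n m → ZMod 2) : XFace n (m + 1) → ZMod 2 :=
  fun g => ∑ f : XFace n m,
    if ∃ i, g.1 i ≠ none ∧ f.1 = Function.update g.1 i none then β f else 0

/-- A `k`-cochain (on faces with `k+1` vertices) is a coboundary if it is
`dα` for some `(k-1)`-cochain `α`. -/
def IsXCob {n k : ℕ} (β : XFace n (k + 1) → ZMod 2) : Prop :=
  ∃ α : XFace n k → ZMod 2, xd α = β

/-- The quotient norm `‖[β]‖ = min_α ‖β + dα‖` of a `k`-cochain on the
cross-polytope. -/
noncomputable def xqnorm {n k : ℕ} (β : XFace n (k + 1) → ZMod 2) : ℕ :=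
  sInf {m | ∃ α : XFace n k → ZMod 2, m = cnorm (β + xd α)}

namespace CrossAux

open Finset Function

variable {n : ℕ}

def sup (f : Fin n → Option Bool) : Finset (Fin n) :=
  Finset.univ.filter fun i => f i ≠ none

def wt (f : Fin n → Option Bool) : ℕ := (sup f).card

lemma mem_sup {f : Fin n → Option Bool} {i : Fin n} : i ∈ sup f ↔ f i ≠ none := by
  simp [sup]

lemma sup_update_none {f : Fin n → Option Bool} {i : Fin n} :
    sup (update f i none) = (sup f).erase i := by
  ext j
  by_cases h : j = i <;> simp [sup, update_apply, h]

lemma sup_update_some {f : Fin n → Option Bool} {i : Fin n} {b : Bool} (h : f i = none) :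
    sup (update f i (some b)) = insert i (sup f) := by
  ext j
  by_cases hj : j = i <;> simp [sup, update_apply, hj, h]

lemma sup_update_some' {f : Fin n → Option Bool} {i : Fin n} {b : Bool} (h : f i ≠ none) :
    sup (update f i (some b)) = sup f := by
  ext j
  by_cases hj : j = i <;> simp [sup, update_apply, hj, h]

lemma wt_update_none {f : Fin n → Option Bool} {i : Fin n} (h : i ∈ sup f) :
    wt (update f i none) = wt f - 1 := by
  rw [wt, sup_update_none, Finset.card_erase_of_mem h]; rfl

lemma wt_update_some {f : Fin n → Option Bool} {i : Fin n} {b : Bool} (h : f i = none) :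
    wt (update f i (some b)) = wt f + 1 := by
  rw [wt, sup_update_some h, Finset.card_insert_of_notMem (by simp [mem_sup, h])]; rfl

def ext {m : ℕ} (β : XFace n m → ZMod 2) : (Fin n → Option Bool) → ZMod 2 :=
  fun f => if h : (Finset.univ.filter fun i => f i ≠ none).card = m then β ⟨f, h⟩ else 0

lemma ext_apply {m : ℕ} (β : XFace n m → ZMod 2) (g : XFace n m) : ext β g.1 = β g := by
  rw [ext, dif_pos g.2]

lemma ext_ne_zero {m : ℕ} {β : XFace n m → ZMod 2} {f : Fin n → Option Bool}
    (h : ext β f ≠ 0) : wt f = m := by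
  by_contra h'
  have h'' : ¬ (Finset.univ.filter fun i => f i ≠ none).card = m := h'
  rw [ext, dif_neg h''] at h
  exact h rfl

lemma ext_add {m : ℕ} (β γ : XFace n m → ZMod 2) : ext (β + γ) = ext β + ext γ := by
  funext f
  by_cases h : (Finset.univ.filter fun i => f i ≠ none).card = m <;>
    simp [ext, h]

def Dop (B : (Fin n → Option Bool) → ZMod 2) : (Fin n → Option Bool) → ZMod 2 :=
  fun h => ∑ i ∈ sup h, B (Function.update h i none)


lemma wt_del {m : ℕ} (g : XFace n (m+1)) {i : Fin n} (hi : i ∈ sup g.1) :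
    (Finset.univ.filter fun j => Function.update g.1 i none j ≠ none).card = m := by
  have : wt (update g.1 i none) = wt g.1 - 1 := wt_update_none hi
  have hg : wt g.1 = m + 1 := g.2
  rw [hg] at this
  exact this

lemma xd_apply {m : ℕ} (β : XFace n m → ZMod 2) (g : XFace n (m+1)) :
    xd β g = Dop (ext β) g.1 := by
  rw [xd, Dop, ← Finset.sum_filter]
  symm
  refine Finset.sum_bij (fun i hi => (⟨Function.update g.1 i none, wt_del g hi⟩ : XFace n m))
    ?_ ?_ ?_ ?_
  · intro a ha
    simp only [Finset.mem_filter, Finset.mem_univ, true_and]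
    exact ⟨a, mem_sup.1 ha, rfl⟩
  · intro a₁ ha₁ a₂ ha₂ hmap
    by_contra hne
    have e : (none : Option Bool) = g.1 a₁ := by
      have hmm := congrArg (fun x : XFace n m => x.1 a₁) hmap
      simpa [update_apply, hne] using hmm
    exact (mem_sup.1 ha₁) e.symm
  · intro f hf
    simp only [Finset.mem_filter, Finset.mem_univ, true_and] at hf
    obtain ⟨i, hi, hfi⟩ := hf
    exact ⟨i, mem_sup.2 hi, Subtype.ext hfi.symm⟩
  · intro a ha
    exact ext_apply β ⟨_, wt_del g ha⟩

lemma ext_xd {m : ℕ} (β : XFace n m → ZMod 2) : ext (xd β) = Dop (ext β) := by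
  funext f
  by_cases h : (Finset.univ.filter fun i => f i ≠ none).card = m + 1
  · rw [ext, dif_pos h]
    exact xd_apply β ⟨f, h⟩
  · rw [ext, dif_neg h]
    symm
    apply Finset.sum_eq_zero
    intro i hi
    by_contra hne
    have h1 : wt (update f i none) = m := ext_ne_zero hne
    have h2 : wt (update f i none) = wt f - 1 := wt_update_none hi
    have h3 : wt f ≠ 0 := Finset.card_ne_zero_of_mem hi
    have : wt f = m + 1 := by omega
    exact h this

lemma Dop_Dop (B : (Fin n → Option Bool) → ZMod 2) (f : Fin n → Option Bool) :
    Dop (Dop B) f = 0 := by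
  rw [Dop]
  have : ∀ i ∈ sup f, Dop B (update f i none)
      = ∑ i' ∈ (sup f).erase i, B (update (update f i none) i' none) := by
    intro i hi
    rw [Dop, sup_update_none]
  rw [Finset.sum_congr rfl this, Finset.sum_sigma' (sup f) (fun i => (sup f).erase i)]
  refine Finset.sum_involution (fun x _ => ⟨x.2, x.1⟩) ?_ ?_ ?_ ?_
  · intro a ha
    have hne : a.2 ≠ a.1 := by
      have := (Finset.mem_sigma.1 ha).2
      exact (Finset.mem_erase.1 this).1
    have : update (update f a.1 none) a.2 none = update (update f a.2 none) a.1 none :=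
      Function.update_comm (fun h => hne h.symm) none none f
    rw [this]
    have h2 : (2 : ZMod 2) = 0 := by decide
    rw [← two_mul, h2, zero_mul]
  · intro a ha _
    have hne : a.2 ≠ a.1 := (Finset.mem_erase.1 (Finset.mem_sigma.1 ha).2).1
    intro hc
    have := congrArg Sigma.fst hc
    simp at this
    exact hne this
  · intro a ha
    have h := Finset.mem_sigma.1 ha
    refine Finset.mem_sigma.2 ⟨?_, ?_⟩
    · exact Finset.mem_of_mem_erase h.2
    · exact Finset.mem_erase.2 ⟨fun hc => (Finset.mem_erase.1 h.2).1 hc.symm, h.1⟩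
  · intro a ha
    rfl

lemma xd_xd {m : ℕ} (α : XFace n m → ZMod 2) : xd (xd α) = 0 := by
  funext g
  have h1 : ext (xd (xd α)) g.1 = xd (xd α) g := ext_apply _ g
  rw [ext_xd, ext_xd] at h1
  rw [← h1, Dop_Dop]
  rfl

lemma xd_add {m : ℕ} (β γ : XFace n m → ZMod 2) : xd (β + γ) = xd β + xd γ := by
  funext g
  simp only [xd, Pi.add_apply, ← Finset.sum_add_distrib]
  apply Finset.sum_congr rfl
  intro f _
  split <;> simp

lemma cnorm_ext {m : ℕ} (β : XFace n m → ZMod 2) :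
    cnorm β = (Finset.univ.filter fun f : Fin n → Option Bool => ext β f ≠ 0).card := by
  rw [cnorm]
  refine Finset.card_bij (fun g _ => g.1) ?_ ?_ ?_
  · intro a ha
    simp only [Finset.mem_filter, Finset.mem_univ, true_and] at ha ⊢
    rw [ext_apply]
    exact ha
  · intro a₁ _ a₂ _ h
    exact Subtype.ext h
  · intro f hf
    simp only [Finset.mem_filter, Finset.mem_univ, true_and] at hf
    have hw : (Finset.univ.filter fun i => f i ≠ none).card = m := ext_ne_zero hf
    refine ⟨⟨f, hw⟩, ?_, rfl⟩
    simp only [Finset.mem_filter, Finset.mem_univ, true_and]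
    rw [← ext_apply β ⟨f, hw⟩]
    exact hf


open scoped Classical in
lemma card_filter_sum (S : Finset (Fin n → Option Bool)) (w : ℕ)
    (hw : ∀ f ∈ S, wt f = w) :
    ∑ j : Fin n, (S.filter fun f => f j ≠ none).card = w * S.card := by
  have h1 : ∀ j : Fin n, (S.filter fun f => f j ≠ none).card
      = ∑ f ∈ S, if f j ≠ none then 1 else 0 := by
    intro j; rw [Finset.card_filter]
  rw [Finset.sum_congr rfl fun j _ => h1 j, Finset.sum_comm]
  have h2 : ∀ f ∈ S, (∑ j : Fin n, if f j ≠ none then 1 else 0) = w := by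
    intro f hf
    rw [← Finset.card_filter]
    exact (hw f hf)
  rw [Finset.sum_congr rfl h2, Finset.sum_const, smul_eq_mul, mul_comm]

open scoped Classical in
lemma split_bool (S : Finset (Fin n → Option Bool)) (j : Fin n) :
    (S.filter fun f => f j ≠ none).card
      = (S.filter fun f => f j = some true).card + (S.filter fun f => f j = some false).card := by
  rw [← Finset.card_union_of_disjoint, ← Finset.filter_or]
  · apply congrArg
    apply Finset.filter_congr
    intro f _
    cases hf : f j with
    | none => simp
    | some c => cases c <;> simp
  · rw [Finset.disjoint_left]
    intro f h1 h2
    rw [Finset.mem_filter] at h1 h2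
    rw [h1.2] at h2
    simpa using h2.2

open scoped Classical in
lemma card_update_bij (j : Fin n) (u v : Option Bool)
    (Q : (Fin n → Option Bool) → Prop) :
    (Finset.univ.filter fun g => g j = u ∧ Q (update g j v)).card
      = (Finset.univ.filter fun h => h j = v ∧ Q h).card := by
  refine Finset.card_bij' (fun g _ => update g j v) (fun h _ => update h j u) ?_ ?_ ?_ ?_
  · intro g hg
    rw [Finset.mem_filter] at hg ⊢
    refine ⟨Finset.mem_univ _, by simp, hg.2.2⟩
  · intro h hh
    rw [Finset.mem_filter] at hh ⊢
    refine ⟨Finset.mem_univ _, by simp, ?_⟩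
    rw [Function.update_idem]
    have : update h j v = h := by
      conv_lhs => rw [← hh.2.1]
      exact Function.update_eq_self j h
    rw [this]
    exact hh.2.2
  · intro g hg
    rw [Finset.mem_filter] at hg
    show update (update g j v) j u = g
    rw [Function.update_idem]
    conv_lhs => rw [← hg.2.1]
    exact Function.update_eq_self j g
  · intro h hh
    rw [Finset.mem_filter] at hh
    show update (update h j u) j v = h
    rw [Function.update_idem]
    conv_lhs => rw [← hh.2.1]
    exact Function.update_eq_self j h


variable {k : ℕ}

def alphaV (β₀ : XFace n (k+1) → ZMod 2) (j : Fin n) (b : Bool) : XFace n k → ZMod 2 :=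
  fun f => ext β₀ (update f.1 j (some b))

lemma ext_alphaV (β₀ : XFace n (k+1) → ZMod 2) (j : Fin n) (b : Bool)
    {f : Fin n → Option Bool} (hf : wt f = k) :
    ext (alphaV β₀ j b) f = ext β₀ (update f j (some b)) := by
  have hf' : (Finset.univ.filter fun i => f i ≠ none).card = k := hf
  rw [ext, dif_pos hf']
  rfl

lemma DAv (β₀ : XFace n (k+1) → ZMod 2) (j : Fin n) (b : Bool)
    (f : Fin n → Option Bool) (hwt : wt f = k + 1) :
    Dop (ext (alphaV β₀ j b)) f
      = ∑ i ∈ sup f, ext β₀ (update (update f i none) j (some b)) := by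
  rw [Dop]
  apply Finset.sum_congr rfl
  intro i hi
  apply ext_alphaV
  have h := wt_update_none hi
  rw [hwt] at h
  simpa using h

lemma vanish (β₀ : XFace n (k+1) → ZMod 2) (j : Fin n) (b : Bool)
    (f : Fin n → Option Bool) (hwt : wt f = k + 1) {i : Fin n} (hi : i ∈ sup f)
    (hij : i ≠ j) (hj : f j ≠ none) :
    ext β₀ (update (update f i none) j (some b)) = 0 := by
  by_contra h
  have h1 : wt (update (update f i none) j (some b)) = k + 1 := ext_ne_zero h
  have hji : (update f i none) j ≠ none := by
    rw [update_apply, if_neg (fun e => hij e.symm)]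
    exact hj
  have h2 : wt (update (update f i none) j (some b)) = wt (update f i none) := by
    rw [wt, sup_update_some' hji]
    rfl
  have h3 : wt (update f i none) = k := by
    have h4 := wt_update_none hi
    rw [hwt] at h4
    simpa using h4
  omega

lemma caseBC (β₀ : XFace n (k+1) → ZMod 2) (j : Fin n) (b : Bool)
    (f : Fin n → Option Bool) (hwt : wt f = k + 1) (hj : f j ≠ none) :
    Dop (ext (alphaV β₀ j b)) f = ext β₀ (update f j (some b)) := by
  rw [DAv β₀ j b f hwt]
  rw [Finset.sum_eq_single_of_mem j (mem_sup.2 hj)]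
  · rw [Function.update_idem]
  · intro i hi hij
    exact vanish β₀ j b f hwt hi hij hj

lemma caseA (β₀ : XFace n (k+1) → ZMod 2) (j : Fin n) (b : Bool)
    (f : Fin n → Option Bool) (hwt : wt f = k + 1) (hj : f j = none) :
    Dop (ext β₀) (update f j (some b)) = ext β₀ f + Dop (ext (alphaV β₀ j b)) f := by
  rw [Dop, sup_update_some hj, Finset.sum_insert (by simp [mem_sup, hj])]
  congr 1
  · rw [Function.update_idem]
    have h0 : update f j none = f := by
      conv_lhs => rw [← hj]
      exact Function.update_eq_self j f
    rw [h0]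
  · rw [DAv β₀ j b f hwt]
    apply Finset.sum_congr rfl
    intro i hi
    have hji : j ≠ i := by
      intro e
      exact (mem_sup.1 hi) (e ▸ hj)
    rw [Function.update_comm hji (some b) none f]

lemma supp_subset (β₀ : XFace n (k+1) → ZMod 2) (j : Fin n) (b : Bool) :
    (Finset.univ.filter fun f => ext (β₀ + xd (alphaV β₀ j b)) f ≠ 0) ⊆
      (Finset.univ.filter fun g => g j = none ∧ Dop (ext β₀) (update g j (some b)) ≠ 0) ∪
      (Finset.univ.filter fun g => g j = some (!b) ∧
        (ext β₀ g ≠ 0 ∨ ext β₀ (update g j (some b)) ≠ 0)) := by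
  classical
  intro f hf
  rw [Finset.mem_filter] at hf
  have hf2 := hf.2
  have hwt : wt f = k + 1 := ext_ne_zero hf2
  have hval : ext (β₀ + xd (alphaV β₀ j b)) f = ext β₀ f + Dop (ext (alphaV β₀ j b)) f := by
    rw [ext_add, Pi.add_apply, ext_xd]
  rw [hval] at hf2
  rcases hcase : f j with _ | c
  · apply Finset.mem_union_left
    rw [Finset.mem_filter]
    refine ⟨Finset.mem_univ _, hcase, ?_⟩
    rw [caseA β₀ j b f hwt hcase]
    exact hf2
  · by_cases hcb : c = b
    · exfalso
      have h1 : Dop (ext (alphaV β₀ j b)) f = ext β₀ (update f j (some b)) :=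
        caseBC β₀ j b f hwt (by rw [hcase]; simp)
      have h2 : update f j (some b) = f := by
        rw [← hcb, ← hcase]
        exact Function.update_eq_self j f
      rw [h1, h2] at hf2
      apply hf2
      rw [← two_mul]
      have h3 : (2 : ZMod 2) = 0 := by decide
      rw [h3, zero_mul]
    · apply Finset.mem_union_right
      rw [Finset.mem_filter]
      have hcb' : c = !b := by cases c <;> cases b <;> simp_all
      refine ⟨Finset.mem_univ _, by rw [hcase, hcb'], ?_⟩
      have h1 : Dop (ext (alphaV β₀ j b)) f = ext β₀ (update f j (some b)) :=
        caseBC β₀ j b f hwt (by rw [hcase]; simp)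
      rw [h1] at hf2
      by_contra hc
      push_neg at hc
      exact hf2 (by rw [hc.1, hc.2, add_zero])


open Classical in
noncomputable def Aset (B : (Fin n → Option Bool) → ZMod 2) (j : Fin n) (b : Bool) :
    Finset (Fin n → Option Bool) :=
  Finset.univ.filter fun g => g j = none ∧ Dop B (update g j (some b)) ≠ 0

open Classical in
noncomputable def Cset (B : (Fin n → Option Bool) → ZMod 2) (j : Fin n) (b : Bool) :
    Finset (Fin n → Option Bool) :=
  Finset.univ.filter fun g => g j = some (!b) ∧ (B g ≠ 0 ∨ B (update g j (some b)) ≠ 0)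

lemma supp_subset' (β₀ : XFace n (k+1) → ZMod 2) (j : Fin n) (b : Bool) :
    (Finset.univ.filter fun f => ext (β₀ + xd (alphaV β₀ j b)) f ≠ 0) ⊆
      Aset (ext β₀) j b ∪ Cset (ext β₀) j b := by
  intro f hf
  have h := supp_subset β₀ j b hf
  simp only [Finset.mem_union, Finset.mem_filter, Finset.mem_univ, true_and] at h
  simp only [Aset, Cset, Finset.mem_union, Finset.mem_filter, Finset.mem_univ, true_and]
  exact h

open Classical in
lemma sum_Aset (B : (Fin n → Option Bool) → ZMod 2) (w : ℕ)
    (hw : ∀ h ∈ (Finset.univ.filter fun h : Fin n → Option Bool => Dop B h ≠ 0), wt h = w) :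
    ∑ v : Fin n × Bool, (Aset B v.1 v.2).card
      = w * (Finset.univ.filter fun h : Fin n → Option Bool => Dop B h ≠ 0).card := by
  rw [Fintype.sum_prod_type]
  set SD := Finset.univ.filter fun h : Fin n → Option Bool => Dop B h ≠ 0 with hSD
  have h1 : ∀ (j : Fin n) (b : Bool),
      (Aset B j b).card = (SD.filter fun h => h j = some b).card := by
    intro j b
    have h0 : (Aset B j b).card
        = (Finset.univ.filter fun h : Fin n → Option Bool =>
            h j = some b ∧ Dop B h ≠ 0).card := by
      have hb := card_update_bij j none (some b) (fun h => Dop B h ≠ 0)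
      rw [Aset]
      convert hb using 2 <;> (ext x; simp only [Finset.mem_filter])
    rw [h0]
    congr 1
    ext h
    simp only [Finset.mem_filter, Finset.mem_univ, true_and, hSD]
    tauto
  have h2 : ∀ j : Fin n, (∑ b : Bool, (Aset B j b).card)
      = (SD.filter fun h => h j ≠ none).card := by
    intro j
    rw [Fintype.sum_bool, h1, h1, split_bool]
  rw [Finset.sum_congr rfl fun j _ => h2 j]
  exact card_filter_sum SD w hw

open Classical in
lemma sum_Cset (B : (Fin n → Option Bool) → ZMod 2) (w : ℕ)
    (hw : ∀ h ∈ (Finset.univ.filter fun h : Fin n → Option Bool => B h ≠ 0), wt h = w) :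
    ∑ v : Fin n × Bool, (Cset B v.1 v.2).card
      ≤ 2 * (w * (Finset.univ.filter fun h : Fin n → Option Bool => B h ≠ 0).card) := by
  rw [Fintype.sum_prod_type]
  set SB := Finset.univ.filter fun h : Fin n → Option Bool => B h ≠ 0 with hSB
  set Y : Fin n → Bool → ℕ := fun j c => (SB.filter fun g => g j = some c).card with hY
  have h1 : ∀ (j : Fin n) (b : Bool), (Cset B j b).card ≤ Y j (!b) + Y j b := by
    intro j b
    have hc1 : (Cset B j b).card ≤
        ((Finset.univ.filter fun g : Fin n → Option Bool => g j = some (!b) ∧ B g ≠ 0) ∪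
         (Finset.univ.filter fun g : Fin n → Option Bool =>
            g j = some (!b) ∧ B (update g j (some b)) ≠ 0)).card := by
      apply Finset.card_le_card
      intro g hg
      simp only [Cset, Finset.mem_filter, Finset.mem_univ, true_and] at hg
      rcases hg.2 with h | h
      · exact Finset.mem_union_left _ (by
          simp only [Finset.mem_filter, Finset.mem_univ, true_and]; exact ⟨hg.1, h⟩)
      · exact Finset.mem_union_right _ (by
          simp only [Finset.mem_filter, Finset.mem_univ, true_and]; exact ⟨hg.1, h⟩)
    have hc2 : ((Finset.univ.filter fun g : Fin n → Option Bool =>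
          g j = some (!b) ∧ B g ≠ 0)).card = Y j (!b) := by
      rw [hY]
      congr 1
      ext g
      simp only [Finset.mem_filter, Finset.mem_univ, true_and, hSB]
      tauto
    have hc3 : ((Finset.univ.filter fun g : Fin n → Option Bool =>
          g j = some (!b) ∧ B (update g j (some b)) ≠ 0)).card = Y j b := by
      have hb := card_update_bij j (some (!b)) (some b) (fun h => B h ≠ 0)
      have hb2 : (Finset.univ.filter fun g : Fin n → Option Bool =>
          g j = some (!b) ∧ B (update g j (some b)) ≠ 0).card
          = (Finset.univ.filter fun h : Fin n → Option Bool =>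
              h j = some b ∧ B h ≠ 0).card := by convert hb using 2 <;> (ext x; simp only [Finset.mem_filter])
      rw [hb2, hY]
      congr 1
      ext g
      simp only [Finset.mem_filter, Finset.mem_univ, true_and, hSB]
      tauto
    calc (Cset B j b).card ≤ _ := hc1
      _ ≤ _ := Finset.card_union_le _ _
      _ = Y j (!b) + Y j b := by rw [hc2, hc3]
  have h2 : ∀ j : Fin n, (∑ b : Bool, (Y j (!b) + Y j b))
      = 2 * (SB.filter fun g => g j ≠ none).card := by
    intro j
    rw [Fintype.sum_bool, split_bool SB j]
    simp only [Bool.not_true, Bool.not_false]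
    ring
  calc ∑ j : Fin n, ∑ b : Bool, (Cset B j b).card
      ≤ ∑ j : Fin n, ∑ b : Bool, (Y j (!b) + Y j b) :=
        Finset.sum_le_sum fun j _ => Finset.sum_le_sum fun b _ => h1 j b
    _ = ∑ j : Fin n, 2 * (SB.filter fun g => g j ≠ none).card :=
        Finset.sum_congr rfl fun j _ => h2 j
    _ = 2 * ∑ j : Fin n, (SB.filter fun g => g j ≠ none).card := by
        rw [Finset.mul_sum]
    _ = 2 * (w * SB.card) := by rw [card_filter_sum SB w hw]


open Classical in
lemma key (hn2 : k + 2 ≤ n) (β : XFace n (k+1) → ZMod 2) :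
    ∃ α : XFace n k → ZMod 2,
      2 * (n - k - 1) * cnorm (β + xd α) ≤ (k + 2) * cnorm (xd β) ∧
      cnorm (β + xd α) = sInf {m | ∃ α' : XFace n k → ZMod 2, m = cnorm (β + xd α')} := by
  have hne : {m | ∃ α' : XFace n k → ZMod 2, m = cnorm (β + xd α')}.Nonempty :=
    ⟨cnorm (β + xd 0), 0, rfl⟩
  obtain ⟨α₀, hα₀⟩ := Nat.sInf_mem hne
  refine ⟨α₀, ?_, hα₀.symm⟩
  set β₀ := β + xd α₀ with hβ₀
  set N := cnorm β₀ with hN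
  have hmin : ∀ α : XFace n k → ZMod 2, N ≤ cnorm (β₀ + xd α) := by
    intro α
    have he : β₀ + xd α = β + xd (α₀ + α) := by
      rw [xd_add, hβ₀, add_assoc]
    rw [he, ← hα₀]
    exact Nat.sInf_le ⟨α₀ + α, rfl⟩
  have hdb : xd β₀ = xd β := by
    rw [hβ₀, xd_add, xd_xd, add_zero]
  set B := ext β₀ with hB
  set SD := Finset.univ.filter fun h : Fin n → Option Bool => Dop B h ≠ 0 with hSD
  set SB := Finset.univ.filter fun h : Fin n → Option Bool => B h ≠ 0 with hSB
  have hSBcard : SB.card = N := by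
    rw [hN, cnorm_ext β₀, hSB, hB]
  have hSDcard : SD.card = cnorm (xd β₀) := by
    rw [cnorm_ext (xd β₀), ext_xd, hSD, hB]
  have hwtSD : ∀ h ∈ SD, wt h = k + 2 := by
    intro h hh
    rw [hSD, Finset.mem_filter] at hh
    have : ext (xd β₀) h ≠ 0 := by rw [ext_xd]; exact hh.2
    exact ext_ne_zero this
  have hwtSB : ∀ h ∈ SB, wt h = k + 1 := by
    intro h hh
    rw [hSB, Finset.mem_filter] at hh
    exact ext_ne_zero hh.2
  have hvert : ∀ (j : Fin n) (b : Bool),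
      N ≤ (Aset B j b).card + (Cset B j b).card := by
    intro j b
    calc N ≤ cnorm (β₀ + xd (alphaV β₀ j b)) := hmin _
      _ = (Finset.univ.filter fun f => ext (β₀ + xd (alphaV β₀ j b)) f ≠ 0).card :=
          cnorm_ext _
      _ ≤ (Aset (ext β₀) j b ∪ Cset (ext β₀) j b).card :=
          Finset.card_le_card (supp_subset' β₀ j b)
      _ ≤ (Aset B j b).card + (Cset B j b).card := by
          rw [hB] at *
          exact Finset.card_union_le _ _
  have h2n : 2 * n * N ≤ (∑ v : Fin n × Bool, (Aset B v.1 v.2).card)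
      + (∑ v : Fin n × Bool, (Cset B v.1 v.2).card) := by
    calc 2 * n * N = ∑ _v : Fin n × Bool, N := by
          rw [Finset.sum_const, smul_eq_mul, Finset.card_univ, Fintype.card_prod,
            Fintype.card_fin, Fintype.card_bool]
          ring
      _ ≤ ∑ v : Fin n × Bool, ((Aset B v.1 v.2).card + (Cset B v.1 v.2).card) :=
          Finset.sum_le_sum fun v _ => hvert v.1 v.2
      _ = _ := Finset.sum_add_distrib
  have hA : ∑ v : Fin n × Bool, (Aset B v.1 v.2).card = (k + 2) * cnorm (xd β₀) := by
    rw [sum_Aset B (k+2) (by rw [← hSD]; exact hwtSD), ← hSD, hSDcard]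
  have hC : ∑ v : Fin n × Bool, (Cset B v.1 v.2).card ≤ 2 * ((k + 1) * N) := by
    calc ∑ v : Fin n × Bool, (Cset B v.1 v.2).card
        ≤ 2 * ((k + 1) * (Finset.univ.filter fun h : Fin n → Option Bool => B h ≠ 0).card) :=
          sum_Cset B (k+1) (by rw [← hSB]; exact hwtSB)
      _ = 2 * ((k + 1) * N) := by rw [← hSB, hSBcard]
  have hfin : 2 * n * N ≤ (k + 2) * cnorm (xd β₀) + 2 * ((k + 1) * N) := by
    calc 2 * n * N ≤ _ := h2n
      _ ≤ (k + 2) * cnorm (xd β₀) + 2 * ((k + 1) * N) := by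
          rw [hA]
          exact Nat.add_le_add_left hC _
  have hsplit : 2 * n * N = 2 * (n - k - 1) * N + 2 * ((k + 1) * N) := by
    have hc : n - k - 1 + (k + 1) = n := by omega
    calc 2 * n * N = 2 * ((n - k - 1) + (k + 1)) * N := by rw [hc]
      _ = 2 * (n - k - 1) * N + 2 * ((k + 1) * N) := by ring
  rw [hsplit] at hfin
  have := Nat.le_of_add_le_add_right hfin
  rw [hdb] at this
  exact this

end CrossAux

/-- for `n ≥ 1`, `k ≥ 1` with `k + 1 ≤ n - 1`, every `k`-cochain
`β` on the `n`-dimensional cross-polytope admits a `(k-1)`-cochain `α` with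
`‖β + dα‖ ≤ ((k+2)/(2(n-k-1)))·‖dβ‖`; consequently
`h^k ≥ 2(n-k-1)/(k+2)`: every non-coboundary `β` satisfies
`‖dβ‖ ≥ (2(n-k-1)/(k+2))·‖[β]‖`. -/


theorem cross_polytope_expansion (n k : ℕ) (hn : 1 ≤ n) (hk : 1 ≤ k) (hkn : k + 1 ≤ n - 1) :
    (∀ β : XFace n (k + 1) → ZMod 2, ∃ α : XFace n k → ZMod 2,
      (cnorm (β + xd α) : ℝ) ≤
        (((k : ℝ) + 2) / (2 * ((n : ℝ) - (k : ℝ) - 1))) * (cnorm (xd β) : ℝ)) ∧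
    (∀ β : XFace n (k + 1) → ZMod 2, ¬ IsXCob β →
      (cnorm (xd β) : ℝ) ≥
        (2 * ((n : ℝ) - (k : ℝ) - 1) / ((k : ℝ) + 2)) * (xqnorm β : ℝ)) := by
  have hn2 : k + 2 ≤ n := by omega
  have hcast : ((n - k - 1 : ℕ) : ℝ) = (n : ℝ) - k - 1 := by
    have h1 : k + 1 ≤ n := by omega
    have h0 : n - k - 1 = n - (k + 1) := by omega
    rw [h0, Nat.cast_sub h1]
    push_cast
    ring
  have hcpos : (0 : ℝ) < (n : ℝ) - k - 1 := by
    rw [← hcast]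
    have h1 : 1 ≤ n - k - 1 := by omega
    exact_mod_cast Nat.lt_of_lt_of_le Nat.zero_lt_one h1
  constructor
  · intro β
    obtain ⟨α, h1, _⟩ := CrossAux.key hn2 β
    refine ⟨α, ?_⟩
    have h2 : ((2 * (n - k - 1) * cnorm (β + xd α) : ℕ) : ℝ)
        ≤ (((k + 2) * cnorm (xd β) : ℕ) : ℝ) := Nat.cast_le.mpr h1
    push_cast [hcast] at h2
    rw [div_mul_eq_mul_div, le_div_iff₀ (by linarith : (0:ℝ) < 2 * ((n : ℝ) - k - 1))]
    linarith
  · intro β _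
    obtain ⟨α, h1, h2⟩ := CrossAux.key hn2 β
    have hq : xqnorm β = cnorm (β + xd α) := h2.symm
    have h3 : ((2 * (n - k - 1) * cnorm (β + xd α) : ℕ) : ℝ)
        ≤ (((k + 2) * cnorm (xd β) : ℕ) : ℝ) := Nat.cast_le.mpr h1
    push_cast [hcast] at h3
    rw [ge_iff_le, div_mul_eq_mul_div, div_le_iff₀ (by positivity : (0:ℝ) < (k:ℝ) + 2)]
    rw [hq]
    push_cast
    linarith
end

section
/- Let n ≥ 2 and k ≥ 0, and let (c_i)_{i ≥ 0} be the sequence of positive reals defined by c_0 = n and c_i = n · c_{i−1}/(c_{i−1} + 2n − 2) for i ≥ 1. Then c_k ≥ n/(2^{k+1} − 1) for all k ≥ 0. -/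
/-- the recursion from the inductive proof of the coboundary
expansion bound for the complete `(k+2)`-partite complex. For `n ≥ 2`, if
`(c_i)` is the sequence of positive reals with `c_0 = n` and
`c_i = n·c_{i-1}/(c_{i-1} + 2n - 2)` for `i ≥ 1`, then
`c_k ≥ n/(2^{k+1} - 1)` for all `k ≥ 0`. -/
theorem partite_constant_recursion (n : ℕ) (hn : 2 ≤ n) (c : ℕ → ℝ)
    (hpos : ∀ i, 0 < c i)
    (hbase : c 0 = (n : ℝ))
    (hrec : ∀ i, 1 ≤ i → c i = (n : ℝ) * c (i - 1) / (c (i - 1) + 2 * (n : ℝ) - 2)) :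
    ∀ k : ℕ, (n : ℝ) / (2 ^ (k + 1) - 1) ≤ c k := by
  have hn' : (2 : ℝ) ≤ n := by exact_mod_cast hn
  intro k
  induction k with
  | zero => rw [hbase]; norm_num
  | succ k ih =>
    have hck := hpos k
    have hrk := hrec (k + 1) (by omega)
    simp only [Nat.add_sub_cancel] at hrk
    rw [hrk]
    have hpow : (1 : ℝ) ≤ 2 ^ (k + 1) := one_le_pow₀ (by norm_num)
    have hM : (0 : ℝ) < 2 ^ (k + 1) - 1 := by
      have : (1 : ℝ) < 2 ^ (k + 1) := one_lt_pow₀ (by norm_num) (by omega)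
      linarith
    have hM2 : (0 : ℝ) < 2 ^ (k + 1 + 1) - 1 := by
      have : (1 : ℝ) < 2 ^ (k + 1 + 1) := one_lt_pow₀ (by norm_num) (by omega)
      linarith
    have hD : (0 : ℝ) < c k + 2 * n - 2 := by linarith
    rw [div_le_div_iff₀ hM2 hD]
    have h1 : (n : ℝ) ≤ c k * (2 ^ (k + 1) - 1) := by
      rw [div_le_iff₀ hM] at ih
      linarith [ih]
    have hn0 : (0 : ℝ) < n := by linarith
    have h2 := mul_le_mul_of_nonneg_left h1 (by linarith : (0:ℝ) ≤ 2 * n)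
    have hpow2 : (2 : ℝ) ^ (k + 1 + 1) = 2 * 2 ^ (k + 1) := by ring
    rw [hpow2]
    nlinarith [hpos k, hn', h2]
end

section
/- Fix k ≥ 1, let ω : ℕ → ℝ be any function tending to infinity, and let p : ℕ → [0,1] satisfy p(n) ≥ (2(k+1)(k+2)·log n + ω(n))/n for all n. Then asymptotically almost surely a random complex Y ∈ Y_k(n, p(n)) has vanishing k-th cohomology with Z/2 coefficients; that is, the probability that every k-cochain β on Δ_n with dβ(τ) = 0 for all (k+1)-faces τ ∈ Y is a coboundary tends to 1 as n → ∞. -/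
open scoped Classical
open Finset
set_option maxHeartbeats 1000000

namespace LM

lemma sd_apply_filter {n m : ℕ} (β : SFace n m → ZMod 2) (τ : SFace n (m+1)) :
    sd β τ = ∑ σ ∈ Finset.univ.filter (fun σ : SFace n m => σ.1 ⊆ τ.1), β σ := by
  rw [sd, Finset.sum_filter]

lemma sd_add {n m : ℕ} (α α' : SFace n m → ZMod 2) :
    sd (α + α') = sd α + sd α' := by
  funext τ
  simp only [sd, Pi.add_apply, ← Finset.sum_add_distrib]
  exact Finset.sum_congr rfl fun σ _ => by split <;> simp

lemma sd_zero {n m : ℕ} : sd (0 : SFace n m → ZMod 2) = 0 := by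
  funext τ; simp [sd]

lemma between_card {n m : ℕ} (η : SFace n m) (τ : SFace n (m+2)) (hsub : η.1 ⊆ τ.1) :
    (Finset.univ.filter (fun σ : SFace n (m+1) => η.1 ⊆ σ.1 ∧ σ.1 ⊆ τ.1)).card = 2 := by
  have hcard : (τ.1 \ η.1).card = 2 := by
    rw [Finset.card_sdiff_of_subset hsub, τ.2, η.2]; omega
  refine Eq.trans ?_ hcard
  refine (Finset.card_bij
    (fun w hw => (⟨insert w η.1, by
      rw [Finset.card_insert_of_notMem (Finset.mem_sdiff.mp hw).2, η.2]⟩ : SFace n (m+1)))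
    ?_ ?_ ?_).symm
  · intro w hw
    obtain ⟨hwτ, hwη⟩ := Finset.mem_sdiff.mp hw
    simp only [Finset.mem_filter, Finset.mem_univ, true_and]
    exact ⟨Finset.subset_insert _ _, Finset.insert_subset hwτ hsub⟩
  · intro w hw w' hw' h
    have := congrArg Subtype.val h
    simp only at this
    have hwη := (Finset.mem_sdiff.mp hw).2
    have : w ∈ insert w' η.1 := this ▸ Finset.mem_insert_self w η.1
    rcases Finset.mem_insert.mp this with h' | h'
    · exact h'
    · exact absurd h' hwη
  · intro σ hσ
    obtain ⟨h1, h2⟩ := (Finset.mem_filter.mp hσ).2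
    have : (σ.1 \ η.1).Nonempty := by
      rw [← Finset.card_pos, Finset.card_sdiff_of_subset h1, σ.2, η.2]; omega
    obtain ⟨w, hw⟩ := this
    obtain ⟨hwσ, hwη⟩ := Finset.mem_sdiff.mp hw
    refine ⟨w, Finset.mem_sdiff.mpr ⟨h2 hwσ, hwη⟩, ?_⟩
    refine Subtype.ext ?_
    simp only
    apply Finset.eq_of_subset_of_card_le (Finset.insert_subset hwσ h1)
    rw [σ.2, Finset.card_insert_of_notMem hwη, η.2]

lemma sd_sd {n m : ℕ} (α : SFace n m → ZMod 2) : sd (sd α) = 0 := by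
  funext τ
  simp only [sd, Pi.zero_apply]
  have step1 : ∀ σ : SFace n (m+1),
      (if σ.1 ⊆ τ.1 then ∑ η : SFace n m, if η.1 ⊆ σ.1 then α η else 0 else 0)
      = ∑ η : SFace n m, if η.1 ⊆ σ.1 ∧ σ.1 ⊆ τ.1 then α η else 0 := by
    intro σ
    split
    · exact Finset.sum_congr rfl fun η _ => by simp_all
    · exact (Finset.sum_eq_zero fun η _ => by simp_all).symm
  rw [Finset.sum_congr rfl fun σ _ => step1 σ, Finset.sum_comm]
  refine Finset.sum_eq_zero fun η _ => ?_
  rw [← Finset.sum_filter, Finset.sum_const]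
  by_cases hsub : η.1 ⊆ τ.1
  · rw [between_card η τ hsub]
    exact CharTwo.two_nsmul _
  · have : (Finset.univ.filter (fun σ : SFace n (m+1) => η.1 ⊆ σ.1 ∧ σ.1 ⊆ τ.1)) = ∅ := by
      refine Finset.filter_eq_empty_iff.mpr fun σ _ => ?_
      rintro ⟨h1, h2⟩; exact hsub (h1.trans h2)
    rw [this]; simp

noncomputable def supp {n m : ℕ} (β : SFace n m → ZMod 2) : Finset (SFace n m) :=
  Finset.univ.filter (fun σ => β σ ≠ 0)

lemma mem_supp {n m : ℕ} {β : SFace n m → ZMod 2} {σ : SFace n m} :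
    σ ∈ supp β ↔ β σ ≠ 0 := by simp [supp]

/-- contraction of `β` by the vertex `v`. -/
noncomputable def contr {n m : ℕ} (v : Fin n) (β : SFace n (m+1) → ZMod 2) :
    SFace n m → ZMod 2 :=
  fun η => if h : v ∈ η.1 then 0 else
    β ⟨insert v η.1, by rw [Finset.card_insert_of_notMem h, η.2]⟩

lemma contr_spec {n m : ℕ} (v : Fin n) (β : SFace n (m+1) → ZMod 2)
    (η : SFace n m) (σ : SFace n (m+1)) (hv : v ∉ η.1) (hσ : σ.1 = insert v η.1) :
    contr v β η = β σ := by
  rw [contr, dif_neg hv]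
  congr 1
  exact Subtype.ext hσ.symm

/-- Lemma A : at a face containing `v`, `sd (contr v β)` equals `β`. -/
lemma sd_contr_mem {n m : ℕ} (v : Fin n) (β : SFace n (m+1) → ZMod 2)
    (σ : SFace n (m+1)) (hv : v ∈ σ.1) :
    sd (contr v β) σ = β σ := by
  have hη : (σ.1.erase v).card = m := by
    rw [Finset.card_erase_of_mem hv, σ.2]; omega
  rw [sd]
  rw [Finset.sum_eq_single (⟨σ.1.erase v, hη⟩ : SFace n m)]
  · rw [if_pos (Finset.erase_subset _ _)]
    exact contr_spec v β _ σ (Finset.notMem_erase _ _)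
      (Finset.insert_erase hv).symm
  · intro η _ hne
    split
    · next hsub =>
      -- η ⊆ σ, η ≠ erase v σ  ⇒ v ∈ η
      have hvη : v ∈ η.1 := by
        by_contra hvn
        apply hne
        refine Subtype.ext (Finset.eq_of_subset_of_card_le
          (Finset.subset_erase.mpr ⟨hsub, hvn⟩) ?_)
        rw [hη, η.2]
      rw [contr, dif_pos hvη]
    · rfl
  · intro h; exact absurd (Finset.mem_univ _) h

/-- Lemma B : at a face not containing `v`. -/
lemma sd_contr_not_mem {n m : ℕ} (v : Fin n) (β : SFace n (m+1) → ZMod 2)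
    (σ : SFace n (m+1)) (τ : SFace n (m+2)) (hv : v ∉ σ.1) (hτ : τ.1 = insert v σ.1) :
    β σ + sd (contr v β) σ = sd β τ := by
  have hvτ : v ∈ τ.1 := by rw [hτ]; exact Finset.mem_insert_self _ _
  have hστ : σ.1 ⊆ τ.1 := by rw [hτ]; exact Finset.subset_insert _ _
  rw [sd_apply_filter β τ, sd_apply_filter (contr v β) σ]
  have hσmem : σ ∈ Finset.univ.filter (fun ρ : SFace n (m+1) => ρ.1 ⊆ τ.1) := by
    simp [hστ]
  rw [← Finset.add_sum_erase _ _ hσmem]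
  congr 1
  have hmemv : ∀ ρ : SFace n (m+1),
      ρ ∈ (Finset.univ.filter (fun ρ : SFace n (m+1) => ρ.1 ⊆ τ.1)).erase σ → v ∈ ρ.1 := by
    intro ρ hρ
    obtain ⟨hne, hmem⟩ := Finset.mem_erase.mp hρ
    have hsub : ρ.1 ⊆ τ.1 := (Finset.mem_filter.mp hmem).2
    by_contra hvρ
    apply hne
    refine Subtype.ext (Finset.eq_of_subset_of_card_le ?_ (by rw [σ.2, ρ.2]))
    intro x hx
    rcases Finset.mem_insert.mp (hτ ▸ hsub hx) with h | h
    · exact absurd (h ▸ hx) hvρ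
    · exact h
  have hηv : ∀ η : SFace n m,
      η ∈ Finset.univ.filter (fun η : SFace n m => η.1 ⊆ σ.1) → v ∉ η.1 := by
    intro η hη hvm
    exact hv ((Finset.mem_filter.mp hη).2 hvm)
  refine Finset.sum_bij'
    (i := fun η hη => (⟨insert v η.1, by
      rw [Finset.card_insert_of_notMem (hηv η hη), η.2]⟩ : SFace n (m+1)))
    (j := fun ρ hρ => (⟨ρ.1.erase v, by
      rw [Finset.card_erase_of_mem (hmemv ρ hρ), ρ.2]; omega⟩ : SFace n m))
    ?_ ?_ ?_ ?_ ?_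
  · intro η hη
    have hsubσ : η.1 ⊆ σ.1 := (Finset.mem_filter.mp hη).2
    refine Finset.mem_erase.mpr ⟨?_, ?_⟩
    · intro hEq
      have := congrArg Subtype.val hEq
      simp only at this
      exact hv (this ▸ Finset.mem_insert_self v η.1)
    · simp only [Finset.mem_filter, Finset.mem_univ, true_and, hτ]
      exact Finset.insert_subset_insert v hsubσ
  · intro ρ hρ
    simp only [Finset.mem_filter, Finset.mem_univ, true_and]
    intro x hx
    have hxρ := Finset.mem_of_mem_erase hx
    have hxne := Finset.ne_of_mem_erase hx
    have hsub : ρ.1 ⊆ τ.1 := (Finset.mem_filter.mp (Finset.mem_of_mem_erase hρ)).2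
    rcases Finset.mem_insert.mp (hτ ▸ hsub hxρ) with h | h
    · exact absurd h hxne
    · exact h
  · intro η hη
    exact Subtype.ext (by simp only; exact Finset.erase_insert (hηv η hη))
  · intro ρ hρ
    exact Subtype.ext (by simp only; exact Finset.insert_erase (hmemv ρ hρ))
  · intro η hη
    exact contr_spec v β η _ (hηv η hη) rfl
/-- Lemma C: the support of `β + d(contr v β)` is in bijection with the faces of
`supp (sd β)` containing `v`. -/
lemma supp_add_contr_card {n m : ℕ} (v : Fin n) (β : SFace n (m+1) → ZMod 2) :
    (supp (β + sd (contr v β))).card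
      = ((supp (sd β)).filter (fun τ => v ∈ τ.1)).card := by
  have hnot : ∀ σ ∈ supp (β + sd (contr v β)), v ∉ σ.1 := by
    intro σ hσ hvσ
    have h0 : (β + sd (contr v β)) σ = 0 := by
      rw [Pi.add_apply, sd_contr_mem v β σ hvσ, CharTwo.add_self_eq_zero]
    exact (mem_supp.mp hσ) h0
  refine Finset.card_bij (fun σ hσ => (⟨insert v σ.1, by
      rw [Finset.card_insert_of_notMem (hnot σ hσ), σ.2]⟩ : SFace n (m+2))) ?_ ?_ ?_
  · intro σ hσ
    refine Finset.mem_filter.mpr ⟨mem_supp.mpr ?_, Finset.mem_insert_self _ _⟩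
    rw [← sd_contr_not_mem v β σ _ (hnot σ hσ) rfl]
    exact mem_supp.mp hσ
  · intro σ hσ σ' hσ' hEq
    have h := congrArg Subtype.val hEq
    simp only at h
    refine Subtype.ext ?_
    rw [← Finset.erase_insert (hnot σ hσ), ← Finset.erase_insert (hnot σ' hσ'), h]
  · intro τ hτ
    obtain ⟨hτs, hvτ⟩ := Finset.mem_filter.mp hτ
    have hcard : (τ.1.erase v).card = m + 1 := by
      rw [Finset.card_erase_of_mem hvτ, τ.2]; omega
    have hins : τ.1 = insert v (τ.1.erase v) := (Finset.insert_erase hvτ).symm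
    have hvnot : v ∉ τ.1.erase v := Finset.notMem_erase _ _
    refine ⟨⟨τ.1.erase v, hcard⟩, ?_, Subtype.ext (by simp only; exact hins.symm)⟩
    refine mem_supp.mpr ?_
    rw [Pi.add_apply, sd_contr_not_mem v β ⟨τ.1.erase v, hcard⟩ τ hvnot hins]
    exact mem_supp.mp hτs

/-- KEY: a cochain of minimal support in its coset has large coboundary support. -/
lemma key {n m : ℕ} (β : SFace n (m+1) → ZMod 2)
    (hmin : ∀ α : SFace n m → ZMod 2, (supp β).card ≤ (supp (β + sd α)).card) :
    n * (supp β).card ≤ (m + 2) * (supp (sd β)).card := by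
  have h1 : ∀ v : Fin n,
      (supp β).card ≤ ((supp (sd β)).filter (fun τ => v ∈ τ.1)).card :=
    fun v => (hmin (contr v β)).trans_eq (supp_add_contr_card v β)
  calc n * (supp β).card = ∑ _v : Fin n, (supp β).card := by simp [mul_comm]
    _ ≤ ∑ v : Fin n, ((supp (sd β)).filter (fun τ => v ∈ τ.1)).card :=
        Finset.sum_le_sum fun v _ => h1 v
    _ = (m + 2) * (supp (sd β)).card := by
        simp only [Finset.card_filter]
        rw [Finset.sum_comm]
        have : ∀ τ ∈ supp (sd β), (∑ v : Fin n, if v ∈ τ.1 then 1 else 0) = m + 2 := by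
          intro τ _
          rw [← Finset.card_filter]
          simp only [Finset.filter_univ_mem]
          exact τ.2
        rw [Finset.sum_congr rfl this, Finset.sum_const, smul_eq_mul, mul_comm]

section Prob
variable {ι : Type*} [Fintype ι] [DecidableEq ι]

omit [Fintype ι] in
lemma prod_indicator (x : ℝ) (S t : Finset ι) :
    (∏ a ∈ t, if a ∈ S then (0:ℝ) else x) = if t ∩ S = ∅ then x ^ t.card else 0 := by
  by_cases hd : t ∩ S = ∅
  · rw [if_pos hd]
    rw [Finset.prod_congr rfl (fun a ha => if_neg (fun hS =>
      (Finset.eq_empty_iff_forall_notMem.mp hd a) (Finset.mem_inter.mpr ⟨ha, hS⟩)))]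
    exact Finset.prod_const x
  · rw [if_neg hd]
    obtain ⟨a, ha⟩ := Finset.nonempty_iff_ne_empty.mpr hd
    obtain ⟨hat, haS⟩ := Finset.mem_inter.mp ha
    exact Finset.prod_eq_zero hat (if_pos haS)

lemma sum_weight_disjoint (x y : ℝ) (S : Finset ι) :
    ∑ Y : Finset ι, (if Y ∩ S = ∅ then x ^ Y.card * y ^ (Fintype.card ι - Y.card) else 0)
      = y ^ S.card * (x + y) ^ (Fintype.card ι - S.card) := by
  have h := Fintype.prod_add (fun a : ι => if a ∈ S then (0:ℝ) else x) (fun _ => y)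
  have hL : (∏ a : ι, ((if a ∈ S then (0:ℝ) else x) + y))
      = y ^ S.card * (x + y) ^ (Fintype.card ι - S.card) := by
    rw [← Finset.prod_sdiff (Finset.subset_univ S)]
    have e1 : (∏ a ∈ Finset.univ \ S, ((if a ∈ S then (0:ℝ) else x) + y))
        = ∏ _a ∈ Finset.univ \ S, (x + y) :=
      Finset.prod_congr rfl (fun a ha => by rw [if_neg (Finset.mem_sdiff.mp ha).2])
    have e2 : (∏ a ∈ S, ((if a ∈ S then (0:ℝ) else x) + y)) = ∏ _a ∈ S, y :=
      Finset.prod_congr rfl (fun a ha => by rw [if_pos ha, zero_add])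
    rw [e1, e2, Finset.prod_const, Finset.prod_const,
      Finset.card_sdiff_of_subset (Finset.subset_univ S), Finset.card_univ, mul_comm]
  rw [hL] at h
  rw [h]
  refine Finset.sum_congr rfl fun t _ => ?_
  rw [prod_indicator, Finset.prod_const, Finset.card_compl]
  split <;> simp

lemma sum_weight_total (x y : ℝ) :
    ∑ Y : Finset ι, x ^ Y.card * y ^ (Fintype.card ι - Y.card)
      = (x + y) ^ Fintype.card ι := by
  have h := sum_weight_disjoint x y (∅ : Finset ι)
  simp only [Finset.inter_empty, if_true, Finset.card_empty, pow_zero, one_mul,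
    Nat.sub_zero] at h
  exact h

lemma sum_pow_suppCard (r : ℝ) :
    ∑ β : ι → ZMod 2, r ^ (Finset.univ.filter (fun a => β a ≠ 0)).card
      = (1 + r) ^ Fintype.card ι := by
  have hbij : Function.Bijective (fun t : Finset ι => (fun a => if a ∈ t then (1 : ZMod 2) else 0)) := by
    constructor
    · intro t t' h
      ext a
      have := congrFun h a
      by_cases hat : a ∈ t <;> by_cases hat' : a ∈ t' <;> simp_all
    · intro β
      refine ⟨Finset.univ.filter (fun a => β a = 1), ?_⟩
      funext a
      have : β a = 0 ∨ β a = 1 := by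
        have hlt := ZMod.val_lt (β a)
        have hv2 : (β a).val = 0 ∨ (β a).val = 1 := by omega
        rcases hv2 with h | h
        · left; exact (ZMod.val_eq_zero _).mp h
        · right
          have := congrArg (Nat.cast : ℕ → ZMod 2) h
          rwa [ZMod.natCast_val, ZMod.cast_id] at this
      rcases this with h | h <;> simp [h]
  rw [← Function.Bijective.sum_comp hbij
    (fun β => r ^ (Finset.univ.filter (fun a => β a ≠ 0)).card)]
  have : ∀ t : Finset ι,
      (Finset.univ.filter (fun a => (if a ∈ t then (1:ZMod 2) else 0) ≠ 0)) = t := by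
    intro t
    ext a
    simp only [Finset.mem_filter, Finset.mem_univ, true_and]
    by_cases hat : a ∈ t <;> simp [hat]
  simp only [this]
  have h := sum_weight_total (ι := ι) r 1
  simp only [one_pow, mul_one] at h
  rw [h, add_comm]

end Prob

/-- The set of minimal-support nonzero representatives. -/
noncomputable def Mset (n k : ℕ) : Finset (SFace n (k+1) → ZMod 2) :=
  Finset.univ.filter (fun β' => β' ≠ 0 ∧
    ∀ α : SFace n k → ZMod 2, (supp β').card ≤ (supp (β' + sd α)).card)

lemma exists_minimal_rep {n k : ℕ} (β : SFace n (k+1) → ZMod 2)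
    (hnc : ¬ ∃ α : SFace n k → ZMod 2, sd α = β) :
    ∃ β' ∈ Mset n k, sd β' = sd β := by
  classical
  set C : Finset (SFace n (k+1) → ZMod 2) :=
    Finset.univ.filter (fun γ => ∃ α, γ = β + sd α) with hC
  have hβC : β ∈ C := by
    refine Finset.mem_filter.mpr ⟨Finset.mem_univ _, ⟨0, ?_⟩⟩
    rw [sd_zero, add_zero]
  obtain ⟨β', hβ'C, hmin⟩ := Finset.exists_min_image C (fun γ => (supp γ).card) ⟨β, hβC⟩
  obtain ⟨α, hα⟩ := (Finset.mem_filter.mp hβ'C).2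
  refine ⟨β', Finset.mem_filter.mpr ⟨Finset.mem_univ _, ?_, ?_⟩, ?_⟩
  · intro h0
    apply hnc
    refine ⟨α, ?_⟩
    funext σ
    have h := congrFun hα σ
    rw [h0] at h
    have : β σ + sd α σ = 0 := by
      simpa [Pi.add_apply] using h.symm
    have hneg : sd α σ = -(β σ) := by linear_combination this - β σ - β σ
    rw [hneg, CharTwo.neg_eq]
  · intro α'
    have hmem : β' + sd α' ∈ C := by
      refine Finset.mem_filter.mpr ⟨Finset.mem_univ _, ⟨α + α', ?_⟩⟩
      rw [sd_add, hα, add_assoc]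
    exact hmin _ hmem
  · rw [hα, sd_add, sd_sd, add_zero]

lemma supp_card_pos {n m : ℕ} {β : SFace n m → ZMod 2} (h : β ≠ 0) :
    1 ≤ (supp β).card := by
  rw [Nat.one_le_iff_ne_zero, Ne, Finset.card_eq_zero, ← Ne,
    ← Finset.nonempty_iff_ne_empty]
  by_contra hne
  apply h
  funext σ
  by_contra hσ
  exact hne ⟨σ, mem_supp.mpr hσ⟩

/-- Union bound for the bad event. -/
lemma bad_le {n k : ℕ} (x : ℝ) (hx0 : 0 ≤ x) (hx1 : x ≤ 1) :
    (∑ Y : Finset (SFace n (k+2)),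
      if ¬ (∀ β : SFace n (k+1) → ZMod 2, (∀ τ ∈ Y, sd β τ = 0) →
          ∃ α : SFace n k → ZMod 2, sd α = β)
        then x ^ Y.card * (1-x) ^ (Fintype.card (SFace n (k+2)) - Y.card) else 0)
      ≤ ∑ β' ∈ Mset n k, (1-x) ^ (supp (sd β')).card := by
  have hw : ∀ Y : Finset (SFace n (k+2)),
      (0:ℝ) ≤ x ^ Y.card * (1-x) ^ (Fintype.card (SFace n (k+2)) - Y.card) :=
    fun Y => mul_nonneg (pow_nonneg hx0 _) (pow_nonneg (by linarith) _)
  have step1 : ∀ Y : Finset (SFace n (k+2)),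
      (if ¬ (∀ β : SFace n (k+1) → ZMod 2, (∀ τ ∈ Y, sd β τ = 0) →
          ∃ α : SFace n k → ZMod 2, sd α = β)
        then x ^ Y.card * (1-x) ^ (Fintype.card (SFace n (k+2)) - Y.card) else 0)
      ≤ ∑ β' ∈ Mset n k, (if Y ∩ supp (sd β') = ∅
          then x ^ Y.card * (1-x) ^ (Fintype.card (SFace n (k+2)) - Y.card) else 0) := by
    intro Y
    split
    · next hbad =>
      push_neg at hbad
      obtain ⟨β, hcoc, hnc⟩ := hbad
      obtain ⟨β', hβ'M, hsd⟩ := exists_minimal_rep β (by push_neg; exact hnc)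
      have hdisj : Y ∩ supp (sd β') = ∅ := by
        rw [Finset.eq_empty_iff_forall_notMem]
        intro τ hτ
        obtain ⟨hτY, hτs⟩ := Finset.mem_inter.mp hτ
        exact (mem_supp.mp hτs) (by rw [hsd]; exact hcoc τ hτY)
      refine Finset.single_le_sum (f := fun β' => if Y ∩ supp (sd β') = ∅
          then x ^ Y.card * (1-x) ^ (Fintype.card (SFace n (k+2)) - Y.card) else 0)
        (fun b _ => by split; exacts [hw Y, le_refl 0]) hβ'M |>.trans_eq' ?_
      rw [if_pos hdisj]
    · exact Finset.sum_nonneg fun b _ => by split; exacts [hw Y, le_refl 0]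
  calc _ ≤ ∑ Y : Finset (SFace n (k+2)), ∑ β' ∈ Mset n k,
        (if Y ∩ supp (sd β') = ∅
          then x ^ Y.card * (1-x) ^ (Fintype.card (SFace n (k+2)) - Y.card) else 0) :=
        Finset.sum_le_sum fun Y _ => step1 Y
    _ = ∑ β' ∈ Mset n k, ∑ Y : Finset (SFace n (k+2)),
        (if Y ∩ supp (sd β') = ∅
          then x ^ Y.card * (1-x) ^ (Fintype.card (SFace n (k+2)) - Y.card) else 0) :=
        Finset.sum_comm
    _ ≤ _ := by
        refine Finset.sum_le_sum fun β' _ => ?_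
        have h2 := sum_weight_disjoint x (1-x) (supp (sd β'))
        have hx' : x + (1-x) = 1 := by ring
        rw [hx', one_pow, mul_one] at h2
        exact le_of_eq h2

lemma sum_r_pow_supp_le {n m : ℕ} (r : ℝ) (hr : 0 ≤ r) :
    ∑ β' ∈ Mset n m, r ^ (supp β').card
      ≤ (1 + r) ^ Fintype.card (SFace n (m+1)) - 1 := by
  have h1 : ∑ β' ∈ Mset n m, r ^ (supp β').card
      ≤ ∑ β' ∈ Finset.univ.filter (fun β' : SFace n (m+1) → ZMod 2 => β' ≠ 0),
          r ^ (supp β').card := by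
    refine Finset.sum_le_sum_of_subset_of_nonneg ?_ (fun _ _ _ => pow_nonneg hr _)
    intro β' hβ'
    simp only [Mset, Finset.mem_filter] at hβ' ⊢
    exact ⟨hβ'.1, hβ'.2.1⟩
  refine h1.trans ?_
  rw [Finset.filter_ne', Finset.sum_erase_eq_sub (Finset.mem_univ 0)]
  have h2 : ∑ β' : SFace n (m+1) → ZMod 2, r ^ (supp β').card
      = (1 + r) ^ Fintype.card (SFace n (m+1)) := by
    rw [← sum_pow_suppCard r]
    rfl
  have h3 : (supp (0 : SFace n (m+1) → ZMod 2)).card = 0 := by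
    simp [supp]
  rw [h2, h3, pow_zero]

lemma bad_prob_le {n k : ℕ} (x : ℝ) (hx0 : 0 ≤ x) (hx1 : x ≤ 1)
    (L : ℝ) (hL : L ≤ x * n) :
    (∑ Y : Finset (SFace n (k+2)),
      if ¬ (∀ β : SFace n (k+1) → ZMod 2, (∀ τ ∈ Y, sd β τ = 0) →
          ∃ α : SFace n k → ZMod 2, sd α = β)
        then x ^ Y.card * (1-x) ^ (Fintype.card (SFace n (k+2)) - Y.card) else 0)
      ≤ (1 + Real.exp (-L / ((k:ℝ)+2))) ^ Fintype.card (SFace n (k+1)) - 1 := by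
  refine (bad_le x hx0 hx1).trans ?_
  refine (Finset.sum_le_sum (fun β' hβ' => ?_)).trans
    (sum_r_pow_supp_le _ (Real.exp_nonneg _))
  obtain ⟨hne, hmin⟩ := (Finset.mem_filter.mp hβ').2
  have hb1 : 1 ≤ (supp β').card := supp_card_pos hne
  have hkey : n * (supp β').card ≤ (k+2) * (supp (sd β')).card := key β' hmin
  set b := (supp β').card with hb
  set c := (supp (sd β')).card with hc
  have hKpos : (0:ℝ) < (k:ℝ) + 2 := by positivity
  have step1 : (1-x)^c ≤ Real.exp (-(x * c)) := by
    calc (1-x)^c ≤ Real.exp (-x) ^ c :=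
          pow_le_pow_left₀ (by linarith) (by linarith [Real.add_one_le_exp (-x)]) c
      _ = Real.exp (-(x * c)) := by
          rw [← Real.exp_nat_mul]; ring_nf
  have step2 : Real.exp (-(x * c)) ≤ Real.exp ((-L / ((k:ℝ)+2)) * b) := by
    apply Real.exp_le_exp.mpr
    have hkey' : (n:ℝ) * b ≤ ((k:ℝ)+2) * c := by exact_mod_cast hkey
    have h1 : L * b ≤ (x * n) * b :=
      mul_le_mul_of_nonneg_right hL (Nat.cast_nonneg b)
    have h2 : x * ((n:ℝ) * b) ≤ x * (((k:ℝ)+2) * c) :=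
      mul_le_mul_of_nonneg_left hkey' hx0
    have h3 : L * b ≤ x * c * ((k:ℝ)+2) := by nlinarith
    have h5 : L * b / ((k:ℝ)+2) ≤ x * c := (div_le_iff₀ hKpos).mpr h3
    have h6 : (-L / ((k:ℝ)+2)) * b = -(L * b / ((k:ℝ)+2)) := by ring
    rw [h6]
    linarith
  have step3 : Real.exp ((-L / ((k:ℝ)+2)) * b)
      = Real.exp (-L / ((k:ℝ)+2)) ^ b := by
    rw [← Real.exp_nat_mul]
    congr 1
    ring
  calc (1-x)^c ≤ Real.exp (-(x*c)) := step1
    _ ≤ _ := step2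
    _ = _ := step3

end LM

/-- vanishing of the `k`-th `ZMod 2` cohomology of the
Linial–Meshulam random complex `Y ∈ Y_k(n, p(n))`. Fix `k ≥ 1`, `ω → ∞`, and
`p(n) ≥ (2(k+1)(k+2)·log n + ω(n))/n`. Then the probability (a weighted sum
over all sets `Y` of `(k+1)`-faces, each face kept independently with
probability `p(n)`) of the event that every `k`-cochain `β` with `dβ = 0` on
all faces of `Y` is a coboundary — i.e. `H^k(Y; ZMod 2) = 0` — tends to `1`
as `n → ∞`. -/
theorem linial_meshulam_cohomology_vanishing (k : ℕ) (hk : 1 ≤ k)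
    (ω : ℕ → ℝ) (hω : Filter.Tendsto ω Filter.atTop Filter.atTop)
    (p : ℕ → ℝ) (hp0 : ∀ n, 0 ≤ p n) (hp1 : ∀ n, p n ≤ 1)
    (hp : ∀ n : ℕ, p n ≥ (2 * ((k : ℝ) + 1) * ((k : ℝ) + 2) * Real.log n + ω n) / (n : ℝ)) :
    Filter.Tendsto
      (fun n : ℕ => ∑ Y : Finset (SFace n (k + 2)),
        if ∀ β : SFace n (k + 1) → ZMod 2, (∀ τ ∈ Y, sd β τ = 0) → IsCob β
          then p n ^ Y.card * (1 - p n) ^ (Fintype.card (SFace n (k + 2)) - Y.card) else 0)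
      Filter.atTop (nhds 1) := by

  classical
  have hK : (0:ℝ) < (k:ℝ) + 2 := by positivity
  set L : ℕ → ℝ := fun n => 2 * ((k:ℝ)+1) * ((k:ℝ)+2) * Real.log n + ω n with hL
  set bad : ℕ → ℝ := fun n => ∑ Y : Finset (SFace n (k+2)),
      if ¬ (∀ β : SFace n (k+1) → ZMod 2, (∀ τ ∈ Y, sd β τ = 0) →
          ∃ α : SFace n k → ZMod 2, sd α = β)
        then p n ^ Y.card * (1 - p n) ^ (Fintype.card (SFace n (k+2)) - Y.card) else 0
    with hbad
  -- the target equals 1 - bad n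
  have hgood : ∀ n, (∑ Y : Finset (SFace n (k + 2)),
      if ∀ β : SFace n (k + 1) → ZMod 2, (∀ τ ∈ Y, sd β τ = 0) → IsCob β
        then p n ^ Y.card * (1 - p n) ^ (Fintype.card (SFace n (k + 2)) - Y.card) else 0)
      = 1 - bad n := by
    intro n
    have htot : ∑ Y : Finset (SFace n (k+2)),
        p n ^ Y.card * (1 - p n) ^ (Fintype.card (SFace n (k+2)) - Y.card) = 1 := by
      have h := LM.sum_weight_total (ι := SFace n (k+2)) (p n) (1 - p n)
      rw [show p n + (1 - p n) = 1 by ring, one_pow] at h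
      exact h
    have hsplit : (∑ Y : Finset (SFace n (k + 2)),
        if ∀ β : SFace n (k + 1) → ZMod 2, (∀ τ ∈ Y, sd β τ = 0) → IsCob β
          then p n ^ Y.card * (1 - p n) ^ (Fintype.card (SFace n (k + 2)) - Y.card) else 0)
        + bad n = ∑ Y : Finset (SFace n (k+2)),
          p n ^ Y.card * (1 - p n) ^ (Fintype.card (SFace n (k+2)) - Y.card) := by
      rw [hbad, ← Finset.sum_add_distrib]
      refine Finset.sum_congr rfl fun Y _ => ?_
      by_cases hE : ∀ β : SFace n (k + 1) → ZMod 2, (∀ τ ∈ Y, sd β τ = 0) → IsCob β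
      · rw [if_pos hE, if_neg (not_not_intro (by simpa [IsCob] using hE)), add_zero]
      · rw [if_neg hE, if_pos (by simpa [IsCob] using hE), zero_add]
    rw [eq_sub_iff_add_eq, hsplit, htot]
  -- bad n tends to 0
  have hbad0 : Filter.Tendsto bad Filter.atTop (nhds 0) := by
    -- upper bound function
    set F : ℕ → ℝ := fun n =>
      Real.exp ((n:ℝ)^(k+1) * Real.exp (-(L n) / ((k:ℝ)+2))) - 1 with hF
    have hbadnn : ∀ n, 0 ≤ bad n := by
      intro n
      refine Finset.sum_nonneg fun Y _ => ?_
      split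
      · exact mul_nonneg (pow_nonneg (hp0 n) _)
          (pow_nonneg (by linarith [hp1 n]) _)
      · exact le_refl 0
    have hup : ∀ n : ℕ, 1 ≤ n → bad n ≤ F n := by
      intro n hn
      have hnpos : (0:ℝ) < n := by exact_mod_cast hn
      have hLn : L n ≤ p n * n := by
        have h := hp n
        rw [ge_iff_le, div_le_iff₀ hnpos] at h
        exact h
      have h1 : bad n ≤ (1 + Real.exp (-(L n) / ((k:ℝ)+2))) ^
          Fintype.card (SFace n (k+1)) - 1 := by
        have := LM.bad_prob_le (n := n) (k := k) (p n) (hp0 n) (hp1 n) (L n) hLn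
        rw [neg_div] at this ⊢
        exact this
      refine h1.trans ?_
      rw [hF]
      simp only
      rw [sub_le_sub_iff_right]
      set r : ℝ := Real.exp (-(L n) / ((k:ℝ)+2)) with hr
      have hr0 : 0 ≤ r := Real.exp_nonneg _
      have hcard : Fintype.card (SFace n (k+1)) ≤ n ^ (k+1) := by
        rw [Fintype.card_finset_len, Fintype.card_fin]
        exact Nat.choose_le_pow n (k+1)
      calc (1 + r) ^ Fintype.card (SFace n (k+1))
          ≤ Real.exp r ^ Fintype.card (SFace n (k+1)) :=
            pow_le_pow_left₀ (by linarith) (by linarith [Real.add_one_le_exp r]) _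
        _ = Real.exp ((Fintype.card (SFace n (k+1)) : ℝ) * r) := by
            rw [← Real.exp_nat_mul]
        _ ≤ Real.exp (((n:ℝ))^(k+1) * r) := by
            apply Real.exp_le_exp.mpr
            refine mul_le_mul_of_nonneg_right ?_ hr0
            exact_mod_cast hcard
    -- F tends to 0
    have hFlim : Filter.Tendsto F Filter.atTop (nhds 0) := by
      have hu : Filter.Tendsto
          (fun n : ℕ => ((k:ℝ)+1) * Real.log n + ω n / ((k:ℝ)+2))
          Filter.atTop Filter.atTop := by
        refine Filter.Tendsto.atTop_add_atTop ?_ ?_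
        · exact (Real.tendsto_log_atTop.comp
            tendsto_natCast_atTop_atTop).const_mul_atTop (by positivity)
        · exact hω.atTop_div_const hK
      have hinner : Filter.Tendsto
          (fun n : ℕ => Real.exp (-(((k:ℝ)+1) * Real.log n + ω n / ((k:ℝ)+2))))
          Filter.atTop (nhds 0) :=
        Real.tendsto_exp_atBot.comp (Filter.tendsto_neg_atBot_iff.mpr hu)
      have heq : ∀ᶠ n : ℕ in Filter.atTop,
          Real.exp (Real.exp (-(((k:ℝ)+1) * Real.log n + ω n / ((k:ℝ)+2)))) - 1 = F n := by
        filter_upwards [Filter.eventually_ge_atTop 1] with n hn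
        have hnpos : (0:ℝ) < n := by exact_mod_cast hn
        rw [hF]
        simp only
        congr 2
        have hpow : ((n:ℝ))^(k+1) = Real.exp (((k:ℝ)+1) * Real.log n) := by
          rw [← Real.exp_log (show (0:ℝ) < (n:ℝ)^(k+1) by positivity),
            Real.log_pow]
          push_cast
          ring_nf
        rw [hpow, ← Real.exp_add]
        congr 1
        rw [hL]
        simp only
        field_simp
        ring
      have hcomp : Filter.Tendsto
          (fun n : ℕ => Real.exp (Real.exp (-(((k:ℝ)+1) * Real.log n + ω n / ((k:ℝ)+2)))) - 1)
          Filter.atTop (nhds 0) := by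
        have := (Real.continuous_exp.tendsto 0).comp hinner
        have h2 := this.sub (tendsto_const_nhds (x := (1:ℝ)))
        simpa using h2
      exact hcomp.congr' heq
    refine tendsto_of_tendsto_of_tendsto_of_le_of_le' tendsto_const_nhds hFlim
      (Filter.Eventually.of_forall hbadnn) ?_
    filter_upwards [Filter.eventually_ge_atTop 1] with n hn
    exact hup n hn
  have : Filter.Tendsto (fun n => 1 - bad n) Filter.atTop (nhds (1 - 0)) :=
    tendsto_const_nhds.sub hbad0
  rw [sub_zero] at this
  exact this.congr fun n => (hgood n).symm
end

section
/- Fix j ≥ 0. Let n > j + 1, and suppose that for every (j)-cycle z' in the (n−1)-dimensional cube Q_{n−1} with Z/2 coefficients there exists a (j+1)-chain y' with ∂y' = z' and vol_{j+1}(y') ≤ C·vol_j(z') for some constant C ≥ 0. Then every j-cycle z in Q_n with Z/2 coefficients admits a (j+1)-chain y with ∂y = z and vol_{j+1}(y) ≤ ((n−j)/(2n))·(1 + 2C)·vol_j(z). -/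
namespace CubeAux

open Finset Function

variable {n m K : ℕ}

def cardNone {n : ℕ} (f : Fin n → Option Bool) : ℕ :=
  (Finset.univ.filter fun i => f i = none).card

def extc {n K : ℕ} (z : QFace n K → ZMod 2) (f : Fin n → Option Bool) : ZMod 2 :=
  if h : cardNone f = K then z ⟨f, h⟩ else 0

lemma extc_coe (z : QFace n K → ZMod 2) (f : QFace n K) : extc z f.1 = z f := by
  unfold extc; exact dif_pos f.2

lemma extc_zero (f : Fin n → Option Bool) : extc (0 : QFace n K → ZMod 2) f = 0 := by
  unfold extc; split <;> rfl

lemma cardNone_of_extc_ne {z : QFace n K → ZMod 2} {f : Fin n → Option Bool}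
    (h : extc z f ≠ 0) : cardNone f = K := by
  by_contra hc; rw [extc, dif_neg hc] at h; exact h rfl

lemma cardNone_update_none {f : Fin n → Option Bool} {i : Fin n} (h : f i ≠ none) :
    cardNone (Function.update f i none) = cardNone f + 1 := by
  unfold cardNone
  have he : (Finset.univ.filter fun t => Function.update f i none t = none)
      = insert i (Finset.univ.filter fun t => f t = none) := by
    ext t
    rcases eq_or_ne t i with rfl | ht
    · simp
    · simp [Function.update_of_ne ht, ht]
  rw [he, Finset.card_insert_of_notMem (by simp [h])]

lemma cardNone_insertNth (i : Fin (m + 1)) (a : Option Bool) (g : Fin m → Option Bool) :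
    cardNone (i.insertNth a g) = (if a = none then 1 else 0) + cardNone g := by
  unfold cardNone
  rw [Finset.card_filter, Finset.card_filter, Fin.sum_univ_succAbove _ i]
  simp

lemma cardNone_eq_remove (f : Fin (m + 1) → Option Bool) (i : Fin (m + 1)) :
    cardNone f = (if f i = none then 1 else 0) + cardNone (i.removeNth f) := by
  conv_lhs => rw [← Fin.insertNth_self_removeNth i f]
  rw [cardNone_insertNth]

lemma cardNone_update (f : Fin (m + 1) → Option Bool) (i : Fin (m + 1)) (a : Option Bool) :
    cardNone (Function.update f i a) = (if a = none then 1 else 0) + cardNone (i.removeNth f) := by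
  rw [← Fin.insertNth_removeNth, cardNone_insertNth]

lemma qbdry_eq (z : QFace n (K + 1) → ZMod 2) (g : QFace n K) :
    qbdry z g = ∑ i : Fin n,
      if g.1 i ≠ none then extc z (Function.update g.1 i none) else 0 := by
  rw [qbdry, ← Finset.sum_filter, ← Finset.sum_filter]
  refine (Finset.sum_bij (fun i hi =>
    (⟨Function.update g.1 i none, by
      show cardNone (Function.update g.1 i none) = K + 1
      rw [cardNone_update_none (by simpa using (Finset.mem_filter.1 hi).2)]
      exact congrArg (· + 1) g.2⟩ :
        QFace n (K + 1))) ?_ ?_ ?_ ?_).symm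
  · intro i hi
    simp only [Finset.mem_filter, Finset.mem_univ, true_and] at hi ⊢
    exact ⟨i, hi, rfl⟩
  · intro i₁ h₁ i₂ h₂ he
    simp only [Finset.mem_filter, Finset.mem_univ, true_and] at h₁ h₂
    by_contra hne
    have h3 : Function.update g.1 i₁ none = Function.update g.1 i₂ none :=
      congrArg Subtype.val he
    have := congrFun h3 i₁
    rw [Function.update_self, Function.update_of_ne hne] at this
    exact h₁ this.symm
  · intro f hf
    simp only [Finset.mem_filter, Finset.mem_univ, true_and] at hf
    obtain ⟨i, hi, hfi⟩ := hf
    exact ⟨i, by simpa using hi, Subtype.ext hfi.symm⟩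
  · intro i hi
    show extc z (Function.update g.1 i none) = _
    unfold extc
    exact dif_pos _


lemma removeNth_update_succAbove (i : Fin (m + 1)) (t : Fin m) (x : Option Bool)
    (f : Fin (m + 1) → Option Bool) :
    (i.removeNth (Function.update f (i.succAbove t) x) : Fin m → Option Bool)
      = Function.update (i.removeNth f : Fin m → Option Bool) t x := by
  funext s
  rcases eq_or_ne s t with rfl | hst
  · simp [Fin.removeNth]
  · have : i.succAbove s ≠ i.succAbove t := fun h => hst (Fin.succAbove_right_injective h)
    simp [Fin.removeNth, Function.update_of_ne hst, Function.update_of_ne this]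

lemma update_insertNth_succAbove (i : Fin (m + 1)) (a : Option Bool)
    (g : Fin m → Option Bool) (t : Fin m) (x : Option Bool) :
    Function.update (i.insertNth a g : Fin (m + 1) → Option Bool) (i.succAbove t) x
      = i.insertNth a (Function.update g t x) := by
  funext s
  rcases eq_or_ne s (i.succAbove t) with rfl | hs
  · rw [Function.update_self, Fin.insertNth_apply_succAbove, Function.update_self]
  · rw [Function.update_of_ne hs]
    rcases eq_or_ne s i with rfl | hsi
    · rw [Fin.insertNth_apply_same, Fin.insertNth_apply_same]
    · obtain ⟨u, rfl⟩ := Fin.exists_succAbove_eq hsi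
      rw [Fin.insertNth_apply_succAbove, Fin.insertNth_apply_succAbove,
        Function.update_of_ne (fun h => hs (by rw [h]))]

def embChain (i : Fin (m + 1)) (b : Bool) (y : QFace m K → ZMod 2) :
    QFace (m + 1) K → ZMod 2 :=
  fun f => if f.1 i = some b then extc y (i.removeNth f.1) else 0

def projChain (i : Fin (m + 1)) (z : QFace (m + 1) K → ZMod 2) :
    QFace m K → ZMod 2 :=
  fun f => extc z (i.insertNth (some false) f.1) + extc z (i.insertNth (some true) f.1)

def prism (i : Fin (m + 1)) (b : Bool) (z : QFace (m + 1) K → ZMod 2) :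
    QFace (m + 1) (K + 1) → ZMod 2 :=
  fun h => if h.1 i = none then extc z (Function.update h.1 i (some (!b))) else 0

lemma extc_embChain (i : Fin (m + 1)) (b : Bool) (y : QFace m K → ZMod 2)
    (f : Fin (m + 1) → Option Bool) :
    extc (embChain i b y) f = if f i = some b then extc y (i.removeNth f) else 0 := by
  by_cases h : cardNone f = K
  · rw [extc, dif_pos h]; rfl
  · rw [extc, dif_neg h]
    by_cases hf : f i = some b
    · have hc : cardNone (i.removeNth f) ≠ K := by
        intro hc
        apply h
        rw [cardNone_eq_remove f i, hf, hc]
        simp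
      rw [if_pos hf, extc, dif_neg hc]
    · rw [if_neg hf]

lemma extc_projChain (i : Fin (m + 1)) (z : QFace (m + 1) K → ZMod 2)
    (f : Fin m → Option Bool) :
    extc (projChain i z) f
      = extc z (i.insertNth (some false) f) + extc z (i.insertNth (some true) f) := by
  by_cases h : cardNone f = K
  · rw [extc, dif_pos h]; rfl
  · rw [extc, dif_neg h]
    have hc : ∀ c : Bool, extc z (i.insertNth (some c) f) = 0 := by
      intro c
      rw [extc, dif_neg]
      rw [cardNone_insertNth]
      simpa using h
    rw [hc false, hc true, add_zero]

lemma extc_prism (i : Fin (m + 1)) (b : Bool) (z : QFace (m + 1) K → ZMod 2)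
    (f : Fin (m + 1) → Option Bool) :
    extc (prism i b z) f
      = if f i = none then extc z (Function.update f i (some (!b))) else 0 := by
  by_cases h : cardNone f = K + 1
  · rw [extc, dif_pos h]; rfl
  · rw [extc, dif_neg h]
    by_cases hf : f i = none
    · have hc : cardNone (Function.update f i (some (!b))) ≠ K := by
        intro hc
        apply h
        rw [cardNone_eq_remove f i, hf]
        rw [cardNone_update f i (some (!b))] at hc
        simp at hc
        rw [if_pos rfl, hc]
        omega
      rw [if_pos hf, extc, dif_neg hc]
    · rw [if_neg hf]


lemma zmod2_add_self (a : ZMod 2) : a + a = 0 := by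
  rw [← two_mul, show (2 : ZMod 2) = 0 from rfl, zero_mul]

lemma qbdry_add (x y : QFace n (K + 1) → ZMod 2) :
    qbdry (x + y) = qbdry x + qbdry y := by
  funext g
  simp only [qbdry, Pi.add_apply, ← Finset.sum_add_distrib]
  exact Finset.sum_congr rfl fun f _ => by split <;> simp

lemma qbdry_embChain (i : Fin (m + 1)) (b : Bool) (y : QFace m (K + 1) → ZMod 2) :
    qbdry (embChain i b y) = embChain i b (qbdry y) := by
  funext g
  rw [qbdry_eq]
  show _ = if g.1 i = some b then extc (qbdry y) (i.removeNth g.1) else 0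
  by_cases hg : g.1 i = some b
  · rw [if_pos hg]
    have h0 : cardNone g.1 = K := g.2
    have hcard : cardNone (i.removeNth g.1 : Fin m → Option Bool) = K := by
      have h1 := cardNone_eq_remove g.1 i
      rw [hg] at h1
      simp at h1
      omega
    rw [show extc (qbdry y) (i.removeNth g.1 : Fin m → Option Bool)
        = qbdry y ⟨_, hcard⟩ from by unfold extc; exact dif_pos hcard]
    rw [qbdry_eq, Fin.sum_univ_succAbove _ i]
    have hfirst : (if g.1 i ≠ none then extc (embChain i b y) (Function.update g.1 i none) else 0)
        = 0 := by
      rw [extc_embChain]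
      simp
    rw [hfirst, zero_add]
    refine Finset.sum_congr rfl fun t _ => ?_
    rw [extc_embChain]
    have hco : (Function.update g.1 (i.succAbove t) none) i = some b := by
      rw [Function.update_of_ne (Fin.ne_succAbove i t)]; exact hg
    rw [if_pos hco, removeNth_update_succAbove]
    rfl
  · rw [if_neg hg]
    refine Finset.sum_eq_zero fun i' _ => ?_
    rcases eq_or_ne i' i with rfl | hne
    · rw [extc_embChain]
      simp
    · rw [extc_embChain, Function.update_of_ne (Ne.symm hne), if_neg hg]
      simp


lemma qbdry_projChain (i : Fin (m + 1)) (z : QFace (m + 1) (K + 1) → ZMod 2) :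
    qbdry (projChain i z) = projChain i (qbdry z) := by
  funext g
  rw [qbdry_eq]
  show _ = extc (qbdry z) (i.insertNth (some false) g.1)
      + extc (qbdry z) (i.insertNth (some true) g.1)
  have h0 : cardNone g.1 = K := g.2
  have key : ∀ c : Bool, extc (qbdry z) (i.insertNth (some c) g.1)
      = extc z (i.insertNth none g.1)
        + ∑ t : Fin m, (if g.1 t ≠ none then
            extc z (i.insertNth (some c) (Function.update g.1 t none)) else 0) := by
    intro c
    have hcard : cardNone (i.insertNth (some c) g.1 : Fin (m + 1) → Option Bool) = K := by
      rw [cardNone_insertNth]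
      simpa using h0
    rw [show extc (qbdry z) (i.insertNth (some c) g.1)
        = qbdry z ⟨_, hcard⟩ from by unfold extc; exact dif_pos hcard]
    rw [qbdry_eq, Fin.sum_univ_succAbove _ i]
    show (if (i.insertNth (some c) g.1 : Fin (m + 1) → Option Bool) i ≠ none then
        extc z (Function.update (i.insertNth (some c) g.1 : Fin (m + 1) → Option Bool) i none)
        else 0)
      + (∑ t : Fin m, if (i.insertNth (some c) g.1 : Fin (m + 1) → Option Bool) (i.succAbove t) ≠ none then
          extc z (Function.update (i.insertNth (some c) g.1 : Fin (m + 1) → Option Bool) (i.succAbove t) none)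
          else 0) = _
    congr 1
    · rw [if_pos (by rw [Fin.insertNth_apply_same]; simp), Fin.update_insertNth]
    · refine Finset.sum_congr rfl fun t _ => ?_
      rw [update_insertNth_succAbove]
      congr 1
      simp [Fin.insertNth_apply_succAbove]
  have lhsval : ∀ t : Fin m, (if g.1 t ≠ none then extc (projChain i z) (Function.update g.1 t none) else 0)
      = (if g.1 t ≠ none then extc z (i.insertNth (some false) (Function.update g.1 t none)) else 0)
        + (if g.1 t ≠ none then extc z (i.insertNth (some true) (Function.update g.1 t none)) else 0) := by
    intro t
    rw [extc_projChain]
    split <;> simp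
  rw [Finset.sum_congr rfl fun t _ => lhsval t, Finset.sum_add_distrib, key false, key true]
  generalize extc z (i.insertNth none g.1) = X
  generalize (∑ t : Fin m, if g.1 t ≠ none then
      extc z (i.insertNth (some false) (Function.update g.1 t none)) else 0) = A
  generalize (∑ t : Fin m, if g.1 t ≠ none then
      extc z (i.insertNth (some true) (Function.update g.1 t none)) else 0) = B
  have : X + A + (X + B) = (X + X) + (A + B) := by ring
  rw [this, zmod2_add_self, zero_add]


lemma prism_case_some (i : Fin (m + 1)) (b : Bool) (z : QFace (m + 1) K → ZMod 2)
    (g : QFace (m + 1) K) (c : Bool) (hg : g.1 i = some c) :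
    qbdry (prism i b z) g = z g + embChain i b (projChain i z) g := by
  rw [qbdry_eq, Fin.sum_univ_succAbove _ i]
  have hfirst : (if g.1 i ≠ none then extc (prism i b z) (Function.update g.1 i none) else 0)
      = extc z (Function.update g.1 i (some (!b))) := by
    rw [if_pos (by rw [hg]; simp), extc_prism, if_pos (Function.update_self _ _ _),
      Function.update_idem]
  have hrest : ∀ t : Fin m,
      (if g.1 (i.succAbove t) ≠ none then
        extc (prism i b z) (Function.update g.1 (i.succAbove t) none) else 0) = 0 := by
    intro t
    rw [extc_prism, Function.update_of_ne (Fin.ne_succAbove i t), hg]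
    simp
  rw [hfirst, Finset.sum_congr rfl fun t _ => hrest t, Finset.sum_const_zero, add_zero]
  show _ = z g + (if g.1 i = some b then extc (projChain i z) (i.removeNth g.1) else 0)
  have hins : ∀ c' : Bool, (i.insertNth (some c') (i.removeNth g.1) : Fin (m + 1) → Option Bool)
      = Function.update g.1 i (some c') := fun c' => Fin.insertNth_removeNth i _ g.1
  by_cases hcb : c = b
  · subst hcb
    rw [if_pos hg, extc_projChain, hins, hins]
    have hupdc : Function.update g.1 i (some c) = g.1 := by
      funext s
      rcases eq_or_ne s i with rfl | hs
      · rw [Function.update_self, hg]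
      · rw [Function.update_of_ne hs]
    cases c
    · rw [show (!false) = true from rfl, hupdc, extc_coe, ← add_assoc, zmod2_add_self, zero_add]
    · rw [show (!true) = false from rfl, hupdc, extc_coe]
      have : z g + (extc z (Function.update g.1 i (some false)) + z g)
          = (z g + z g) + extc z (Function.update g.1 i (some false)) := by ring
      rw [this, zmod2_add_self, zero_add]
  · have hgb : g.1 i ≠ some b := by rw [hg]; simpa using hcb
    rw [if_neg hgb, add_zero]
    have hbc : (!b) = c := by
      cases b <;> cases c <;> simp_all
    rw [hbc]
    have hupdc : Function.update g.1 i (some c) = g.1 := by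
      funext s
      rcases eq_or_ne s i with rfl | hs
      · rw [Function.update_self, hg]
      · rw [Function.update_of_ne hs]
    rw [hupdc, extc_coe]

lemma qbdry_prism_zero (i : Fin (m + 1)) (b : Bool) (z : QFace (m + 1) 0 → ZMod 2) :
    qbdry (prism i b z) = z + embChain i b (projChain i z) := by
  funext g
  have : g.1 i ≠ none := by
    intro h
    have : i ∈ Finset.univ.filter fun t => g.1 t = none := by simp [h]
    have h2 := g.2
    rw [Finset.card_eq_zero] at h2
    simp [h2] at this
  obtain ⟨c, hc⟩ : ∃ c, g.1 i = some c := Option.ne_none_iff_exists'.1 this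
  exact prism_case_some i b z g c hc

lemma qbdry_prism_succ (i : Fin (m + 1)) (b : Bool) (z : QFace (m + 1) (K + 1) → ZMod 2)
    (hz : qbdry z = 0) :
    qbdry (prism i b z) = z + embChain i b (projChain i z) := by
  funext g
  cases hOpt : g.1 i with
  | some c => exact prism_case_some i b z g c hOpt
  | none =>
    have hzero : embChain i b (projChain i z) g = 0 := by
      show (if g.1 i = some b then _ else 0) = 0
      rw [if_neg (by rw [hOpt]; simp)]
    rw [Pi.add_apply, hzero, add_zero, qbdry_eq, Fin.sum_univ_succAbove _ i]
    rw [if_neg (by rw [hOpt]; simp), zero_add]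
    -- q := update g.1 i (some (!b))
    set q : Fin (m + 1) → Option Bool := Function.update g.1 i (some (!b)) with hq
    have hrest : ∀ t : Fin m,
        (if g.1 (i.succAbove t) ≠ none then
          extc (prism i b z) (Function.update g.1 (i.succAbove t) none) else 0)
        = (if q (i.succAbove t) ≠ none then extc z (Function.update q (i.succAbove t) none) else 0) := by
      intro t
      rw [extc_prism, Function.update_of_ne (Fin.ne_succAbove i t), hOpt, if_pos rfl]
      rw [Function.update_comm (Fin.succAbove_ne i t), ← hq]
      rw [show q (i.succAbove t) = g.1 (i.succAbove t) from by
        rw [hq, Function.update_of_ne (Fin.succAbove_ne i t)]]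
    rw [Finset.sum_congr rfl fun t _ => hrest t]
    have hcardq : cardNone q = K := by
      have h1 : cardNone g.1 = K + 1 := g.2
      rw [cardNone_eq_remove g.1 i, hOpt] at h1
      rw [hq, cardNone_update]
      simp at h1 ⊢
      omega
    have hzq := congrFun hz (⟨q, hcardq⟩ : QFace (m + 1) K)
    rw [qbdry_eq, Fin.sum_univ_succAbove _ i] at hzq
    show _ = z g
    have hq_at_i : q i = some (!b) := Function.update_self _ _ _
    rw [show ((⟨q, hcardq⟩ : QFace (m + 1) K).1 : Fin (m + 1) → Option Bool) = q from rfl] at hzq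
    rw [if_pos (by rw [hq_at_i]; simp)] at hzq
    have hqup : Function.update q i none = g.1 := by
      rw [hq, Function.update_idem]
      funext s
      rcases eq_or_ne s i with rfl | hs
      · rw [Function.update_self, hOpt]
      · rw [Function.update_of_ne hs]
    rw [hqup, extc_coe] at hzq
    have := hzq
    -- this : z g + S = 0, goal : S = z g
    have h2 : z g + (z g + ∑ t : Fin m, (if q (i.succAbove t) ≠ none then
        extc z (Function.update q (i.succAbove t) none) else 0)) = z g + 0 := by
      rw [this]
      rfl
    rw [← add_assoc, zmod2_add_self, zero_add, add_zero] at h2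
    exact h2


def suppF {n K : ℕ} (z : QFace n K → ZMod 2) : Finset (Fin n → Option Bool) :=
  Finset.univ.filter fun f => extc z f ≠ 0

def sideCount {n K : ℕ} (z : QFace n K → ZMod 2) (i : Fin n) (c : Bool) : ℕ :=
  (Finset.univ.filter fun f : Fin n → Option Bool => extc z f ≠ 0 ∧ f i = some c).card

lemma vol_eq_suppF (z : QFace n K → ZMod 2) : vol z = (suppF z).card := by
  unfold vol suppF
  refine Finset.card_bij (fun f _ => f.1) ?_ ?_ ?_
  · intro f hf
    simp only [Finset.mem_filter, Finset.mem_univ, true_and] at hf ⊢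
    rw [extc_coe]
    exact hf
  · intro f₁ _ f₂ _ h
    exact Subtype.ext h
  · intro f hf
    simp only [Finset.mem_filter, Finset.mem_univ, true_and] at hf
    have hc : cardNone f = K := cardNone_of_extc_ne hf
    refine ⟨⟨f, hc⟩, ?_, rfl⟩
    simp only [Finset.mem_filter, Finset.mem_univ, true_and]
    exact fun h0 => hf ((extc_coe z ⟨f, hc⟩).trans h0)

lemma vol_add_le (x y : QFace n K → ZMod 2) : vol (x + y) ≤ vol x + vol y := by
  unfold vol
  refine le_trans (Finset.card_le_card ?_) (Finset.card_union_le _ _)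
  intro f hf
  simp only [Finset.mem_filter, Finset.mem_univ, true_and, Finset.mem_union, Pi.add_apply] at hf ⊢
  by_contra h
  push_neg at h
  rw [h.1, h.2, add_zero] at hf
  exact hf rfl

lemma vol_embChain_le (i : Fin (m + 1)) (b : Bool) (y : QFace m K → ZMod 2) :
    vol (embChain i b y) ≤ vol y := by
  rw [vol_eq_suppF, vol_eq_suppF]
  refine Finset.card_le_card_of_injOn (fun f => (i.removeNth f : Fin m → Option Bool)) ?_ ?_
  · intro f hf
    simp only [suppF, Finset.mem_coe, Finset.mem_filter, Finset.mem_univ, true_and] at hf ⊢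
    rw [extc_embChain] at hf
    intro h0
    rw [h0] at hf
    simp at hf
  · intro f₁ h₁ f₂ h₂ he
    simp only [suppF, Finset.coe_filter, Set.mem_setOf_eq] at h₁ h₂
    rw [extc_embChain] at h₁ h₂
    have hb₁ : f₁ i = some b := by by_contra hh; rw [if_neg hh] at h₁; exact h₁.2 rfl
    have hb₂ : f₂ i = some b := by by_contra hh; rw [if_neg hh] at h₂; exact h₂.2 rfl
    have he' : (i.removeNth f₁ : Fin m → Option Bool) = i.removeNth f₂ := he
    have e1 := Fin.insertNth_self_removeNth i f₁
    have e2 := Fin.insertNth_self_removeNth i f₂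
    rw [← e1, ← e2, hb₁, hb₂, he']

lemma vol_prism_le (i : Fin (m + 1)) (b : Bool) (z : QFace (m + 1) K → ZMod 2) :
    vol (prism i b z) ≤ sideCount z i (!b) := by
  rw [vol_eq_suppF]
  refine Finset.card_le_card_of_injOn (fun f => Function.update f i (some (!b))) ?_ ?_
  · intro f hf
    simp only [suppF, Finset.mem_coe, Finset.mem_filter, Finset.mem_univ, true_and] at hf ⊢
    rw [extc_prism] at hf
    by_cases h0 : f i = none
    · rw [if_pos h0] at hf
      exact ⟨hf, Function.update_self _ _ _⟩
    · rw [if_neg h0] at hf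
      exact absurd rfl hf
  · intro f₁ h₁ f₂ h₂ he
    simp only [suppF, Finset.coe_filter, Set.mem_setOf_eq] at h₁ h₂
    rw [extc_prism] at h₁ h₂
    have hn₁ : f₁ i = none := by by_contra hh; rw [if_neg hh] at h₁; exact h₁.2 rfl
    have hn₂ : f₂ i = none := by by_contra hh; rw [if_neg hh] at h₂; exact h₂.2 rfl
    funext s
    rcases eq_or_ne s i with rfl | hs
    · rw [hn₁, hn₂]
    · have hcc : Function.update f₁ i (some (!b)) s = Function.update f₂ i (some (!b)) s :=
        congrFun he s
      rwa [Function.update_of_ne hs, Function.update_of_ne hs] at hcc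

lemma vol_projChain_le (i : Fin (m + 1)) (z : QFace (m + 1) K → ZMod 2) :
    vol (projChain i z) ≤ sideCount z i false + sideCount z i true := by
  rw [vol_eq_suppF]
  have hsub : suppF (projChain i z) ⊆
      (Finset.univ.filter fun f : Fin m → Option Bool =>
        extc z (i.insertNth (some false) f) ≠ 0)
      ∪ (Finset.univ.filter fun f : Fin m → Option Bool =>
        extc z (i.insertNth (some true) f) ≠ 0) := by
    intro f hf
    simp only [suppF, Finset.mem_filter, Finset.mem_univ, true_and, Finset.mem_union] at hf ⊢
    rw [extc_projChain] at hf
    by_contra h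
    push_neg at h
    rw [h.1, h.2, add_zero] at hf
    exact hf rfl
  refine le_trans (Finset.card_le_card hsub) (le_trans (Finset.card_union_le _ _) ?_)
  have hone : ∀ c : Bool, (Finset.univ.filter fun f : Fin m → Option Bool =>
      extc z (i.insertNth (some c) f) ≠ 0).card ≤ sideCount z i c := by
    intro c
    refine Finset.card_le_card_of_injOn
      (fun f => (i.insertNth (some c) f : Fin (m + 1) → Option Bool)) ?_ ?_
    · intro f hf
      simp only [Finset.mem_coe, Finset.mem_filter, Finset.mem_univ, true_and] at hf ⊢
      exact ⟨hf, Fin.insertNth_apply_same i _ _⟩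
    · intro f₁ _ f₂ _ he
      have := congrArg (fun f => (i.removeNth f : Fin m → Option Bool)) he
      simpa [Fin.removeNth_insertNth] using this
  exact Nat.add_le_add (hone false) (hone true)

lemma sum_sideCount (z : QFace n K → ZMod 2) :
    ∑ i : Fin n, (sideCount z i false + sideCount z i true) = (n - K) * vol z := by
  have hstep : ∀ i : Fin n, sideCount z i false + sideCount z i true
      = ∑ f ∈ suppF z, (if f i ≠ none then 1 else 0) := by
    intro i
    have hc : ∀ c : Bool, sideCount z i c = ∑ f ∈ suppF z, (if f i = some c then 1 else 0) := by
      intro c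
      rw [sideCount, ← Finset.card_filter]
      congr 1
      rw [suppF, Finset.filter_filter]
    rw [hc false, hc true, ← Finset.sum_add_distrib]
    refine Finset.sum_congr rfl fun f _ => ?_
    cases hfi : f i with
    | none => simp
    | some c => cases c <;> simp
  rw [Finset.sum_congr rfl fun i _ => hstep i, Finset.sum_comm]
  have hinner : ∀ f ∈ suppF z, (∑ i : Fin n, if f i ≠ none then 1 else 0) = n - K := by
    intro f hf
    simp only [suppF, Finset.mem_filter, Finset.mem_univ, true_and] at hf
    have hc : cardNone f = K := cardNone_of_extc_ne hf
    rw [← Finset.card_filter]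
    have := Finset.card_filter_add_card_filter_not (s := Finset.univ)
      (p := fun i : Fin n => f i = none)
    unfold cardNone at hc
    have hcu : (Finset.univ : Finset (Fin n)).card = n := Finset.card_univ.trans (Fintype.card_fin n)
    rw [hc] at this
    have : (Finset.univ.filter fun i : Fin n => ¬ f i = none).card = n - K := by omega
    rw [← this]
  rw [Finset.sum_congr rfl hinner, Finset.sum_const, vol_eq_suppF, smul_eq_mul, mul_comm]

end CubeAux

/-- the inductive step of the cube isoperimetric inequality.
If every `j`-cycle `z'` in `Q_{n-1}` (where `n > j + 1`) can be filled by a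
`(j+1)`-chain `y'` with `vol(y') ≤ C·vol(z')`, then every `j`-cycle `z` in
`Q_n` can be filled by a `(j+1)`-chain `y` with
`vol(y) ≤ ((n-j)/(2n))·(1 + 2C)·vol(z)`. -/
theorem cube_filling_inductive_step (j n : ℕ) (hn : j + 1 < n) (C : ℝ) (hC : 0 ≤ C)
    (ih : ∀ z' : QFace (n - 1) j → ZMod 2, IsQCycle (n - 1) j z' →
      ∃ y' : QFace (n - 1) (j + 1) → ZMod 2, qbdry y' = z' ∧
        (vol y' : ℝ) ≤ C * (vol z' : ℝ))
    (z : QFace n j → ZMod 2) (hz : IsQCycle n j z) :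
    ∃ y : QFace n (j + 1) → ZMod 2, qbdry y = z ∧
      (vol y : ℝ) ≤ (((n : ℝ) - j) / (2 * n)) * (1 + 2 * C) * (vol z : ℝ) := by
  classical
  obtain ⟨m, rfl⟩ : ∃ m, n = m + 1 := ⟨n - 1, by omega⟩

  -- averaging over directions
  have hsum : ∑ i : Fin (m + 1),
      (CubeAux.sideCount z i false + CubeAux.sideCount z i true) = (m + 1 - j) * vol z :=
    CubeAux.sum_sideCount z
  have hex : ∃ i : Fin (m + 1),
      (m + 1) * (CubeAux.sideCount z i false + CubeAux.sideCount z i true)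
        ≤ (m + 1 - j) * vol z := by
    by_contra h
    push_neg at h
    have h1 : ∑ _i : Fin (m + 1), (m + 1 - j) * vol z
        < ∑ i : Fin (m + 1),
          (m + 1) * (CubeAux.sideCount z i false + CubeAux.sideCount z i true) :=
      Finset.sum_lt_sum_of_nonempty Finset.univ_nonempty (fun i _ => h i)
    rw [Finset.sum_const, Finset.card_univ, Fintype.card_fin, smul_eq_mul,
      ← Finset.mul_sum, hsum] at h1
    exact lt_irrefl _ h1
  obtain ⟨i, hi⟩ := hex
  set c : Bool := if CubeAux.sideCount z i false ≤ CubeAux.sideCount z i true then false else true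
    with hc
  have hcmin : 2 * CubeAux.sideCount z i c
      ≤ CubeAux.sideCount z i false + CubeAux.sideCount z i true := by
    by_cases hle : CubeAux.sideCount z i false ≤ CubeAux.sideCount z i true
    · rw [hc, if_pos hle]; omega
    · rw [hc, if_neg hle]; omega
  set b : Bool := !c with hb
  have hbc : (!b) = c := by rw [hb, Bool.not_not]
  have hkey : IsQCycle m j (CubeAux.projChain i z) ∧
      qbdry (CubeAux.prism i b z) = z + CubeAux.embChain i b (CubeAux.projChain i z) := by
    cases j with
    | zero =>
      have hz0 : ∃ y0 : QFace (m + 1) 1 → ZMod 2, qbdry y0 = z := hz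
      obtain ⟨y0, hy0⟩ := hz0
      refine ⟨⟨CubeAux.projChain i y0, ?_⟩, CubeAux.qbdry_prism_zero i b z⟩
      rw [CubeAux.qbdry_projChain, hy0]
    | succ k =>
      have hz' : qbdry z = 0 := hz
      refine ⟨?_, CubeAux.qbdry_prism_succ i b z hz'⟩
      show qbdry (CubeAux.projChain i z) = 0
      rw [CubeAux.qbdry_projChain, hz']
      funext f
      show CubeAux.extc 0 _ + CubeAux.extc 0 _ = 0
      rw [CubeAux.extc_zero, CubeAux.extc_zero, add_zero]
  obtain ⟨y', hy'fill, hy'vol⟩ := ih (CubeAux.projChain i z) hkey.1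
  refine ⟨CubeAux.prism i b z + CubeAux.embChain i b y', ?_, ?_⟩
  · rw [CubeAux.qbdry_add, hkey.2, CubeAux.qbdry_embChain, hy'fill]
    funext g
    show (z g + CubeAux.embChain i b (CubeAux.projChain i z) g)
        + CubeAux.embChain i b (CubeAux.projChain i z) g = z g
    rw [add_assoc, CubeAux.zmod2_add_self, add_zero]
  · have v1 := CubeAux.vol_add_le (CubeAux.prism i b z) (CubeAux.embChain i b y')
    have v2 := CubeAux.vol_prism_le i b z
    rw [hbc] at v2
    have v3 := CubeAux.vol_embChain_le i b y'
    have v4 := CubeAux.vol_projChain_le i z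
    have hS0 : (0:ℝ) ≤ ((CubeAux.sideCount z i false + CubeAux.sideCount z i true : ℕ) : ℝ) :=
      Nat.cast_nonneg _
    have hvy' : (vol y' : ℝ)
        ≤ C * ((CubeAux.sideCount z i false + CubeAux.sideCount z i true : ℕ) : ℝ) := by
      refine le_trans hy'vol ?_
      have hv4 : (vol (CubeAux.projChain i z) : ℝ)
          ≤ ((CubeAux.sideCount z i false + CubeAux.sideCount z i true : ℕ) : ℝ) := by
        exact_mod_cast v4
      nlinarith
    have hv : (vol (CubeAux.prism i b z + CubeAux.embChain i b y') : ℝ)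
        ≤ (CubeAux.sideCount z i c : ℝ)
          + C * ((CubeAux.sideCount z i false + CubeAux.sideCount z i true : ℕ) : ℝ) := by
      have h5 : (vol (CubeAux.prism i b z + CubeAux.embChain i b y') : ℝ)
          ≤ (CubeAux.sideCount z i c : ℝ) + (vol y' : ℝ) := by
        have h6 := le_trans v1 (Nat.add_le_add v2 v3)
        exact_mod_cast h6
      linarith
    have hSz : ((m:ℝ) + 1) * ((CubeAux.sideCount z i false + CubeAux.sideCount z i true : ℕ) : ℝ)
        ≤ ((m:ℝ) + 1 - j) * (vol z : ℝ) := by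
      have hcast : ((m + 1 - j : ℕ) : ℝ) = (m : ℝ) + 1 - j := by
        rw [Nat.cast_sub (by omega : j ≤ m + 1)]
        push_cast
        ring
      calc ((m:ℝ) + 1) * ((CubeAux.sideCount z i false + CubeAux.sideCount z i true : ℕ) : ℝ)
          = (((m + 1) * (CubeAux.sideCount z i false + CubeAux.sideCount z i true) : ℕ) : ℝ) := by
            push_cast; ring
        _ ≤ (((m + 1 - j) * vol z : ℕ) : ℝ) := by exact_mod_cast hi
        _ = ((m:ℝ) + 1 - j) * (vol z : ℝ) := by rw [Nat.cast_mul, hcast]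
    have h2c : (2 : ℝ) * (CubeAux.sideCount z i c : ℝ)
        ≤ ((CubeAux.sideCount z i false + CubeAux.sideCount z i true : ℕ) : ℝ) := by
      exact_mod_cast hcmin
    have hNcast : (((m + 1 : ℕ)) : ℝ) = (m : ℝ) + 1 := by push_cast; ring
    rw [hNcast, div_mul_eq_mul_div, div_mul_eq_mul_div,
      le_div_iff₀ (by positivity : (0:ℝ) < 2 * ((m:ℝ) + 1))]
    have e1 : ((m:ℝ) + 1) * (2 * (CubeAux.sideCount z i c : ℝ))
        ≤ ((m:ℝ) + 1) * ((CubeAux.sideCount z i false + CubeAux.sideCount z i true : ℕ) : ℝ) :=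
      mul_le_mul_of_nonneg_left h2c (by positivity)
    have e2 : (2 * C) * (((m:ℝ) + 1) * ((CubeAux.sideCount z i false
          + CubeAux.sideCount z i true : ℕ) : ℝ))
        ≤ (2 * C) * (((m:ℝ) + 1 - j) * (vol z : ℝ)) :=
      mul_le_mul_of_nonneg_left hSz (by linarith)
    have e3 : (vol (CubeAux.prism i b z + CubeAux.embChain i b y') : ℝ) * (2 * ((m:ℝ) + 1))
        ≤ ((CubeAux.sideCount z i c : ℝ)
          + C * ((CubeAux.sideCount z i false + CubeAux.sideCount z i true : ℕ) : ℝ))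
            * (2 * ((m:ℝ) + 1)) :=
      mul_le_mul_of_nonneg_right hv (by positivity)
    ring_nf at e1 e2 e3 hSz ⊢
    linarith [e1, e2, e3, hSz]
end
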